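/- arXiv:2507.03439 — 14 statements merged into one kernel-verified Lean document; each statement's English description precedes it below -/
import Mathlib

section
/- Let Σ be a finite alphabet, c ∈ Σ, and L₁, L₂ ⊆ Σ* languages. Let A₁' = (Q₁', Σ, δ₁', {q₀'}, F₁') be a complete DFA with L(A₁') = L₁, and let C₂ = (Q̂₂, Σ, δ̂₂, Î₂, F̂₂) be an NFA with L(C₂) = Σ* ∖ L₂. Define the NFA C = (Q₁' × 2^{Q̂₂}, Σ, δ̂, {(q₀', ∅)}, Q₁' × 2^{F̂₂}) whose transition relation δ̂ contains (p, R) →a (q, S) exactly when q = δ₁'(p, a) and either (i) p ∉ F₁' or a ≠ c, and S = f(R) for some function f : R → Q̂₂ with f(r) ∈ δ̂₂(r, a) for every r ∈ R, or (ii) p ∈ F₁' and a = c, and S = f(R) ∪ {s₀} for some such function f and some s₀ ∈ Î₂. Then L(C) = Σ* ∖ (L₁ · {c} · L₂). -/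
/-- The basic sequential complementation construction (Theorem 1): given a
complete DFA `A₁` (for `L₁`) and an NFA `C₂` (for `Σ* ∖ L₂`), build the NFA
`C` with states `Q₁' × 2^{Q̂₂}`, initial state `(q₀', ∅)`, accepting states
`Q₁' × 2^{F̂₂}`, where a transition `(p, R) →a (q, S)` exists iff
`q = δ₁'(p, a)` and either (i) `p ∉ F₁'` or `a ≠ c`, and `S = f '' R` for a
choice function `f` of `a`-successors in `C₂`, or (ii) `p ∈ F₁'` and `a = c`,
and `S = f '' R ∪ {s₀}` for such an `f` and some `s₀ ∈ Î₂`. -/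
def seqCompl {α σ₁ σ₂ : Type*} (c : α) (A₁ : DFA α σ₁) (C₂ : NFA α σ₂) :
    NFA α (σ₁ × Set σ₂) where
  step := fun pr a =>
    { qs | qs.1 = A₁.step pr.1 a ∧
        (((pr.1 ∉ A₁.accept ∨ a ≠ c) ∧
            ∃ f : σ₂ → σ₂, (∀ r ∈ pr.2, f r ∈ C₂.step r a) ∧ qs.2 = f '' pr.2) ∨
          (pr.1 ∈ A₁.accept ∧ a = c ∧
            ∃ f : σ₂ → σ₂, (∀ r ∈ pr.2, f r ∈ C₂.step r a) ∧
              ∃ s₀ ∈ C₂.start, qs.2 = f '' pr.2 ∪ {s₀})) }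
  start := {(A₁.start, ∅)}
  accept := {qs | qs.2 ⊆ C₂.accept}

/-- Decomposing `u ++ c :: v = y ++ [a]`. -/
lemma seqCompl_decomp {α : Type*} {u v y : List α} {c a : α}
    (h : u ++ c :: v = y ++ [a]) :
    (v = [] ∧ u = y ∧ c = a) ∨ ∃ v', v = v' ++ [a] ∧ y = u ++ c :: v' := by
  rcases v.eq_nil_or_concat with rfl | ⟨v', a', rfl⟩
  · left
    have h' : u ++ [c] = y ++ [a] := h
    obtain ⟨h1, h2⟩ := List.append_inj' h' rfl
    exact ⟨rfl, h1, by simpa using h2⟩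
  · right
    have h' : (u ++ c :: v') ++ [a'] = y ++ [a] := by simpa using h
    obtain ⟨h1, h2⟩ := List.append_inj' h' rfl
    exact ⟨v', by simpa [h2.symm] using (List.cons.injEq a' [] a []) ▸ rfl, h1.symm⟩

/-- Soundness/completeness invariant for reachable states of `seqCompl`. -/
lemma seqCompl_eval_sound {α σ₁ σ₂ : Type*} (c : α) (A₁ : DFA α σ₁) (C₂ : NFA α σ₂)
    (x : List α) (q : σ₁) (R : Set σ₂)
    (h : (q, R) ∈ (seqCompl c A₁ C₂).eval x) :
    q = A₁.eval x ∧
      ∀ u v, x = u ++ c :: v → A₁.eval u ∈ A₁.accept →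
        ∃ s ∈ R, s ∈ C₂.eval v := by
  induction x using List.reverseRecOn generalizing q R with
  | nil =>
    have : (q, R) ∈ ({(A₁.start, (∅ : Set σ₂))} : Set (σ₁ × Set σ₂)) := h
    simp only [Set.mem_singleton_iff, Prod.mk.injEq] at this
    refine ⟨this.1, ?_⟩
    intro u v hx _
    simp at hx
  | append_singleton y a ih =>
    rw [show (seqCompl c A₁ C₂).eval (y ++ [a]) =
      (seqCompl c A₁ C₂).stepSet ((seqCompl c A₁ C₂).eval y) a from
      NFA.eval_append_singleton _ _ _] at h
    rw [NFA.mem_stepSet] at h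
    obtain ⟨⟨p, R'⟩, hmem, hstep⟩ := h
    obtain ⟨hq, hcase⟩ := hstep
    obtain ⟨hp, hcomp⟩ := ih p R' hmem
    simp only at hq
    constructor
    · rw [hq, hp, DFA.eval_append_singleton]
    · intro u v hx hu
      rcases seqCompl_decomp hx.symm with ⟨rfl, rfl, rfl⟩ | ⟨v', rfl, hy⟩
      · -- new decomposition: v = [], u = y, c = a
        rcases hcase with ⟨hcond, _⟩ | ⟨_, _, f, hf, s₀, hs₀, hR⟩
        · rw [hp] at hcond
          rcases hcond with h1 | h2
          · exact absurd hu h1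
          · exact absurd rfl h2
        · have hR' : R = f '' R' ∪ {s₀} := hR
          refine ⟨s₀, ?_, ?_⟩
          · rw [hR']; exact Or.inr rfl
          · simpa [NFA.eval_nil] using hs₀
      · -- old decomposition: v = v' ++ [a], y = u ++ c :: v'
        obtain ⟨s, hsR', hsv'⟩ := hcomp u v' hy hu
        have hstep_mem : ∀ (f : σ₂ → σ₂), (∀ r ∈ R', f r ∈ C₂.step r a) →
            f s ∈ C₂.eval (v' ++ [a]) := by
          intro f hf
          rw [show C₂.eval (v' ++ [a]) = C₂.stepSet (C₂.eval v') a from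
            NFA.eval_append_singleton _ _ _, NFA.mem_stepSet]
          exact ⟨s, hsv', hf s hsR'⟩
        rcases hcase with ⟨_, f, hf, hR⟩ | ⟨_, _, f, hf, s₀, _, hR⟩
        · have hR' : R = f '' R' := hR
          exact ⟨f s, by rw [hR']; exact ⟨s, hsR', rfl⟩, hstep_mem f hf⟩
        · have hR' : R = f '' R' ∪ {s₀} := hR
          exact ⟨f s, by rw [hR']; exact Or.inl ⟨s, hsR', rfl⟩, hstep_mem f hf⟩

/-- Construction lemma: given target sets `T v` hit by runs of `C₂` on each
suffix `v` of a decomposition, one can reach a state `(A₁.eval x, R)` of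
`seqCompl` with all elements of `R` inside appropriate targets. -/
lemma seqCompl_eval_complete {α σ₁ σ₂ : Type*} (c : α) (A₁ : DFA α σ₁) (C₂ : NFA α σ₂)
    (x : List α) (T : List α → Set σ₂)
    (hT : ∀ u v, x = u ++ c :: v → A₁.eval u ∈ A₁.accept →
      (T v ∩ C₂.eval v).Nonempty) :
    ∃ R : Set σ₂,
      (∀ s ∈ R, ∃ u v, x = u ++ c :: v ∧ A₁.eval u ∈ A₁.accept ∧ s ∈ T v) ∧
      (A₁.eval x, R) ∈ (seqCompl c A₁ C₂).eval x := by
  induction x using List.reverseRecOn generalizing T with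
  | nil =>
    refine ⟨∅, by simp, ?_⟩
    show (A₁.eval [], (∅ : Set σ₂)) ∈ ({(A₁.start, (∅ : Set σ₂))} : Set (σ₁ × Set σ₂))
    simp [DFA.eval]
  | append_singleton y a ih =>
    -- pulled-back targets
    set T' : List α → Set σ₂ := fun v => {s | ∃ s' ∈ T (v ++ [a]), s' ∈ C₂.step s a} with hT'def
    have hT' : ∀ u v, y = u ++ c :: v → A₁.eval u ∈ A₁.accept →
        (T' v ∩ C₂.eval v).Nonempty := by
      intro u v hy hu
      have hx : y ++ [a] = u ++ c :: (v ++ [a]) := by simp [hy]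
      obtain ⟨s', hs'T, hs'e⟩ := hT u (v ++ [a]) hx hu
      rw [show C₂.eval (v ++ [a]) = C₂.stepSet (C₂.eval v) a from
        NFA.eval_append_singleton _ _ _, NFA.mem_stepSet] at hs'e
      obtain ⟨s, hsv, hss'⟩ := hs'e
      exact ⟨s, ⟨s', hs'T, hss'⟩, hsv⟩
    obtain ⟨R, hRmem, hReval⟩ := ih T' hT'
    -- choice function f
    have hchoice : ∀ s ∈ R, ∃ s', s' ∈ C₂.step s a ∧
        ∃ u v, y ++ [a] = u ++ c :: v ∧ A₁.eval u ∈ A₁.accept ∧ s' ∈ T v := by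
      intro s hs
      obtain ⟨u, v, hy, hu, s', hs'T, hss'⟩ := hRmem s hs
      exact ⟨s', hss', u, v ++ [a], by simp [hy], hu, hs'T⟩
    classical
    set f : σ₂ → σ₂ := fun s =>
      if h : ∃ s', s' ∈ C₂.step s a ∧
        ∃ u v, y ++ [a] = u ++ c :: v ∧ A₁.eval u ∈ A₁.accept ∧ s' ∈ T v
      then h.choose else s with hfdef
    have hf : ∀ s ∈ R, f s ∈ C₂.step s a ∧
        ∃ u v, y ++ [a] = u ++ c :: v ∧ A₁.eval u ∈ A₁.accept ∧ f s ∈ T v := by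
      intro s hs
      have h := hchoice s hs
      simp only [hfdef, dif_pos h]
      exact h.choose_spec
    have hevalx : ∀ R'' : Set σ₂,
        (A₁.eval (y ++ [a]), R'') ∈ (seqCompl c A₁ C₂).step (A₁.eval y, R) a →
        (A₁.eval (y ++ [a]), R'') ∈ (seqCompl c A₁ C₂).eval (y ++ [a]) := by
      intro R'' hst
      rw [show (seqCompl c A₁ C₂).eval (y ++ [a]) =
        (seqCompl c A₁ C₂).stepSet ((seqCompl c A₁ C₂).eval y) a from
        NFA.eval_append_singleton _ _ _, NFA.mem_stepSet]
      exact ⟨(A₁.eval y, R), hReval, hst⟩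
    by_cases hc : A₁.eval y ∈ A₁.accept ∧ a = c
    · -- case (ii)
      have hx0 : y ++ [a] = y ++ c :: ([] : List α) := by simp [hc.2]
      obtain ⟨s₀, hs₀T, hs₀e⟩ := hT y [] hx0 hc.1
      have hs₀start : s₀ ∈ C₂.start := by simpa [NFA.eval_nil] using hs₀e
      refine ⟨f '' R ∪ {s₀}, ?_, ?_⟩
      · rintro s (⟨r, hr, rfl⟩ | rfl)
        · exact (hf r hr).2
        · exact ⟨y, [], hx0, hc.1, hs₀T⟩
      · refine hevalx _ ⟨by simp [DFA.eval_append_singleton], Or.inr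
          ⟨hc.1, hc.2, f, fun r hr => (hf r hr).1, s₀, hs₀start, rfl⟩⟩
    · -- case (i)
      refine ⟨f '' R, ?_, ?_⟩
      · rintro s ⟨r, hr, rfl⟩
        exact (hf r hr).2
      · refine hevalx _ ⟨by simp [DFA.eval_append_singleton], Or.inl
          ⟨not_and_or.mp hc, f, fun r hr => (hf r hr).1, rfl⟩⟩

/-- Theorem 1 of the paper: the sequential complementation construction yields
a complement of `L₁ · {c} · L₂`. -/
theorem seqCompl_accepts {α σ₁ σ₂ : Type*} [Fintype α] [Fintype σ₁] [Fintype σ₂]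
    (c : α) (L₁ L₂ : Language α)
    (A₁ : DFA α σ₁) (hA₁ : A₁.accepts = L₁)
    (C₂ : NFA α σ₂) (hC₂ : C₂.accepts = L₂ᶜ) :
    (seqCompl c A₁ C₂).accepts = (L₁ * {[c]} * L₂)ᶜ := by
  ext x
  have hmul : x ∈ L₁ * {[c]} * L₂ ↔
      ∃ u v, x = u ++ c :: v ∧ u ∈ L₁ ∧ v ∈ L₂ := by
    constructor
    · intro hx
      obtain ⟨w, hw, v, hv, hwv⟩ := Language.mem_mul.mp hx
      obtain ⟨u, hu, e, he, hue⟩ := Language.mem_mul.mp hw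
      rcases he with rfl
      exact ⟨u, v, by rw [← hwv, ← hue]; simp, hu, hv⟩
    · rintro ⟨u, v, rfl, hu, hv⟩
      exact Language.mem_mul.mpr ⟨u ++ [c],
        Language.mem_mul.mpr ⟨u, hu, [c], rfl, rfl⟩, v, hv, by simp⟩
  constructor
  · intro hx
    rw [NFA.mem_accepts (M := seqCompl c A₁ C₂)] at hx
    obtain ⟨⟨q, R⟩, hacc, heval⟩ := hx
    have hRsub : R ⊆ C₂.accept := hacc
    obtain ⟨-, hcomp⟩ := seqCompl_eval_sound c A₁ C₂ x q R heval
    intro hx'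
    obtain ⟨u, v, rfl, hu, hv⟩ := hmul.mp hx'
    have hu' : A₁.eval u ∈ A₁.accept := (DFA.mem_accepts A₁).mp (hA₁ ▸ hu)
    obtain ⟨s, hsR, hse⟩ := hcomp u v rfl hu'
    have : v ∈ C₂.accepts := (NFA.mem_accepts (M := C₂)).mpr ⟨s, hRsub hsR, hse⟩
    rw [hC₂] at this
    exact this hv
  · intro hx
    obtain ⟨R, hRmem, hReval⟩ := seqCompl_eval_complete c A₁ C₂ x
      (fun _ => C₂.accept) (by
        intro u v hxe hu
        have huL : u ∈ L₁ := hA₁ ▸ (DFA.mem_accepts A₁).mpr hu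
        have hvL : v ∉ L₂ := fun hv => hx (hmul.mpr ⟨u, v, hxe, huL, hv⟩)
        have : v ∈ C₂.accepts := by rw [hC₂]; exact hvL
        obtain ⟨s, hs, hse⟩ := (NFA.mem_accepts (M := C₂)).mp this
        exact ⟨s, hs, hse⟩)
    refine (NFA.mem_accepts (M := seqCompl c A₁ C₂)).mpr ⟨(A₁.eval x, R), ?_, hReval⟩
    intro s hs
    obtain ⟨_, _, _, _, hsT⟩ := hRmem s hs
    exact hsT
end

section
/- Let Σ be a finite alphabet, c ∈ Σ, L₁ ⊆ (Σ ∖ {c})* (i.e., no word of L₁ contains c), and L₂ ⊆ Σ*. Let C₁ = (Q̂₁, Σ ∖ {c}, δ̂₁, Î₁, F̂₁) be an NFA over Σ ∖ {c} with L(C₁) = (Σ ∖ {c})* ∖ L₁, and let C₂ = (Q̂₂, Σ, δ̂₂, Î₂, F̂₂) be an NFA over Σ with L(C₂) = Σ* ∖ L₂, with Q̂₁, Q̂₂ disjoint and s, t two fresh states. Define the NFAs C_pre = (Q̂₁ ∪ {s}, Σ, δ̂₁ ∪ {p →c s : p ∈ F̂₁} ∪ {s →a s : a ∈ Σ}, Î₁,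 {s}) and C_suf = (Q̂₂ ∪ {t}, Σ, δ̂₂ ∪ {t →c p : p ∈ Î₂} ∪ {t →a t : a ∈ Σ ∖ {c}}, {t}, {t} ∪ F̂₂). Then the union NFA C = C_pre ⊎ C_suf (disjoint union of states, transitions, initial and accepting sets) satisfies L(C) = Σ* ∖ (L₁ · {c} · L₂). -/
/-- The language of words over `α` containing no occurrence of `c`,
i.e. `(Σ ∖ {c})*`. -/
def noLetter {α : Type*} (c : α) : Language α := {w | c ∉ w}

/-- Disjoint union of two NFAs: unions of states, transitions, initial and
accepting states. -/
def NFA.disjUnion {α σ τ : Type*} (A : NFA α σ) (B : NFA α τ) : NFA α (σ ⊕ τ) where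
  step := fun q a =>
    Sum.elim (fun p => Sum.inl '' A.step p a) (fun p => Sum.inr '' B.step p a) q
  start := Sum.inl '' A.start ∪ Sum.inr '' B.start
  accept := Sum.inl '' A.accept ∪ Sum.inr '' B.accept

/-- The prefix-checking part `C_pre` of the gate complement: `C₁` extended
with a fresh accepting state `s` (= `Sum.inr ()`), transitions `p →c s` for
every `p ∈ F̂₁`, and loops `s →a s` for all `a ∈ Σ`. -/
def gatePre {α σ₁ : Type*} (c : α) (C₁ : NFA α σ₁) : NFA α (σ₁ ⊕ Unit) where
  step := fun q a =>
    Sum.elim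
      (fun p => Sum.inl '' C₁.step p a ∪ {x | a = c ∧ p ∈ C₁.accept ∧ x = Sum.inr ()})
      (fun _ => {Sum.inr ()}) q
  start := Sum.inl '' C₁.start
  accept := {Sum.inr ()}

/-- The suffix-checking part `C_suf` of the gate complement: `C₂` extended
with a fresh initial and accepting state `t` (= `Sum.inr ()`), transitions
`t →c p` for every `p ∈ Î₂`, and loops `t →a t` for all `a ∈ Σ ∖ {c}`. -/
def gateSuf {α σ₂ : Type*} (c : α) (C₂ : NFA α σ₂) : NFA α (σ₂ ⊕ Unit) where
  step := fun q a =>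
    Sum.elim
      (fun p => Sum.inl '' C₂.step p a)
      (fun _ => {x | (a = c ∧ ∃ p ∈ C₂.start, x = Sum.inl p) ∨ (a ≠ c ∧ x = Sum.inr ())}) q
  start := {Sum.inr ()}
  accept := {Sum.inr ()} ∪ Sum.inl '' C₂.accept



-- generic lemmas
lemma NFA.stepSet_union' {α σ : Type*} (M : NFA α σ) (X Y : Set σ) (a : α) :
    M.stepSet (X ∪ Y) a = M.stepSet X a ∪ M.stepSet Y a := by
  ext x
  simp only [NFA.mem_stepSet, Set.mem_union]
  constructor
  · rintro ⟨t, ht | ht, hx⟩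
    exacts [Or.inl ⟨t, ht, hx⟩, Or.inr ⟨t, ht, hx⟩]
  · rintro (⟨t, ht, hx⟩ | ⟨t, ht, hx⟩)
    exacts [⟨t, Or.inl ht, hx⟩, ⟨t, Or.inr ht, hx⟩]

lemma NFA.evalFrom_empty' {α σ : Type*} (M : NFA α σ) (w : List α) :
    M.evalFrom ∅ w = ∅ := by
  induction w with
  | nil => rfl
  | cons a w ih => rw [NFA.evalFrom_cons, NFA.stepSet_empty, ih]

-- disjoint union
lemma disjUnion_evalFrom {α σ τ : Type*} (A : NFA α σ) (B : NFA α τ)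
    (S : Set σ) (T : Set τ) (w : List α) :
    (A.disjUnion B).evalFrom (Sum.inl '' S ∪ Sum.inr '' T) w
      = Sum.inl '' A.evalFrom S w ∪ Sum.inr '' B.evalFrom T w := by
  induction w generalizing S T with
  | nil => rfl
  | cons a w ih =>
    have h1 : (A.disjUnion B).stepSet (Sum.inl '' S ∪ Sum.inr '' T) a
        = Sum.inl '' A.stepSet S a ∪ Sum.inr '' B.stepSet T a := by
      ext x
      simp only [NFA.mem_stepSet, Set.mem_union, Set.mem_image, NFA.disjUnion]
      constructor
      · rintro ⟨t, ht | ht, hx⟩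
        · obtain ⟨p, hp, rfl⟩ := ht
          simp only [Sum.elim_inl, Set.mem_image] at hx
          obtain ⟨q, hq, rfl⟩ := hx
          exact Or.inl ⟨q, ⟨p, hp, hq⟩, rfl⟩
        · obtain ⟨p, hp, rfl⟩ := ht
          simp only [Sum.elim_inr, Set.mem_image] at hx
          obtain ⟨q, hq, rfl⟩ := hx
          exact Or.inr ⟨q, ⟨p, hp, hq⟩, rfl⟩
      · rintro (⟨q, ⟨p, hp, hq⟩, rfl⟩ | ⟨q, ⟨p, hp, hq⟩, rfl⟩)
        · exact ⟨Sum.inl p, Or.inl ⟨p, hp, rfl⟩, by simp [hq]⟩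
        · exact ⟨Sum.inr p, Or.inr ⟨p, hp, rfl⟩, by simp [hq]⟩
    rw [NFA.evalFrom_cons, h1, ih]; rfl

lemma disjUnion_accepts {α σ τ : Type*} (A : NFA α σ) (B : NFA α τ) :
    ∀ w, w ∈ (A.disjUnion B).accepts ↔ w ∈ A.accepts ∨ w ∈ B.accepts := by
  intro w
  rw [NFA.mem_accepts]
  have := disjUnion_evalFrom A B A.start B.start w
  constructor
  · rintro ⟨x, hacc, hx⟩
    rw [show (A.disjUnion B).start = Sum.inl '' A.start ∪ Sum.inr '' B.start from rfl, this] at hx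
    rcases hacc with ⟨p, hp, rfl⟩ | ⟨p, hp, rfl⟩
    · rcases hx with ⟨q, hq, hqe⟩ | ⟨q, hq, hqe⟩
      · cases hqe; exact Or.inl ⟨p, hp, hq⟩
      · simp at hqe
    · rcases hx with ⟨q, hq, hqe⟩ | ⟨q, hq, hqe⟩
      · simp at hqe
      · cases hqe; exact Or.inr ⟨p, hp, hq⟩
  · rintro (⟨p, hp, hpe⟩ | ⟨p, hp, hpe⟩)
    · exact ⟨Sum.inl p, Or.inl ⟨p, hp, rfl⟩, by
        rw [show (A.disjUnion B).start = Sum.inl '' A.start ∪ Sum.inr '' B.start from rfl, this]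
        exact Or.inl ⟨p, hpe, rfl⟩⟩
    · exact ⟨Sum.inr p, Or.inr ⟨p, hp, rfl⟩, by
        rw [show (A.disjUnion B).start = Sum.inl '' A.start ∪ Sum.inr '' B.start from rfl, this]
        exact Or.inr ⟨p, hpe, rfl⟩⟩

-- sink lemmas for gatePre
lemma gatePre_sink {α σ₁ : Type*} (c : α) (C₁ : NFA α σ₁) (P : Prop) (w : List α) :
    (gatePre c C₁).evalFrom {x | P ∧ x = Sum.inr ()} w = {x | P ∧ x = Sum.inr ()} := by
  by_cases hP : P
  · have hset : {x : σ₁ ⊕ Unit | P ∧ x = Sum.inr ()} = {Sum.inr ()} := by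
      ext x; simp [hP]
    rw [hset]
    induction w with
    | nil => rfl
    | cons a w ih =>
      rw [NFA.evalFrom_cons]
      have : (gatePre c C₁).stepSet {Sum.inr ()} a = {Sum.inr ()} := by
        ext x; simp [NFA.mem_stepSet, gatePre]
      rw [this, ih]
  · have hset : {x : σ₁ ⊕ Unit | P ∧ x = Sum.inr ()} = ∅ := by
      ext x; simp [hP]
    rw [hset, NFA.evalFrom_empty']

lemma gatePre_stepSet_inl {α σ₁ : Type*} (c : α) (C₁ : NFA α σ₁) (S : Set σ₁) (a : α) :
    (gatePre c C₁).stepSet (Sum.inl '' S) a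
      = Sum.inl '' C₁.stepSet S a
        ∪ {x | (a = c ∧ ∃ q ∈ C₁.accept, q ∈ S) ∧ x = Sum.inr ()} := by
  ext x
  simp only [NFA.mem_stepSet, Set.mem_union, Set.mem_image, Set.mem_setOf_eq, gatePre]
  constructor
  · rintro ⟨t, ⟨p, hp, rfl⟩, hx⟩
    simp only [Sum.elim_inl, Set.mem_union, Set.mem_image, Set.mem_setOf_eq] at hx
    rcases hx with ⟨q, hq, rfl⟩ | ⟨rfl, hacc, rfl⟩
    · exact Or.inl ⟨q, ⟨p, hp, hq⟩, rfl⟩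
    · exact Or.inr ⟨⟨rfl, p, hacc, hp⟩, rfl⟩
  · rintro (⟨q, ⟨p, hp, hq⟩, rfl⟩ | ⟨⟨rfl, p, hacc, hp⟩, rfl⟩)
    · exact ⟨Sum.inl p, ⟨p, hp, rfl⟩, Or.inl ⟨q, hq, rfl⟩⟩
    · exact ⟨Sum.inl p, ⟨p, hp, rfl⟩, Or.inr ⟨rfl, hacc, rfl⟩⟩

lemma gatePre_evalFrom {α σ₁ : Type*} (c : α) (C₁ : NFA α σ₁) (w : List α) (S : Set σ₁) :
    (gatePre c C₁).evalFrom (Sum.inl '' S) w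
      = Sum.inl '' C₁.evalFrom S w
        ∪ {x | (∃ u v, w = u ++ c :: v ∧ ∃ q ∈ C₁.accept, q ∈ C₁.evalFrom S u)
            ∧ x = Sum.inr ()} := by
  induction w generalizing S with
  | nil =>
    have : {x : σ₁ ⊕ Unit | (∃ u v, ([] : List α) = u ++ c :: v ∧ ∃ q ∈ C₁.accept,
        q ∈ C₁.evalFrom S u) ∧ x = Sum.inr ()} = ∅ := by
      ext x
      simp only [Set.mem_setOf_eq, Set.mem_empty_iff_false, iff_false, not_and]
      rintro ⟨u, v, huv, -⟩
      exact absurd huv.symm (List.append_ne_nil_of_right_ne_nil u (List.cons_ne_nil c v))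
    rw [NFA.evalFrom_nil, this, Set.union_empty, NFA.evalFrom_nil]
  | cons a w ih =>
    rw [NFA.evalFrom_cons, gatePre_stepSet_inl, NFA.evalFrom_union, ih, gatePre_sink]
    rw [Set.union_assoc]
    have heval : C₁.evalFrom (C₁.stepSet S a) w = C₁.evalFrom S (a :: w) := rfl
    rw [heval]
    congr 1
    ext x
    simp only [Set.mem_union, Set.mem_setOf_eq]
    constructor
    · rintro (⟨⟨u, v, rfl, hq⟩, rfl⟩ | ⟨⟨rfl, hq⟩, rfl⟩)
      · exact ⟨⟨a :: u, v, rfl, hq⟩, rfl⟩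
      · exact ⟨⟨[], w, rfl, hq⟩, rfl⟩
    · rintro ⟨⟨u, v, huv, hq⟩, rfl⟩
      cases u with
      | nil =>
        simp only [List.nil_append, List.cons.injEq] at huv
        obtain ⟨rfl, rfl⟩ := huv
        exact Or.inr ⟨⟨rfl, hq⟩, rfl⟩
      | cons b u =>
        simp only [List.cons_append, List.cons.injEq] at huv
        obtain ⟨rfl, rfl⟩ := huv
        exact Or.inl ⟨⟨u, v, rfl, hq⟩, rfl⟩

lemma gatePre_accepts {α σ₁ : Type*} (c : α) (C₁ : NFA α σ₁) (w : List α) :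
    w ∈ (gatePre c C₁).accepts ↔ ∃ u v, w = u ++ c :: v ∧ u ∈ C₁.accepts := by
  rw [NFA.mem_accepts]
  have hstart : (gatePre c C₁).start = Sum.inl '' C₁.start := rfl
  have hacc : (gatePre c C₁).accept = {Sum.inr ()} := rfl
  rw [hstart, hacc, gatePre_evalFrom]
  constructor
  · rintro ⟨x, hx, hmem⟩
    simp only [Set.mem_singleton_iff] at hx; subst hx
    rcases hmem with ⟨q, -, hq⟩ | ⟨⟨u, v, huv, q, hq1, hq2⟩, -⟩
    · simp at hq
    · exact ⟨u, v, huv, q, hq1, hq2⟩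
  · rintro ⟨u, v, huv, q, hq1, hq2⟩
    exact ⟨Sum.inr (), rfl, Or.inr ⟨⟨u, v, huv, q, hq1, hq2⟩, rfl⟩⟩

lemma gateSuf_stepSet_inl {α σ₂ : Type*} (c : α) (C₂ : NFA α σ₂) (T : Set σ₂) (a : α) :
    (gateSuf c C₂).stepSet (Sum.inl '' T) a = Sum.inl '' C₂.stepSet T a := by
  ext x
  simp only [NFA.mem_stepSet, Set.mem_image, gateSuf]
  constructor
  · rintro ⟨t, ⟨p, hp, rfl⟩, hx⟩
    simp only [Sum.elim_inl, Set.mem_image] at hx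
    obtain ⟨q, hq, rfl⟩ := hx
    exact ⟨q, ⟨p, hp, hq⟩, rfl⟩
  · rintro ⟨q, ⟨p, hp, hq⟩, rfl⟩
    exact ⟨Sum.inl p, ⟨p, hp, rfl⟩, ⟨q, hq, rfl⟩⟩

lemma gateSuf_evalFrom_inl {α σ₂ : Type*} (c : α) (C₂ : NFA α σ₂) (w : List α) (T : Set σ₂) :
    (gateSuf c C₂).evalFrom (Sum.inl '' T) w = Sum.inl '' C₂.evalFrom T w := by
  induction w generalizing T with
  | nil => rfl
  | cons a w ih => rw [NFA.evalFrom_cons, gateSuf_stepSet_inl, ih]; rfl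

lemma gateSuf_evalFrom {α σ₂ : Type*} (c : α) (C₂ : NFA α σ₂) (w : List α) :
    (gateSuf c C₂).evalFrom {Sum.inr ()} w
      = {x | c ∉ w ∧ x = Sum.inr ()}
        ∪ Sum.inl '' {q | ∃ u v, w = u ++ c :: v ∧ c ∉ u ∧ q ∈ C₂.evalFrom C₂.start v} := by
  induction w with
  | nil =>
    rw [NFA.evalFrom_nil]
    ext x
    simp only [Set.mem_singleton_iff, Set.mem_union, Set.mem_setOf_eq, Set.mem_image,
      List.not_mem_nil, not_false_iff, true_and]
    constructor
    · rintro rfl; exact Or.inl rfl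
    · rintro (rfl | ⟨q, ⟨u, v, huv, -⟩, -⟩)
      · rfl
      · exact absurd huv.symm (List.append_ne_nil_of_right_ne_nil u (List.cons_ne_nil c v))
  | cons a w ih =>
    rw [NFA.evalFrom_cons]
    by_cases hac : c = a
    · subst hac  -- eliminates a
      have hstep : (gateSuf c C₂).stepSet {Sum.inr ()} c = Sum.inl '' C₂.start := by
        ext x
        simp only [NFA.mem_stepSet, Set.mem_singleton_iff, Set.mem_image, gateSuf]
        constructor
        · rintro ⟨t, rfl, hx⟩
          simp only [Sum.elim_inr, Set.mem_setOf_eq] at hx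
          rcases hx with ⟨-, p, hp, rfl⟩ | ⟨hne, -⟩
          · exact ⟨p, hp, rfl⟩
          · exact absurd rfl hne
        · rintro ⟨p, hp, rfl⟩
          exact ⟨Sum.inr (), rfl, Or.inl ⟨by simp, p, hp, rfl⟩⟩
      rw [hstep, gateSuf_evalFrom_inl]
      ext x
      simp only [Set.mem_union, Set.mem_setOf_eq, Set.mem_image, List.mem_cons, true_or,
        not_true, false_and, false_or]
      constructor
      · rintro ⟨q, hq, rfl⟩
        exact ⟨q, ⟨[], w, rfl, (by simp), hq⟩, rfl⟩
      · rintro ⟨q, ⟨u, v, huv, hcu, hq⟩, rfl⟩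
        cases u with
        | nil =>
          simp only [List.nil_append, List.cons.injEq] at huv
          obtain ⟨-, rfl⟩ := huv
          exact ⟨q, hq, rfl⟩
        | cons b u =>
          simp only [List.cons_append, List.cons.injEq] at huv
          obtain ⟨rfl, -⟩ := huv
          exact absurd (List.mem_cons_self (a := c) (l := u)) hcu
    · have hstep : (gateSuf c C₂).stepSet {Sum.inr ()} a = {Sum.inr ()} := by
        ext x
        simp only [NFA.mem_stepSet, Set.mem_singleton_iff, gateSuf]
        constructor
        · rintro ⟨t, rfl, hx⟩
          simp only [Sum.elim_inr, Set.mem_setOf_eq] at hx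
          rcases hx with ⟨hc, -⟩ | ⟨-, rfl⟩
          · exact absurd hc.symm hac
          · rfl
        · rintro rfl
          exact ⟨Sum.inr (), rfl, Or.inr ⟨fun h => hac h.symm, rfl⟩⟩
      rw [hstep, ih]
      ext x
      simp only [Set.mem_union, Set.mem_setOf_eq, Set.mem_image, List.mem_cons]
      constructor
      · rintro (⟨hcw, rfl⟩ | ⟨q, ⟨u, v, huv, hcu, hq⟩, rfl⟩)
        · exact Or.inl ⟨by rintro (h | h); exacts [hac h, hcw h], rfl⟩
        · exact Or.inr ⟨q, ⟨a :: u, v, by rw [huv]; rfl,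
            by simp only [List.mem_cons]; rintro (h | h); exacts [hac h, hcu h], hq⟩, rfl⟩
      · rintro (⟨hcw, rfl⟩ | ⟨q, ⟨u, v, huv, hcu, hq⟩, rfl⟩)
        · exact Or.inl ⟨fun h => hcw (Or.inr h), rfl⟩
        · cases u with
          | nil =>
            simp only [List.nil_append, List.cons.injEq] at huv
            exact absurd huv.1.symm hac
          | cons b u =>
            simp only [List.cons_append, List.cons.injEq] at huv
            obtain ⟨rfl, rfl⟩ := huv
            exact Or.inr ⟨q, ⟨u, v, rfl, fun h => hcu (List.mem_cons_of_mem _ h), hq⟩, rfl⟩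

lemma gateSuf_accepts {α σ₂ : Type*} (c : α) (C₂ : NFA α σ₂) (w : List α) :
    w ∈ (gateSuf c C₂).accepts
      ↔ c ∉ w ∨ ∃ u v, w = u ++ c :: v ∧ c ∉ u ∧ v ∈ C₂.accepts := by
  rw [NFA.mem_accepts]
  have hstart : (gateSuf c C₂).start = {Sum.inr ()} := rfl
  have hacc : (gateSuf c C₂).accept = {Sum.inr ()} ∪ Sum.inl '' C₂.accept := rfl
  rw [hstart, hacc, gateSuf_evalFrom]
  constructor
  · rintro ⟨x, hx, hmem⟩
    rcases hx with rfl | ⟨p, hp, rfl⟩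
    · rcases hmem with ⟨hcw, -⟩ | ⟨q, -, hq⟩
      · exact Or.inl hcw
      · simp at hq
    · rcases hmem with ⟨-, hx⟩ | ⟨q, ⟨u, v, huv, hcu, hq⟩, hqe⟩
      · simp at hx
      · cases hqe
        exact Or.inr ⟨u, v, huv, hcu, p, hp, hq⟩
  · rintro (hcw | ⟨u, v, huv, hcu, p, hp, hpe⟩)
    · exact ⟨Sum.inr (), Or.inl rfl, Or.inl ⟨hcw, rfl⟩⟩
    · exact ⟨Sum.inl p, Or.inr ⟨p, hp, rfl⟩, Or.inr ⟨p, ⟨u, v, huv, hcu, hpe⟩, rfl⟩⟩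

lemma gate_unique_split {α : Type*} {c : α} :
    ∀ {u u' v v' : List α}, c ∉ u → c ∉ u' →
      u ++ c :: v = u' ++ c :: v' → u = u' ∧ v = v' := by
  intro u
  induction u with
  | nil =>
    intro u' v v' _ hu' h
    cases u' with
    | nil => simpa using h
    | cons b u' =>
      simp only [List.nil_append, List.cons_append, List.cons.injEq] at h
      exact absurd (h.1 ▸ List.mem_cons_self (a := b) (l := u')) hu'
  | cons a u ih =>
    intro u' v v' hu hu' h
    cases u' with
    | nil =>
      simp only [List.cons_append, List.nil_append, List.cons.injEq] at h
      exact absurd (h.1 ▸ List.mem_cons_self (a := a) (l := u)) hu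
    | cons b u' =>
      simp only [List.cons_append, List.cons.injEq] at h
      obtain ⟨rfl, h2⟩ := h
      obtain ⟨rfl, rfl⟩ := ih (fun hm => hu (List.mem_cons_of_mem _ hm))
        (fun hm => hu' (List.mem_cons_of_mem _ hm)) h2
      exact ⟨rfl, rfl⟩

lemma gate_first_occ {α : Type*} {c : α} {w : List α} (h : c ∈ w) :
    ∃ u v, w = u ++ c :: v ∧ c ∉ u := by
  induction w with
  | nil => simp at h
  | cons a w ih =>
    by_cases hac : c = a
    · exact ⟨[], w, by simp [hac], by simp⟩
    · have hw : c ∈ w := by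
        rcases List.mem_cons.1 h with h1 | h1
        · exact absurd h1 hac
        · exact h1
      obtain ⟨u, v, rfl, hu⟩ := ih hw
      exact ⟨a :: u, v, rfl, by
        simp only [List.mem_cons]; rintro (h1 | h1); exacts [hac h1, hu h1]⟩


/-- Theorem 2 of the paper (basic gate complementation): if `C₁` is an NFA
over `Σ ∖ {c}` (no `c`-transitions) accepting `(Σ ∖ {c})* ∖ L₁`, and `C₂` an
NFA over `Σ` accepting `Σ* ∖ L₂`, then `C = C_pre ⊎ C_suf` accepts
`Σ* ∖ (L₁ · {c} · L₂)`. -/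
theorem gateCompl_accepts {α σ₁ σ₂ : Type*} [Fintype α] [Fintype σ₁] [Fintype σ₂]
    (c : α) (L₁ L₂ : Language α) (hL₁ : L₁ ≤ noLetter c)
    (C₁ : NFA α σ₁) (hC₁c : ∀ q, C₁.step q c = ∅)
    (hC₁ : C₁.accepts = noLetter c \ L₁)
    (C₂ : NFA α σ₂) (hC₂ : C₂.accepts = L₂ᶜ) :
    ((gatePre c C₁).disjUnion (gateSuf c C₂)).accepts = (L₁ * {[c]} * L₂)ᶜ := by
  ext w
  rw [disjUnion_accepts, gatePre_accepts, gateSuf_accepts, hC₁, hC₂]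
  have hmem : w ∈ L₁ * {[c]} * L₂ ↔ ∃ u v, w = u ++ c :: v ∧ u ∈ L₁ ∧ v ∈ L₂ := by
    constructor
    · intro h
      obtain ⟨x, hx, v, hv, rfl⟩ := Language.mem_mul.1 h
      obtain ⟨u, hu, y, hy, rfl⟩ := Language.mem_mul.1 hx
      replace hy : y = [c] := hy
      subst hy
      exact ⟨u, v, by simp, hu, hv⟩
    · rintro ⟨u, v, rfl, hu, hv⟩
      exact Language.mem_mul.2 ⟨u ++ [c], Language.mem_mul.2 ⟨u, hu, [c], rfl, rfl⟩,
        v, hv, by simp⟩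
  constructor
  · rintro (⟨u, v, rfl, hu1, hu2⟩ | hcw | ⟨u, v, rfl, hcu, hv⟩) hw
    · obtain ⟨u', v', huv, hu', hv'⟩ := hmem.1 hw
      obtain ⟨rfl, rfl⟩ := gate_unique_split hu1 (hL₁ hu') huv
      exact hu2 hu'
    · obtain ⟨u', v', rfl, -, -⟩ := hmem.1 hw
      exact hcw (by simp)
    · obtain ⟨u', v', huv, hu', hv'⟩ := hmem.1 hw
      obtain ⟨rfl, rfl⟩ := gate_unique_split hcu (hL₁ hu') huv
      exact hv hv'
  · intro hw
    by_cases hcw : c ∈ w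
    · obtain ⟨u, v, rfl, hcu⟩ := gate_first_occ hcw
      by_cases hu : u ∈ L₁
      · refine Or.inr (Or.inr ⟨u, v, rfl, hcu, ?_⟩)
        intro hv
        exact hw (hmem.2 ⟨u, v, rfl, hu, hv⟩)
      · exact Or.inl ⟨u, v, rfl, hcu, hu⟩
    · exact Or.inr (Or.inl hcw)
end

section
/- Let A be an NFA over a finite alphabet Σ. Let rev(A) denote the reverse of A (all transitions reversed, initial and accepting state sets swapped), let det(B) denote the complete powerset DFA of an NFA B (states are subsets of B's states, start state is B's set of initial states, a subset is accepting iff it intersects B's accepting set), and let co(D) denote the DFA obtained from a complete DFA D by swapping accepting and non-accepting states. Then the NFA rev(co(det(rev(A)))) accepts exactly Σ* ∖ L(A). -/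
/-- The reverse of an NFA: all transitions reversed, initial and accepting
state sets swapped. -/
def NFA.reverse' {α σ : Type*} (M : NFA α σ) : NFA α σ where
  step := fun q a => {r | q ∈ M.step r a}
  start := M.accept
  accept := M.start

/-- The complement of a complete DFA: swap accepting and non-accepting
states. -/
def DFA.complement {α σ : Type*} (D : DFA α σ) : DFA α σ where
  step := D.step
  start := D.start
  accept := D.acceptᶜ

lemma NFA.mem_evalFrom_iff_exists' {α σ : Type*} (M : NFA α σ) :
    ∀ (x : List α) (S : Set σ) (q : σ),
      q ∈ M.evalFrom S x ↔ ∃ s ∈ S, q ∈ M.evalFrom {s} x := by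
  intro x
  induction x with
  | nil => simp [NFA.evalFrom]
  | cons a x ih =>
    intro S q
    have h1 : M.evalFrom S (a :: x) = M.evalFrom (M.stepSet S a) x := rfl
    rw [h1, ih]
    constructor
    · rintro ⟨r, hr, hq⟩
      rw [M.mem_stepSet] at hr
      obtain ⟨s, hs, hr⟩ := hr
      refine ⟨s, hs, ?_⟩
      have h2 : M.evalFrom {s} (a :: x) = M.evalFrom (M.stepSet {s} a) x := rfl
      rw [h2, ih]
      exact ⟨r, by rw [M.mem_stepSet]; exact ⟨s, rfl, hr⟩, hq⟩
    · rintro ⟨s, hs, hq⟩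
      have h2 : M.evalFrom {s} (a :: x) = M.evalFrom (M.stepSet {s} a) x := rfl
      rw [h2, ih] at hq
      obtain ⟨r, hr, hq⟩ := hq
      rw [M.mem_stepSet] at hr
      obtain ⟨s', hs', hr⟩ := hr
      cases hs'
      exact ⟨r, by rw [M.mem_stepSet]; exact ⟨s, hs, hr⟩, hq⟩

lemma NFA.evalFrom_reverse {α σ : Type*} (M : NFA α σ) :
    ∀ (x : List α) (p q : σ),
      q ∈ M.evalFrom {p} x ↔ p ∈ M.reverse'.evalFrom {q} x.reverse := by
  intro x
  induction x with
  | nil => intro p q; simp [NFA.evalFrom, eq_comm]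
  | cons a x ih =>
    intro p q
    have h1 : M.evalFrom {p} (a :: x) = M.evalFrom (M.stepSet {p} a) x := rfl
    rw [h1, M.mem_evalFrom_iff_exists']
    have h2 : (a :: x).reverse = x.reverse ++ [a] := by simp
    rw [h2, M.reverse'.evalFrom_append, NFA.evalFrom_cons, NFA.evalFrom_nil, NFA.mem_stepSet]
    constructor
    · rintro ⟨r, hr, hq⟩
      rw [M.mem_stepSet] at hr
      obtain ⟨p', hp', hr⟩ := hr
      cases hp'
      exact ⟨r, (ih r q).mp hq, hr⟩
    · rintro ⟨r, hr, hp⟩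
      exact ⟨r, by rw [M.mem_stepSet]; exact ⟨p, rfl, hp⟩, (ih r q).mpr hr⟩

lemma NFA.accepts_reverse {α σ : Type*} (M : NFA α σ) (x : List α) :
    x ∈ M.reverse'.accepts ↔ x.reverse ∈ M.accepts := by
  rw [NFA.mem_accepts, NFA.mem_accepts]
  constructor
  · rintro ⟨q, hq, hx⟩
    rw [M.reverse'.mem_evalFrom_iff_exists'] at hx
    obtain ⟨s, hs, hx⟩ := hx
    refine ⟨s, hs, ?_⟩
    rw [M.mem_evalFrom_iff_exists']
    refine ⟨q, hq, ?_⟩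
    rw [M.evalFrom_reverse]
    simpa using hx
  · rintro ⟨q, hq, hx⟩
    rw [M.mem_evalFrom_iff_exists'] at hx
    obtain ⟨s, hs, hx⟩ := hx
    refine ⟨s, hs, ?_⟩
    rw [M.reverse'.mem_evalFrom_iff_exists']
    refine ⟨q, hq, ?_⟩
    rw [M.evalFrom_reverse] at hx
    simpa using hx

lemma DFA.accepts_complement {α σ : Type*} (D : DFA α σ) :
    D.complement.accepts = D.acceptsᶜ := by
  ext x
  rfl

/-- Reverse powerset complementation (Section 3): `rev(co(det(rev(A))))`
accepts exactly the complement of `L(A)`.  Here `det` is the powerset DFA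
construction `NFA.toDFA` and the final reverse is applied to the DFA viewed
as an NFA. -/
theorem reverse_powerset_complementation {α σ : Type*} [Fintype α] [Fintype σ]
    (A : NFA α σ) :
    (A.reverse'.toDFA.complement.toNFA.reverse').accepts = A.acceptsᶜ := by
  ext x
  rw [NFA.accepts_reverse, DFA.toNFA_correct, DFA.accepts_complement,
    NFA.toDFA_correct]
  show x.reverse ∈ (A.reverse'.accepts : Set (List α))ᶜ ↔ x ∈ (A.accepts : Set (List α))ᶜ
  change ¬ x.reverse ∈ A.reverse'.accepts ↔ ¬ x ∈ A.accepts
  rw [NFA.accepts_reverse,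
    List.reverse_reverse]
end

section
/- For every n ∈ ℕ there exists an NFA over the two-letter alphabet {a, b} with at most n + 2 states whose language is the complement {a, b}* ∖ ({a, b}* · {a} · {a, b}ⁿ). -/
/-- The language of all words of length `n` over the alphabet `α`,
i.e. `{a, b}ⁿ` when `α` models the two-letter alphabet. -/
def lenLang (α : Type*) (n : ℕ) : Language α := {w | w.length = n}

/-- The NFA: state `none` is the "waiting" state with self loops; state `some k`
means exactly `k` more letters must be read before acceptance. -/
def lastM (n : ℕ) : NFA Bool (Option (Fin (n+1))) where
  step q x :=
    match q with
    | none => if x then {none} else {none, some (Fin.last n)}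
    | some k => if h : 0 < (k : ℕ) then {some ⟨(k : ℕ) - 1, by omega⟩} else ∅
  start := Set.univ
  accept := {some 0}

lemma mem_eval (n : ℕ) (w : List Bool) (q : Option (Fin (n+1))) :
    q ∈ (lastM n).evalFrom Set.univ w ↔
      q = none ∨ ∃ k : Fin (n+1), q = some k ∧
        ((k : ℕ) + w.length ≤ n ∨
          ∃ u v : List Bool, w = u ++ false :: v ∧ v.length + (k : ℕ) = n) := by
  induction w using List.reverseRecOn generalizing q with
  | nil =>
      simp only [NFA.evalFrom_nil, Set.mem_univ, true_iff]
      cases q with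
      | none => exact Or.inl rfl
      | some k =>
          exact Or.inr ⟨k, rfl, Or.inl (by have := k.isLt; simp; omega)⟩
  | append_singleton u x ih =>
      rw [NFA.evalFrom_append, NFA.evalFrom_singleton, NFA.mem_stepSet]
      constructor
      · rintro ⟨p, hp, hq⟩
        cases p with
        | none =>
            -- step none x
            by_cases hx : x
            · simp [lastM, hx] at hq
              subst hq; exact Or.inl rfl
            · simp [lastM, hx] at hq
              rcases hq with hq | hq
              · subst hq; exact Or.inl rfl
              · subst hq
                refine Or.inr ⟨Fin.last n, rfl, Or.inr ⟨u, [], ?_, by simp⟩⟩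
                simp at hx; subst hx; rfl
        | some j =>
            by_cases hj : 0 < (j : ℕ)
            · simp [lastM, hj, Fin.val_pos_iff.mp hj] at hq
              subst hq
              rcases (ih (some j)).1 hp with h | ⟨k, hk, hcond⟩
              · exact absurd h (by simp)
              · have hkj : j = k := by simpa using hk
                subst hkj
                refine Or.inr ⟨⟨(j : ℕ) - 1, by omega⟩, rfl, ?_⟩
                rcases hcond with h | ⟨u', v', huv, hlen⟩
                · left; simp; omega
                · right
                  exact ⟨u', v' ++ [x], by simp [huv], by simp; omega⟩
            · simp [lastM, hj, mt Fin.val_pos_iff.mpr hj] at hq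
      · rintro (hq | ⟨k, hk, hcond⟩)
        · subst hq
          refine ⟨none, (ih none).2 (Or.inl rfl), ?_⟩
          by_cases hx : x <;> simp [lastM, hx]
        · subst hk
          rcases hcond with h | ⟨u', v', huv, hlen⟩
          · -- k + u.length + 1 ≤ n : came from some (k+1)
            have hk1 : (k : ℕ) + 1 < n + 1 := by simp at h; omega
            refine ⟨some ⟨(k : ℕ) + 1, hk1⟩,
              (ih _).2 (Or.inr ⟨⟨(k:ℕ)+1, hk1⟩, rfl, Or.inl (by simp at h ⊢; omega)⟩), ?_⟩
            simp [lastM, (Fin.val_pos_iff (a := ⟨(k:ℕ)+1, hk1⟩)).mp (Nat.succ_pos _)]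
          · -- decomposition case: split on whether v' is empty
            rcases List.eq_nil_or_concat v' with rfl | ⟨v₂, y, rfl⟩
            · -- u ++ [x] = u' ++ [false], so x = false, k = n
              have h2 : u ++ [x] = u' ++ [false] := by simpa using huv
              obtain ⟨hu, hx⟩ := List.append_inj' h2 (by simp)
              have hx' : x = false := by simpa using hx
              have hkn : (k : ℕ) = n := by simpa using hlen
              refine ⟨none, (ih none).2 (Or.inl rfl), ?_⟩
              have : k = Fin.last n := by ext; simpa using hkn
              subst this
              simp [lastM, hx']
            · -- v' = v₂ ++ [y]
              have h2 : u ++ [x] = (u' ++ false :: v₂) ++ [y] := by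
                simpa using huv
              obtain ⟨hu, hy⟩ := List.append_inj' h2 (by simp)
              have hy' : y = x := by simpa using hy.symm
              subst hy'
              have hk1 : (k : ℕ) + 1 < n + 1 := by simp at hlen; omega
              refine ⟨some ⟨(k:ℕ)+1, hk1⟩,
                (ih _).2 (Or.inr ⟨⟨(k:ℕ)+1, hk1⟩, rfl,
                  Or.inr ⟨u', v₂, hu, by simp at hlen ⊢; omega⟩⟩), ?_⟩
              simp [lastM, (Fin.val_pos_iff (a := ⟨(k:ℕ)+1, hk1⟩)).mp (Nat.succ_pos _)]

lemma mem_prod_iff (n : ℕ) (w : List Bool) :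
    w ∈ (⊤ * {[true]} * lenLang Bool n : Language Bool) ↔
      ∃ u v : List Bool, w = u ++ true :: v ∧ v.length = n := by
  constructor
  · rintro ⟨uv, ⟨u, hu, t, ht, rfl⟩, v, hv, rfl⟩
    change t = [true] at ht
    subst ht
    exact ⟨u, v, by simp, hv⟩
  · rintro ⟨u, v, rfl, hv⟩
    exact ⟨u ++ [true], ⟨u, trivial, [true], rfl, rfl⟩, v, hv, by simp⟩

/-- Sections 1 and 3 of the paper: for every `n` there is an NFA over the
two-letter alphabet `{a, b}` (modeled by `Bool`, with `a = true`) with at most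
`n + 2` states accepting the complement `{a, b}* ∖ ({a, b}* · {a} · {a, b}ⁿ)`. -/
theorem exists_small_nfa_complement_lastNthLetterA (n : ℕ) :
    ∃ (σ : Type) (inst : Fintype σ) (M : NFA Bool σ),
      @Fintype.card σ inst ≤ n + 2 ∧
      M.accepts = (⊤ * {[true]} * lenLang Bool n)ᶜ := by
  refine ⟨Option (Fin (n+1)), inferInstance, lastM n, by simp, ?_⟩
  ext w
  rw [NFA.mem_accepts]
  have hacc : (∃ S ∈ (lastM n).accept, S ∈ (lastM n).evalFrom (lastM n).start w) ↔
      some (0 : Fin (n+1)) ∈ (lastM n).evalFrom Set.univ w := by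
    simp [lastM]
  rw [hacc, mem_eval]
  change _ ↔ w ∉ (⊤ * {[true]} * lenLang Bool n : Language Bool)
  rw [show (w ∈ (⊤ * {[true]} * lenLang Bool n : Language Bool)) =
        (∃ u v : List Bool, w = u ++ true :: v ∧ v.length = n) from
      propext (mem_prod_iff n w)]
  constructor
  · rintro (h | ⟨k, hk, hcond⟩)
    · exact absurd h (by simp)
    · have hk0 : (k : ℕ) = 0 := by
        have : (0 : Fin (n+1)) = k := by simpa using hk
        simpa using congrArg Fin.val this.symm
      rintro ⟨u', v', rfl, hv'⟩
      rcases hcond with h | ⟨u, v, huv, hlen⟩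
      · simp at h; omega
      · have h2 : u' ++ true :: v' = u ++ false :: v := huv
        obtain ⟨_, h3⟩ := List.append_inj' h2 (by simp; omega)
        simp at h3
  · intro h
    refine Or.inr ⟨0, rfl, ?_⟩
    by_cases hl : w.length ≤ n
    · left; simpa using hl
    · right
      have hge : n + 1 ≤ w.length := by omega
      set m := w.length - (n+1) with hm
      have hsplit : w = w.take m ++ w.drop m := (List.take_append_drop m w).symm
      have hdl : (w.drop m).length = n + 1 := by
        rw [List.length_drop]; omega
      rcases hd : w.drop m with _ | ⟨x, v⟩
      · rw [hd] at hdl; simp at hdl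
      · rw [hd] at hsplit hdl
        have hvlen : v.length = n := by simpa using hdl
        cases x with
        | true => exact absurd ⟨w.take m, v, hsplit, hvlen⟩ h
        | false => exact ⟨w.take m, v, hsplit, by simp [hvlen]⟩
end

section
/- For every n ∈ ℕ there exists an NFA over the two-letter alphabet {a, b} with exactly 2n + 3 states whose language is {a, b}ⁿ · {a} · {a, b}* · {a} · {a, b}ⁿ. -/
namespace NfaSeqAux

lemma getElem?_append_lt {α : Type*} (l t : List α) (i : ℕ) (h : i < l.length) :
    (l ++ t)[i]? = l[i]? := by
  rw [List.getElem?_append, if_pos h]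

/-- The NFA: states `0..n` count the first `n` letters, state `n`
reads an `a` to reach the looping state `n+1`, from which an `a`
starts the final counting phase `n+2..2n+2`. -/
def M (n : ℕ) : NFA Bool (Fin (2 * n + 3)) where
  step q c := {p | ((q : ℕ) < n ∧ (p : ℕ) = (q : ℕ) + 1) ∨
    ((q : ℕ) = n ∧ c = true ∧ (p : ℕ) = n + 1) ∨
    ((q : ℕ) = n + 1 ∧ ((p : ℕ) = n + 1 ∨ (c = true ∧ (p : ℕ) = n + 2))) ∨
    (n + 1 < (q : ℕ) ∧ (q : ℕ) < 2 * n + 2 ∧ (p : ℕ) = (q : ℕ) + 1)}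
  start := {p | (p : ℕ) = 0}
  accept := {p | (p : ℕ) = 2 * n + 2}

/-- Characterization of the states reachable after reading `w`. -/
def char (n : ℕ) (w : List Bool) (q : ℕ) : Prop :=
  (q ≤ n ∧ w.length = q) ∨
  (q = n + 1 ∧ n < w.length ∧ w[n]? = some true) ∨
  (n + 1 < q ∧ q ≤ w.length ∧ w[n]? = some true ∧
    w[w.length - (q - (n + 1))]? = some true)

lemma eval_iff (n : ℕ) (w : List Bool) (q : Fin (2 * n + 3)) :
    q ∈ (M n).eval w ↔ char n w (q : ℕ) := by
  induction w using List.reverseRecOn generalizing q with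
  | nil =>
      have hq := q.isLt
      simp only [NFA.eval_nil, M, char, Set.mem_setOf_eq, List.length_nil,
        List.getElem?_nil]
      constructor
      · intro h; left; omega
      · rintro (⟨h1, h2⟩ | ⟨_, h, _⟩ | ⟨h1, h2, _⟩) <;> omega
  | append_singleton w c ih =>
      rw [NFA.eval_append_singleton, NFA.mem_stepSet]
      have hq := q.isLt
      constructor
      · rintro ⟨p, hp, hstep⟩
        rw [ih] at hp
        have hplt := p.isLt
        simp only [M, Set.mem_setOf_eq] at hstep
        rcases hstep with ⟨h1, h2⟩ | ⟨h1, h2, h3⟩ | ⟨h1, h2⟩ | ⟨h1, h2, h3⟩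
        · -- p < n, q = p+1
          rcases hp with ⟨_, hl⟩ | ⟨hp1, _, _⟩ | ⟨hp1, _, _, _⟩ <;> try omega
          left; simp only [List.length_append, List.length_singleton]; omega
        · -- p = n, c = true, q = n+1
          rcases hp with ⟨_, hl⟩ | ⟨hp1, _, _⟩ | ⟨hp1, _, _, _⟩ <;> try omega
          right; left
          refine ⟨h3, by simp only [List.length_append, List.length_singleton]; omega, ?_⟩
          have hlw : w.length = n := by omega
          subst h2
          rw [← hlw, List.getElem?_concat_length]
        · -- p = n+1
          rcases hp with ⟨hp0, hl⟩ | ⟨_, hlen, hget⟩ | ⟨hp1, _, _, _⟩ <;> try omega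
          have hgetapp : (w ++ [c])[n]? = some true := by
            rw [getElem?_append_lt _ _ _ hlen]; exact hget
          rcases h2 with hq1 | ⟨hc, hq2⟩
          · right; left
            exact ⟨hq1, by simp only [List.length_append, List.length_singleton]; omega, hgetapp⟩
          · right; right
            refine ⟨by omega,
              by simp only [List.length_append, List.length_singleton]; omega, hgetapp, ?_⟩
            have hidx : (w ++ [c]).length - ((q : ℕ) - (n + 1)) = w.length := by
              simp only [List.length_append, List.length_singleton]; omega
            rw [hidx]
            subst hc
            exact List.getElem?_concat_length
        · -- n+1 < p < 2n+2, q = p+1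
          rcases hp with ⟨hp0, hl⟩ | ⟨hp1, _, _⟩ | ⟨_, hple, hgn, hgi⟩ <;> try omega
          right; right
          have hwlen : n < w.length := by omega
          refine ⟨by omega,
            by simp only [List.length_append, List.length_singleton]; omega, ?_, ?_⟩
          · rw [getElem?_append_lt _ _ _ hwlen]; exact hgn
          · have hidx : (w ++ [c]).length - ((q : ℕ) - (n + 1)) =
                w.length - ((p : ℕ) - (n + 1)) := by
              simp only [List.length_append, List.length_singleton]; omega
            rw [hidx, getElem?_append_lt _ _ _ (by omega : w.length - ((p : ℕ) - (n + 1)) < w.length)]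
            exact hgi
      · intro h
        rcases h with ⟨hq0, hl⟩ | ⟨hq1, hlen, hget⟩ | ⟨hq1, hqle, hgn, hgi⟩
        · -- q ≤ n, |w|+1 = q
          simp only [List.length_append, List.length_singleton] at hl
          refine ⟨⟨w.length, by omega⟩, ?_, ?_⟩
          · rw [ih]; left
            refine ⟨?_, ?_⟩ <;> simp only [Fin.val_mk] <;> omega
          · simp only [M, Set.mem_setOf_eq, Fin.val_mk]; left; omega
        · -- q = n+1
          simp only [List.length_append, List.length_singleton] at hlen
          rcases Nat.lt_or_ge n w.length with hn | hn
          · -- the `a` at position n is inside w : use self-loop on n+1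
            refine ⟨⟨n + 1, by omega⟩, ?_, ?_⟩
            · rw [ih]; right; left
              simp only [Fin.val_mk]
              refine ⟨by trivial, hn, ?_⟩
              rw [getElem?_append_lt _ _ _ hn] at hget; exact hget
            · simp only [M, Set.mem_setOf_eq, Fin.val_mk]; right; right; left
              exact ⟨by trivial, Or.inl hq1⟩
          · -- n = |w| : the new letter is the `a`
            have hn' : n = w.length := by omega
            have hc : c = true := by
              rw [hn', List.getElem?_concat_length] at hget
              exact (Option.some_injective _ hget)
            refine ⟨⟨n, by omega⟩, ?_, ?_⟩
            · rw [ih]; left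
              refine ⟨?_, ?_⟩ <;> simp only [Fin.val_mk] <;> omega
            · simp only [M, Set.mem_setOf_eq, Fin.val_mk]; right; left; exact ⟨by trivial, hc, hq1⟩
        · -- n+1 < q
          simp only [List.length_append, List.length_singleton] at hqle hgi
          have hwn : n < w.length := by omega
          have hgn' : w[n]? = some true := by
            rw [getElem?_append_lt _ _ _ hwn] at hgn; exact hgn
          rcases Nat.lt_or_ge (n + 2) (q : ℕ) with hq2 | hq2
          · -- q > n+2 : came from q-1 in the final phase
            refine ⟨⟨(q : ℕ) - 1, by omega⟩, ?_, ?_⟩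
            · rw [ih]; right; right
              simp only [Fin.val_mk]
              refine ⟨by omega, by omega, hgn', ?_⟩
              have hidx : w.length + 1 - ((q : ℕ) - (n + 1)) < w.length := by omega
              rw [getElem?_append_lt _ _ _ hidx] at hgi
              have heq : w.length - (((q : ℕ) - 1) - (n + 1)) =
                  w.length + 1 - ((q : ℕ) - (n + 1)) := by omega
              rw [heq]
              exact hgi
            · simp only [M, Set.mem_setOf_eq, Fin.val_mk]; right; right; right
              omega
          · -- q = n+2 : came from n+1, the new letter is the `a`
            have hq' : (q : ℕ) = n + 2 := by omega
            have hidx : w.length + 1 - ((q : ℕ) - (n + 1)) = w.length := by omega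
            rw [hidx, List.getElem?_concat_length] at hgi
            have hc : c = true := Option.some_injective _ hgi
            refine ⟨⟨n + 1, by omega⟩, ?_, ?_⟩
            · rw [ih]; right; left
              simp only [Fin.val_mk]
              exact ⟨by trivial, by omega, hgn'⟩
            · simp only [M, Set.mem_setOf_eq, Fin.val_mk]; right; right; left
              exact ⟨by trivial, Or.inr ⟨hc, by omega⟩⟩

lemma accepts_iff (n : ℕ) (x : List Bool) :
    x ∈ (M n).accepts ↔
      2 * n + 2 ≤ x.length ∧ x[n]? = some true ∧
        x[x.length - (n + 1)]? = some true := by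
  rw [NFA.mem_accepts]
  constructor
  · rintro ⟨q, hq, hev⟩
    have hc : q ∈ (M n).eval x := hev
    rw [eval_iff] at hc
    have hacc : (q : ℕ) = 2 * n + 2 := hq
    rcases hc with ⟨h1, _⟩ | ⟨h1, _, _⟩ | ⟨_, h2, h3, h4⟩ <;> try omega
    refine ⟨by omega, h3, ?_⟩
    have heq : x.length - ((q : ℕ) - (n + 1)) = x.length - (n + 1) := by omega
    rw [← heq]; exact h4
  · rintro ⟨h1, h2, h3⟩
    refine ⟨⟨2 * n + 2, by omega⟩, rfl, ?_⟩
    show _ ∈ (M n).eval x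
    rw [eval_iff]
    right; right
    simp only [Fin.val_mk]
    refine ⟨by omega, by omega, h2, ?_⟩
    have heq : x.length - (2 * n + 2 - (n + 1)) = x.length - (n + 1) := by omega
    rw [heq]; exact h3

/-- split a list at a position holding `true`. -/
lemma split_at_true (l : List Bool) (i : ℕ) (h : l[i]? = some true) :
    ∃ u v, l = u ++ true :: v ∧ u.length = i ∧ v.length = l.length - (i + 1) := by
  have hi : i < l.length := by
    rw [List.getElem?_eq_some_iff] at h; exact h.1
  have hget : l[i] = true := by
    rw [List.getElem?_eq_getElem hi] at h
    exact Option.some_injective _ h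
  refine ⟨l.take i, l.drop (i + 1), ?_, List.length_take_of_le (by omega), by simp⟩
  conv_lhs => rw [← List.take_append_drop i l]
  rw [List.drop_eq_getElem_cons hi, hget]

end NfaSeqAux

/-- The family `Bₙ` of Section 4.1: for every `n` there is an NFA over the
two-letter alphabet `{a, b}` (modeled by `Bool`, with `a = true`) with exactly
`2n + 3` states accepting `{a, b}ⁿ · {a} · {a, b}* · {a} · {a, b}ⁿ`. -/
theorem exists_nfa_seq_family (n : ℕ) :
    ∃ M : NFA Bool (Fin (2 * n + 3)),
      M.accepts = lenLang Bool n * {[true]} * ⊤ * {[true]} * lenLang Bool n := by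
  refine ⟨NfaSeqAux.M n, ?_⟩
  ext x
  rw [NfaSeqAux.accepts_iff]
  constructor
  · rintro ⟨hlen, hn, hlast⟩
    obtain ⟨u, r, hx, hu, hr⟩ := NfaSeqAux.split_at_true x n hn
    have hrlen : r.length = x.length - (n + 1) := hr
    -- the second `a` lies inside `r`
    rw [show x.length - (n + 1) = r.length from by omega, hx,
      List.getElem?_append_right (by omega : u.length ≤ r.length),
      show r.length - u.length = (r.length - (n + 1)) + 1 from by omega] at hlast
    simp only [List.getElem?_cons_succ] at hlast
    obtain ⟨v, u', hrsplit, hv, hu'⟩ :=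
      NfaSeqAux.split_at_true r (r.length - (n + 1)) hlast
    have hu'len : u'.length = n := by omega
    rw [Language.mem_mul]
    refine ⟨u ++ [true] ++ v ++ [true], ?_, u', hu'len, ?_⟩
    · rw [Language.mem_mul]
      refine ⟨u ++ [true] ++ v, ?_, [true], rfl, rfl⟩
      rw [Language.mem_mul]
      refine ⟨u ++ [true], ?_, v, trivial, rfl⟩
      rw [Language.mem_mul]
      exact ⟨u, hu, [true], rfl, rfl⟩
    · rw [hx, hrsplit]; simp
  · intro hx
    rw [Language.mem_mul] at hx
    obtain ⟨y, hy, u', hu', hsplit⟩ := hx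
    rw [Language.mem_mul] at hy
    obtain ⟨z, hz, t2, ht2, hy2⟩ := hy
    rw [Language.mem_mul] at hz
    obtain ⟨w1, hw1, v, -, hz2⟩ := hz
    rw [Language.mem_mul] at hw1
    obtain ⟨u, hu, t1, ht1, hw⟩ := hw1
    have hu'l : u'.length = n := hu'
    have hul : u.length = n := hu
    replace ht1 : t1 = [true] := ht1
    replace ht2 : t2 = [true] := ht2
    subst ht1 ht2 hw hz2 hy2
    subst hsplit
    have hlen : (u ++ [true] ++ v ++ [true] ++ u').length
        = 2 * n + 2 + v.length := by
      simp only [List.length_append, List.length_singleton]; omega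
    refine ⟨by omega, ?_, ?_⟩
    · rw [List.append_assoc u [true] v, List.append_assoc, List.append_assoc,
        List.getElem?_append_right (by omega : u.length ≤ n)]
      simp [hul]
    · rw [hlen, show 2 * n + 2 + v.length - (n + 1) = n + 1 + v.length from by omega,
        List.append_assoc (u ++ [true] ++ v) [true] u',
        List.getElem?_append_right
          (by simp only [List.length_append, List.length_singleton]; omega :
            (u ++ [true] ++ v).length ≤ n + 1 + v.length)]
      simp only [List.length_append, List.length_singleton]
      rw [show n + 1 + v.length - (u.length + 1 + v.length) = 0 from by omega]
      simp
end

section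
/- For every n ∈ ℕ there exists an NFA over the two-letter alphabet {a, b} with at most 2n + 4 states whose language is the complement {a, b}* ∖ ({a, b}ⁿ · {a} · {a, b}* · {a} · {a, b}ⁿ). -/
namespace SeqCompl

variable (n : ℕ)

/-- States: `inl i` = prefix counter `q_i`; `inr (inl j)` = suffix counter `t_j`;
`inr (inr false)` = waiting state `W`; `inr (inr true)` = universal sink `T`. -/
abbrev St (n : ℕ) := Fin (n+1) ⊕ Fin (n+1) ⊕ Bool

def Mach (n : ℕ) : NFA Bool (St n) where
  step s c :=
    match s with
    | .inl i =>
        (if h : i.val < n then {.inl ⟨i.val+1, by omega⟩}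
         else if c = false then {.inr (.inr true)} else ∅) ∪ {.inr (.inl 0)}
    | .inr (.inl j) =>
        if h : j.val < n then {.inr (.inl ⟨j.val+1, by omega⟩)} else ∅
    | .inr (.inr false) =>
        (if c = false then {.inr (.inl 0)} else ∅) ∪ {.inr (.inr false)}
    | .inr (.inr true) => {.inr (.inr true)}
  start := {.inl 0, .inr (.inr false)}
  accept := {s | (∃ i, s = .inl i) ∨ s = .inr (.inl (Fin.last n)) ∨ s = .inr (.inr true)}

def P (n : ℕ) (s : St n) (w : List Bool) : Prop :=
  match s with
  | .inl i => i.val = w.length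
  | .inr (.inl j) => ∃ p, p + j.val + 1 = w.length ∧ (p ≤ n ∨ w[p]? = some false)
  | .inr (.inr false) => True
  | .inr (.inr true) => w[n]? = some false

lemma eval_char (w : List Bool) : ∀ s : St n, s ∈ (Mach n).eval w ↔ P n s w := by
  induction w using List.reverseRecOn with
  | nil =>
    intro s
    rcases s with i | j | b
    · simp only [NFA.eval_nil, Mach, Set.mem_insert_iff, Set.mem_singleton_iff, P]
      simp only [Sum.inl.injEq, reduceCtorEq, or_false, Fin.ext_iff, Fin.val_zero, List.length_nil]
    · simp [Mach, P]
    · cases b <;> simp [Mach, P]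
  | append_singleton w c ih =>
    intro s
    rw [NFA.eval_append_singleton, NFA.mem_stepSet]
    constructor
    · rintro ⟨t, ht, hstep⟩
      rw [ih] at ht
      rcases t with i | j | b
      · -- from q_i
        rcases s with i' | j' | b'
        · simp only [Mach] at hstep
          rcases hstep with h | h
          · split at h
            · simp at h
              subst h
              simp [P] at ht ⊢
              omega
            · split at h <;> simp at h
          · simp at h
        · -- t_{j'} from q_i: j' = 0, jump
          simp only [Mach] at hstep
          rcases hstep with h | h
          · split at h
            · simp at h
            · split at h <;> simp at h
          · simp at h
            subst h
            simp [P] at ht ⊢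
            exact Or.inl (by have := i.isLt; omega)
        · simp only [Mach] at hstep
          rcases hstep with h | h
          · split at h
            · simp at h
            · split at h
              · simp at h; subst h
                simp [P] at ht ⊢
                rename_i hi hc
                have hii := i.isLt
                rw [List.getElem?_append_right (by omega)]
                simp [show n - w.length = 0 by omega, hc]
              · simp at h
          · simp at h
      · -- from t_j
        simp only [Mach] at hstep
        split at hstep
        · simp at hstep
          subst hstep
          simp [P] at ht ⊢
          obtain ⟨p, hp, hor⟩ := ht
          refine ⟨p, by omega, ?_⟩
          rcases hor with h | h
          · exact Or.inl h
          · right; rw [List.getElem?_append_left (by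
              exact (List.getElem?_eq_some_iff.mp h).1)]; exact h
        · simp at hstep
      · -- from W or T
        cases b with
        | false =>
          simp only [Mach] at hstep
          rcases hstep with h | h
          · split at h
            · simp at h
              subst h
              simp [P]
              rename_i hc
              exact Or.inr hc
            · simp at h
          · simp at h
            subst h
            simp [P]
        | true =>
          simp only [Mach] at hstep
          simp at hstep
          subst hstep
          simp [P] at ht ⊢
          rw [List.getElem?_append_left (by
            exact (List.getElem?_eq_some_iff.mp ht).1)]
          exact ht
    · -- completeness direction
      rintro hs
      rcases s with i | j | b
      · simp [P] at hs
        have hii := i.isLt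
        have hi1 : 1 ≤ i.val := by omega
        refine ⟨.inl ⟨i.val - 1, by omega⟩, ?_, ?_⟩
        · rw [ih]; simp [P]; omega
        · simp only [Mach]
          left
          have hii := i.isLt
          have : (⟨i.val - 1, by omega⟩ : Fin (n+1)).val < n := by
            simp; omega
          rw [dif_pos this]
          simp [Fin.ext_iff]
          omega
      · simp [P] at hs
        obtain ⟨p, hp, hor⟩ := hs
        by_cases hj : j.val = 0
        · -- jump transition: p = w.length
          have hpw : p = w.length := by omega
          subst hpw
          rcases hor with h | h
          · -- from q_{w.length}  (w.length ≤ n)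
            refine ⟨.inl ⟨w.length, by omega⟩, ?_, ?_⟩
            · rw [ih]; simp [P]
            · simp only [Mach]
              right
              simp [Fin.ext_iff, hj]
          · -- from W with c = false
            have hc : c = false := by
              rw [List.getElem?_append_right (by omega)] at h
              simpa using h
            refine ⟨.inr (.inr false), ?_, ?_⟩
            · rw [ih]; simp [P]
            · simp only [Mach, hc]
              left
              simp [Fin.ext_iff, hj]
        · -- from t_{j-1}
          refine ⟨.inr (.inl ⟨j.val - 1, by omega⟩), ?_, ?_⟩
          · rw [ih]
            simp [P]
            refine ⟨p, by omega, ?_⟩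
            rcases hor with h | h
            · exact Or.inl h
            · right
              rw [List.getElem?_append_left (by omega)] at h
              exact h
          · simp only [Mach]
            have hjj := j.isLt
            have : (⟨j.val - 1, by omega⟩ : Fin (n+1)).val < n := by simp; omega
            rw [dif_pos this]
            simp [Fin.ext_iff]
            omega
      · cases b with
        | false =>
          refine ⟨.inr (.inr false), ?_, ?_⟩
          · rw [ih]; simp [P]
          · simp only [Mach]; right; rfl
        | true =>
          simp [P] at hs
          by_cases hn : n < w.length
          · refine ⟨.inr (.inr true), ?_, ?_⟩
            · rw [ih]
              simp [P]
              rw [List.getElem?_append_left hn] at hs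
              exact hs
            · simp only [Mach]; rfl
          · -- n = w.length, c = false, from q_n
            have hlen : n = w.length := by
              have h' := (List.getElem?_eq_some_iff.mp hs).1
              simp at h'
              omega
            have hc : c = false := by
              rw [List.getElem?_append_right (by omega)] at hs
              simp [hlen] at hs
              exact hs
            refine ⟨.inl (Fin.last n), ?_, ?_⟩
            · rw [ih]; simp [P, Fin.last]; exact hlen
            · simp only [Mach]
              left
              rw [dif_neg (by simp)]
              simp [hc]

lemma accepts_char (w : List Bool) :
    w ∈ (Mach n).accepts ↔
      w.length ≤ n ∨
      (∃ p, p + n + 1 = w.length ∧ (p ≤ n ∨ w[p]? = some false)) ∨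
      w[n]? = some false := by
  rw [NFA.mem_accepts]
  constructor
  · rintro ⟨s, hacc, hev⟩
    have := (eval_char n w s).mp hev
    rcases hacc with ⟨i, rfl⟩ | rfl | rfl
    · simp [P] at this; left; omega
    · right; left; simpa [P, Fin.last] using this
    · simp [P] at this; right; right; exact this
  · rintro (h | ⟨p, hp, hor⟩ | h)
    · exact ⟨.inl ⟨w.length, by omega⟩, Or.inl ⟨_, rfl⟩,
        (eval_char n w _).mpr (by simp [P])⟩
    · exact ⟨.inr (.inl (Fin.last n)), Or.inr (Or.inl rfl),
        (eval_char n w _).mpr (by simp [P, Fin.last]; exact ⟨p, hp, hor⟩)⟩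
    · exact ⟨.inr (.inr true), Or.inr (Or.inr rfl),
        (eval_char n w _).mpr (by simp [P]; exact h)⟩

lemma mem_lang (w : List Bool) :
    w ∈ (lenLang Bool n * {[true]} * ⊤ * {[true]} * lenLang Bool n) ↔
      ∃ u v x : List Bool, u.length = n ∧ x.length = n ∧
        w = u ++ true :: v ++ true :: x := by
  constructor
  · rintro ⟨y, hy, x, hx, rfl⟩
    obtain ⟨z, hz, b, hb, rfl⟩ := hy
    obtain ⟨u', hu', v, -, rfl⟩ := hz
    obtain ⟨u, hu, a, ha, rfl⟩ := hu'
    have ha' : a = [true] := ha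
    have hb' : b = [true] := hb
    subst ha' hb'
    exact ⟨u, v, x, hu, hx, by simp⟩
  · rintro ⟨u, v, x, hu, hx, rfl⟩
    exact ⟨u ++ [true] ++ v ++ [true], ⟨u ++ [true] ++ v, ⟨u ++ [true], ⟨u, hu, [true], rfl, rfl⟩,
      v, trivial, rfl⟩, [true], rfl, rfl⟩, x, hx, by simp⟩

lemma lang_char (w : List Bool) :
    w ∈ (lenLang Bool n * {[true]} * ⊤ * {[true]} * lenLang Bool n) ↔
      2*n + 2 ≤ w.length ∧ w[n]? = some true ∧ w[w.length - n - 1]? = some true := by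
  rw [mem_lang]
  constructor
  · rintro ⟨u, v, x, hu, hx, rfl⟩
    refine ⟨by simp; omega, ?_, ?_⟩
    · rw [show (u ++ true :: v ++ true :: x : List Bool) = u ++ (true :: v ++ true :: x) by simp,
        List.getElem?_append_right (by omega)]
      simp [hu]
    · rw [show (u ++ true :: v ++ true :: x : List Bool) = (u ++ true :: v) ++ (true :: x) by simp]
      rw [List.getElem?_append_right (by simp; omega)]
      have : (u ++ true :: v ++ true :: x).length - n - 1 - (u ++ true :: v).length = 0 := by
        simp; omega
      rw [this]
      simp
  · rintro ⟨hlen, hn, hp⟩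
    have hn' : n < w.length := (List.getElem?_eq_some_iff.mp hn).1
    obtain ⟨h1, hnv⟩ := List.getElem?_eq_some_iff.mp hn
    set p := w.length - n - 1 with hpdef
    have hp' : p < w.length := by omega
    obtain ⟨h2, hpv⟩ := List.getElem?_eq_some_iff.mp hp
    refine ⟨w.take n, (w.drop (n+1)).take (p - n - 1), w.drop (p+1),
      by simp; omega, by simp; omega, ?_⟩
    have h1 : w = w.take n ++ true :: w.drop (n+1) := by
      conv_lhs => rw [← List.take_append_drop n w]
      congr 1
      rw [List.drop_eq_getElem_cons h1]
      simp [hnv]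
    have h2 : w.drop (n+1) = (w.drop (n+1)).take (p - n - 1) ++ true :: w.drop (p+1) := by
      conv_lhs => rw [← List.take_append_drop (p - n - 1) (w.drop (n+1))]
      congr 1
      have hd : (w.drop (n+1)).drop (p - n - 1) = w.drop p := by
        rw [List.drop_drop]; congr 1; omega
      rw [hd, List.drop_eq_getElem_cons h2]
      simp [hpv]
    conv_lhs => rw [h1, h2]
    simp

end SeqCompl

/-- Section 4.1 of the paper: for every `n` there is an NFA over the
two-letter alphabet `{a, b}` (modeled by `Bool`, with `a = true`) with at most
`2n + 4` states accepting the complement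
`{a, b}* ∖ ({a, b}ⁿ · {a} · {a, b}* · {a} · {a, b}ⁿ)`. -/
theorem exists_small_nfa_complement_seq_family (n : ℕ) :
    ∃ (σ : Type) (inst : Fintype σ) (M : NFA Bool σ),
      @Fintype.card σ inst ≤ 2 * n + 4 ∧
      M.accepts = (lenLang Bool n * {[true]} * ⊤ * {[true]} * lenLang Bool n)ᶜ := by
  refine ⟨SeqCompl.St n, inferInstance, SeqCompl.Mach n, by simp; omega, ?_⟩
  ext w
  rw [SeqCompl.accepts_char]
  change _ ↔ w ∉ (lenLang Bool n * {[true]} * ⊤ * {[true]} * lenLang Bool n : Language Bool)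
  rw [SeqCompl.lang_char]
  constructor
  · rintro (h | ⟨p, hp, hor⟩ | h) ⟨hlen, hn, hp2⟩
    · omega
    · have hpe : p = w.length - n - 1 := by omega
      rcases hor with h | h
      · omega
      · rw [hpe] at h; rw [h] at hp2; simp at hp2
    · rw [h] at hn; simp at hn
  · intro hB
    by_cases h0 : w.length ≤ n
    · exact Or.inl h0
    · push_neg at h0
      have hnget : w[n]? = some (w[n]'(by omega)) := List.getElem?_eq_getElem (by omega)
      by_cases hwn : w[n]'(by omega) = false
      · exact Or.inr (Or.inr (by rw [hnget, hwn]))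
      · have hwn' : w[n]? = some true := by
          rw [hnget]; simp only [Bool.not_eq_false] at hwn; rw [hwn]
        refine Or.inr (Or.inl ⟨w.length - n - 1, by omega, ?_⟩)
        by_cases hpn : w.length - n - 1 ≤ n
        · exact Or.inl hpn
        · right
          have hlen2 : 2*n+2 ≤ w.length := by omega
          have hpg : w[w.length - n - 1]? = some (w[w.length - n - 1]'(by omega)) :=
            List.getElem?_eq_getElem (by omega)
          rcases Bool.eq_false_or_eq_true (w[w.length - n - 1]'(by omega)) with h | h
          · exact absurd ⟨hlen2, hwn', by rw [hpg, h]⟩ hB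
          · rw [hpg, h]
end

section
/- Fix n ∈ ℕ and let L = {a, b}ⁿ · {a} · {a, b}* · {a} · {a, b}ⁿ over the two-letter alphabet {a, b}. Then every DFA whose language is {a, b}* ∖ L has at least 2^{n+1} states. -/
/-- A (possibly partial) DFA modeled as an NFA: a single initial state and at
most one `a`-successor of each state for each letter `a`. -/
def IsPartialDFA {α σ : Type*} (M : NFA α σ) : Prop :=
  (∃ q, M.start = {q}) ∧ ∀ q a, (M.step q a).Subsingleton

namespace DfaLowerBoundAux

/-- The fooling word for `u`: `true^{n+1} ++ u`. -/
def word (n : ℕ) (u : Fin (n + 1) → Bool) : List Bool :=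
  List.replicate (n + 1) true ++ List.ofFn u

abbrev Lang (n : ℕ) : Language Bool :=
  lenLang Bool n * {[true]} * ⊤ * {[true]} * lenLang Bool n

lemma length_word (n : ℕ) (u : Fin (n + 1) → Bool) : (word n u).length = 2 * n + 2 := by
  simp [word]; omega

/-- If `u j = true`, then `word n u ++ false^j ∈ L`. -/
lemma mem_of_true {n : ℕ} (u : Fin (n + 1) → Bool) (j : Fin (n + 1)) (hu : u j = true) :
    word n u ++ List.replicate (j : ℕ) false ∈ Lang n := by
  have hA : List.replicate n true ∈ lenLang Bool n := by
    show (List.replicate n true).length = n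
    simp
  have hB : [true] ∈ ({[true]} : Language Bool) := rfl
  have hC : (List.ofFn u).take (j : ℕ) ∈ (⊤ : Language Bool) := trivial
  have hD : [u j] ∈ ({[true]} : Language Bool) := by rw [hu]; rfl
  have hE : (List.ofFn u).drop ((j : ℕ) + 1) ++ List.replicate (j : ℕ) false
      ∈ lenLang Bool n := by
    have := j.isLt
    show (List.drop ((j : ℕ) + 1) (List.ofFn u) ++ List.replicate (j : ℕ) false).length = n
    simp only [List.length_append, List.length_drop, List.length_ofFn, List.length_replicate]
    omega
  have hm := Language.append_mem_mul (Language.append_mem_mul (Language.append_mem_mul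
    (Language.append_mem_mul hA hB) hC) hD) hE
  have hdecomp : (List.ofFn u).take (j : ℕ) ++ [u j] ++ (List.ofFn u).drop ((j : ℕ) + 1)
      = List.ofFn u := by
    have h1 : (List.ofFn u)[(j : ℕ)]'(by simp [j.isLt]) = u j := by
      rw [List.getElem_ofFn]
    rw [List.append_assoc, ← h1, List.singleton_append, List.getElem_cons_drop,
      List.take_append_drop]
  have heq : List.replicate n true ++ [true] ++ (List.ofFn u).take (j : ℕ) ++ [u j] ++
      ((List.ofFn u).drop ((j : ℕ) + 1) ++ List.replicate (j : ℕ) false)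
      = word n u ++ List.replicate (j : ℕ) false := by
    have h2 : List.replicate n true ++ [true] = List.replicate (n + 1) true :=
      (List.replicate_succ' ..).symm
    calc List.replicate n true ++ [true] ++ (List.ofFn u).take (j : ℕ) ++ [u j] ++
          ((List.ofFn u).drop ((j : ℕ) + 1) ++ List.replicate (j : ℕ) false)
        = (List.replicate n true ++ [true]) ++
          ((List.ofFn u).take (j : ℕ) ++ [u j] ++ (List.ofFn u).drop ((j : ℕ) + 1)) ++
          List.replicate (j : ℕ) false := by simp [List.append_assoc]
      _ = word n u ++ List.replicate (j : ℕ) false := by rw [h2, hdecomp]; rfl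
  rwa [heq] at hm

/-- Any word of `L` decomposes as `y ++ true :: t` with `t.length = n`. -/
lemma exists_suffix {n : ℕ} {w : List Bool} (h : w ∈ Lang n) :
    ∃ y t : List Bool, w = y ++ true :: t ∧ t.length = n := by
  rcases Language.mem_mul.mp h with ⟨x, hx, t, ht, hxt⟩
  rcases Language.mem_mul.mp hx with ⟨y, _, s, hs, hys⟩
  have hs' : s = [true] := hs
  refine ⟨y, t, ?_, ht⟩
  subst hs' hys hxt
  simp

/-- The letter at index `n + 1 + j` of `word n u ++ false^j` must be `true` if it is in `L`,
for `j ≤ n + 1`. -/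
lemma getElem_of_mem {n j : ℕ} (u : Fin (n + 1) → Bool) (hj : j ≤ n + 1)
    (h : word n u ++ List.replicate j false ∈ Lang n) :
    ((List.ofFn u ++ List.replicate j false)[j]'(by simp)) = true := by
  rcases exists_suffix h with ⟨y, t, hw, ht⟩
  have hlen : y.length = n + 1 + j := by
    have := congrArg List.length hw
    rw [List.length_append, length_word, List.length_replicate, List.length_append,
      List.length_cons, ht] at this
    omega
  have hw' : List.replicate (n + 1) true ++ (List.ofFn u ++ List.replicate j false)
      = y ++ true :: t := by
    rw [← List.append_assoc]
    exact hw
  have hb : n + 1 + j <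
      (List.replicate (n + 1) true ++ (List.ofFn u ++ List.replicate j false)).length := by
    simp only [List.length_append, List.length_replicate, List.length_ofFn]
    omega
  have h2 := List.getElem_of_eq hw' hb
  have h3 : (y ++ true :: t)[n + 1 + j]'(hw' ▸ hb) = true := by
    rw [List.getElem_append_right (by omega : y.length ≤ n + 1 + j)]
    simp [hlen]
  have h4 : (List.replicate (n + 1) true ++
      (List.ofFn u ++ List.replicate j false))[n + 1 + j]'hb
      = (List.ofFn u ++ List.replicate j false)[j]'(by simp) := by
    rw [List.getElem_append_right (by simp)]
    congr 1
    simp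
  rw [← h4, h2, h3]

lemma not_mem_of_false {n : ℕ} (u : Fin (n + 1) → Bool) (j : Fin (n + 1)) (hu : u j = false) :
    word n u ++ List.replicate (j : ℕ) false ∉ Lang n := by
  intro h
  have h1 := getElem_of_mem u (by omega : (j : ℕ) ≤ n + 1) h
  rw [List.getElem_append_left (by simp [j.isLt]), List.getElem_ofFn] at h1
  set_option linter.unnecessarySimpa false in rw [show (⟨(j : ℕ), by simpa using j.isLt⟩ : Fin (n + 1)) = j from Fin.ext rfl, hu] at h1
  exact Bool.false_ne_true h1

lemma not_mem_pad {n : ℕ} (u : Fin (n + 1) → Bool) :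
    word n u ++ List.replicate (n + 1) false ∉ Lang n := by
  intro h
  have := getElem_of_mem u le_rfl h
  rw [List.getElem_append_right (by simp)] at this
  simp at this

/-! ### NFA facts -/

lemma evalFrom_empty {α σ : Type*} (M : NFA α σ) (w : List α) :
    M.evalFrom ∅ w = ∅ := by
  induction w with
  | nil => rfl
  | cons a w ih =>
    show M.evalFrom (M.stepSet ∅ a) w = ∅
    rw [M.stepSet_empty, ih]

lemma evalFrom_subsingleton {α σ : Type*} (M : NFA α σ)
    (hM : ∀ q a, (M.step q a).Subsingleton) {S : Set σ} (hS : S.Subsingleton)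
    (w : List α) : (M.evalFrom S w).Subsingleton := by
  induction w generalizing S with
  | nil => exact hS
  | cons a w ih =>
    refine ih ?_
    intro x hx y hy
    rcases M.mem_stepSet.mp hx with ⟨s, hsS, hxs⟩
    rcases M.mem_stepSet.mp hy with ⟨s', hs'S, hys⟩
    have : s = s' := hS hsS hs'S
    subst this
    exact hM s a hxs hys

lemma evalFrom_mono {α σ : Type*} (M : NFA α σ) {S T : Set σ} (hST : S ⊆ T)
    (w : List α) : M.evalFrom S w ⊆ M.evalFrom T w := by
  induction w generalizing S T with
  | nil => exact hST
  | cons a w ih =>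
    refine ih ?_
    intro x hx
    rcases M.mem_stepSet.mp hx with ⟨s, hsS, hxs⟩
    exact M.mem_stepSet.mpr ⟨s, hST hsS, hxs⟩

lemma evalFrom_append {α σ : Type*} (M : NFA α σ) (S : Set σ) (x y : List α) :
    M.evalFrom S (x ++ y) = M.evalFrom (M.evalFrom S x) y :=
  List.foldl_append

end DfaLowerBoundAux

open DfaLowerBoundAux in
/-- The exponential blow-up claim of Section 4.1: every DFA for the complement
of `L = {a, b}ⁿ · {a} · {a, b}* · {a} · {a, b}ⁿ` has at least `2^(n+1)`
states.  The alphabet `{a, b}` is modeled by `Bool` with `a = true`. -/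
theorem dfa_complement_seq_family_lower_bound (n : ℕ) :
    ∀ (σ : Type) [Fintype σ] (M : NFA Bool σ), IsPartialDFA M →
      M.accepts = (lenLang Bool n * {[true]} * ⊤ * {[true]} * lenLang Bool n)ᶜ →
      2 ^ (n + 1) ≤ Fintype.card σ := by
  intro σ _ M hDFA hacc
  obtain ⟨⟨q₀, hq₀⟩, hstep⟩ := hDFA
  -- For each `u`, the padded word is accepted, so `M.eval (word n u)` is nonempty.
  have haccept : ∀ u : Fin (n + 1) → Bool,
      word n u ++ List.replicate (n + 1) false ∈ M.accepts := by
    intro u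
    rw [hacc]
    exact not_mem_pad u
  have hnonempty : ∀ u : Fin (n + 1) → Bool, (M.eval (word n u)).Nonempty := by
    intro u
    rcases haccept u with ⟨q, _, hq⟩
    rw [show M.eval (word n u ++ List.replicate (n + 1) false)
        = M.evalFrom (M.eval (word n u)) (List.replicate (n + 1) false) from
      evalFrom_append M M.start _ _] at hq
    by_contra hempty
    rw [Set.not_nonempty_iff_eq_empty] at hempty
    rw [hempty, evalFrom_empty] at hq
    exact hq
  choose f hf using hnonempty
  -- `M.eval w` is always a subsingleton.
  have hsub : ∀ w : List Bool, (M.eval w).Subsingleton := by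
    intro w
    refine evalFrom_subsingleton M hstep ?_ w
    rw [hq₀]
    exact Set.subsingleton_singleton
  -- Key: if `f u = f u'` then acceptance after any suffix coincides.
  have hkey : ∀ (u u' : Fin (n + 1) → Bool), f u = f u' → ∀ z : List Bool,
      word n u ++ z ∈ M.accepts → word n u' ++ z ∈ M.accepts := by
    intro u u' hff z hz
    rcases hz with ⟨q, hqacc, hq⟩
    rw [show M.eval (word n u ++ z) = M.evalFrom (M.eval (word n u)) z from
      evalFrom_append M M.start _ _] at hq
    refine ⟨q, hqacc, ?_⟩
    rw [show M.eval (word n u' ++ z) = M.evalFrom (M.eval (word n u')) z from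
      evalFrom_append M M.start _ _]
    have h1 : M.eval (word n u) ⊆ M.eval (word n u') := by
      intro x hx
      have : x = f u := hsub (word n u) hx (hf u)
      rw [this, hff]
      exact hf u'
    exact evalFrom_mono M h1 z hq
  -- `f` is injective.
  have hinj : Function.Injective f := by
    intro u u' hff
    by_contra hne
    rcases Function.ne_iff.mp hne with ⟨j, hj⟩
    -- wlog `u j = true`, `u' j = false`
    have main : ∀ v v' : Fin (n + 1) → Bool, f v = f v' → v j = true → v' j = false → False := by
      intro v v' hfv hvj hv'j
      have h1 : word n v ++ List.replicate (j : ℕ) false ∉ M.accepts := by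
        rw [hacc]
        exact fun hc => hc (mem_of_true v j hvj)
      have h2 : word n v' ++ List.replicate (j : ℕ) false ∈ M.accepts := by
        rw [hacc]
        exact not_mem_of_false v' j hv'j
      exact h1 (hkey v' v hfv.symm _ h2)
    cases hu : u j <;> cases hu' : u' j
    · exact hj (hu.trans hu'.symm)
    · exact main u' u hff.symm hu' hu
    · exact main u u' hff hu hu'
    · exact hj (hu.trans hu'.symm)
  calc 2 ^ (n + 1) = Fintype.card (Fin (n + 1) → Bool) := by simp
    _ ≤ Fintype.card σ := Fintype.card_le_of_injective f hinj
end

section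
/- For every n ∈ ℕ there exists an NFA over the three-letter alphabet {a, b, c} with exactly 2n + 4 states whose language is {a, b}* · {a} · {a, b}ⁿ · {c} · {a, b}ⁿ · {a} · {a, b}*. -/
/-- The language `{a, b}*` of words over the three-letter alphabet
`{a, b, c}` (modeled by `Fin 3` with `a = 0`, `b = 1`, `c = 2`) containing no
occurrence of `c`. -/
def abStar : Language (Fin 3) := {w | ∀ x ∈ w, x ≠ 2}

/-- The language `{a, b}ⁿ` of words of length `n` over `{a, b, c}` containing
no occurrence of `c`. -/
def abLen (n : ℕ) : Language (Fin 3) := {w | w.length = n ∧ ∀ x ∈ w, x ≠ 2}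

namespace GateAux

abbrev NoC (w : List (Fin 3)) : Prop := ∀ x ∈ w, x ≠ 2

def P (n q : ℕ) (x : Fin 3) (p : ℕ) : Prop :=
  (q = 0 ∧ x ≠ 2 ∧ p = 0) ∨ (q = 0 ∧ x = 0 ∧ p = 1) ∨
  (1 ≤ q ∧ q ≤ n ∧ x ≠ 2 ∧ p = q + 1) ∨
  (q = n + 1 ∧ x = 2 ∧ p = n + 2) ∨
  (n + 2 ≤ q ∧ q ≤ 2 * n + 1 ∧ x ≠ 2 ∧ p = q + 1) ∨
  (q = 2 * n + 2 ∧ x = 0 ∧ p = 2 * n + 3) ∨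
  (q = 2 * n + 3 ∧ x ≠ 2 ∧ p = 2 * n + 3)

def Phi (n : ℕ) (w : List (Fin 3)) (q : ℕ) : Prop :=
  (q = 0 ∧ NoC w) ∨
  (∃ u v, w = u ++ 0 :: v ∧ NoC u ∧ NoC v ∧ q = v.length + 1 ∧ q ≤ n + 1) ∨
  (∃ u v₁ v₂, w = u ++ 0 :: (v₁ ++ 2 :: v₂) ∧ NoC u ∧ NoC v₁ ∧ v₁.length = n ∧
     NoC v₂ ∧ q = v₂.length + n + 2 ∧ q ≤ 2 * n + 2) ∨
  (q = 2 * n + 3 ∧ ∃ u v₁ v₂ u', w = u ++ 0 :: (v₁ ++ 2 :: (v₂ ++ 0 :: u')) ∧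
     NoC u ∧ NoC v₁ ∧ v₁.length = n ∧ NoC v₂ ∧ v₂.length = n ∧ NoC u')

lemma phi_le {n : ℕ} {w : List (Fin 3)} {q : ℕ} (h : Phi n w q) : q ≤ 2 * n + 3 := by
  rcases h with ⟨h, -⟩ | ⟨u, v, -, -, -, h, h'⟩ | ⟨u, v₁, v₂, -, -, -, -, -, h, h'⟩ | ⟨h, -⟩ <;> omega

lemma noC_append {u v : List (Fin 3)} : NoC (u ++ v) ↔ NoC u ∧ NoC v := by
  simp only [NoC, List.mem_append]
  constructor
  · exact fun h => ⟨fun x hx => h x (Or.inl hx), fun x hx => h x (Or.inr hx)⟩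
  · rintro ⟨h1, h2⟩ x (hx | hx)
    exacts [h1 x hx, h2 x hx]

lemma noC_singleton {x : Fin 3} : NoC [x] ↔ x ≠ 2 := by simp [NoC]

lemma concat_eq {w u : List (Fin 3)} {x y : Fin 3} (h : w ++ [x] = u ++ [y]) :
    w = u ∧ x = y := by
  have := List.append_inj' h rfl
  simpa using this

lemma phi_step (n : ℕ) (w : List (Fin 3)) (x : Fin 3) (q : ℕ) :
    Phi n (w ++ [x]) q ↔ ∃ p, Phi n w p ∧ P n p x q := by
  constructor
  · intro h
    rcases h with ⟨hq, hw⟩ | ⟨u, v, he, hu, hv, hq, hle⟩ |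
      ⟨u, v₁, v₂, he, hu, hv₁, hl₁, hv₂, hq, hle⟩ |
      ⟨hq, u, v₁, v₂, u', he, hu, hv₁, hl₁, hv₂, hl₂, hu'⟩
    · -- q = 0
      rw [noC_append] at hw
      exact ⟨0, Or.inl ⟨rfl, hw.1⟩,
        Or.inl ⟨rfl, noC_singleton.mp hw.2, hq⟩⟩
    · -- middle: after the initial a, inside first block
      rcases v.eq_nil_or_concat with rfl | ⟨v', y, rfl⟩
      · obtain ⟨rfl, rfl⟩ := concat_eq he
        refine ⟨0, Or.inl ⟨rfl, hu⟩, Or.inr (Or.inl ⟨rfl, rfl, ?_⟩)⟩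
        simpa using hq
      · have he' : w ++ [x] = (u ++ 0 :: v') ++ [y] := by simpa using he
        obtain ⟨rfl, rfl⟩ := concat_eq he'
        rw [List.concat_eq_append] at hv hq
        rw [noC_append, noC_singleton] at hv
        refine ⟨v'.length + 1, Or.inr (Or.inl ⟨u, v', rfl, hu, hv.1, rfl, ?_⟩),
          Or.inr (Or.inr (Or.inl ⟨by omega, ?_, hv.2, ?_⟩))⟩ <;>
          simp at hq <;> omega
    · -- inside second block
      rcases v₂.eq_nil_or_concat with rfl | ⟨v', y, rfl⟩
      · have he' : w ++ [x] = (u ++ 0 :: v₁) ++ [2] := by simpa using he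
        obtain ⟨rfl, rfl⟩ := concat_eq he'
        refine ⟨n + 1, Or.inr (Or.inl ⟨u, v₁, rfl, hu, hv₁, by omega, by omega⟩),
          Or.inr (Or.inr (Or.inr (Or.inl ⟨rfl, rfl, ?_⟩)))⟩
        simp at hq; omega
      · have he' : w ++ [x] = (u ++ 0 :: (v₁ ++ 2 :: v')) ++ [y] := by
          simpa using he
        obtain ⟨rfl, rfl⟩ := concat_eq he'
        rw [List.concat_eq_append] at hv₂ hq
        rw [noC_append, noC_singleton] at hv₂
        refine ⟨v'.length + n + 2,
          Or.inr (Or.inr (Or.inl ⟨u, v₁, v', rfl, hu, hv₁, hl₁, hv₂.1, rfl, ?_⟩)),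
          Or.inr (Or.inr (Or.inr (Or.inr (Or.inl ⟨by omega, ?_, hv₂.2, ?_⟩))))⟩ <;>
          simp at hq <;> omega
    · -- last
      rcases u'.eq_nil_or_concat with rfl | ⟨u'', y, rfl⟩
      · have he' : w ++ [x] = (u ++ 0 :: (v₁ ++ 2 :: v₂)) ++ [0] := by simpa using he
        obtain ⟨rfl, rfl⟩ := concat_eq he'
        exact ⟨2 * n + 2,
          Or.inr (Or.inr (Or.inl ⟨u, v₁, v₂, rfl, hu, hv₁, hl₁, hv₂, by omega, by omega⟩)),
          Or.inr (Or.inr (Or.inr (Or.inr (Or.inr (Or.inl ⟨rfl, rfl, hq⟩)))))⟩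
      · have he' : w ++ [x] = (u ++ 0 :: (v₁ ++ 2 :: (v₂ ++ 0 :: u''))) ++ [y] := by
          simpa using he
        obtain ⟨rfl, rfl⟩ := concat_eq he'
        rw [List.concat_eq_append] at hu'
        rw [noC_append, noC_singleton] at hu'
        exact ⟨2 * n + 3,
          Or.inr (Or.inr (Or.inr ⟨rfl, u, v₁, v₂, u'', rfl, hu, hv₁, hl₁, hv₂, hl₂, hu'.1⟩)),
          Or.inr (Or.inr (Or.inr (Or.inr (Or.inr (Or.inr ⟨rfl, hu'.2, hq⟩)))))⟩
  · rintro ⟨p, hw, hP⟩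
    rcases hP with ⟨hp, hx, hq⟩ | ⟨hp, hx, hq⟩ | ⟨h1, h2, hx, hq⟩ | ⟨hp, hx, hq⟩ |
      ⟨h1, h2, hx, hq⟩ | ⟨hp, hx, hq⟩ | ⟨hp, hx, hq⟩
    · -- stay in 0
      subst hp hq
      rcases hw with ⟨-, hw⟩ | ⟨u, v, -, -, -, h, -⟩ | ⟨u, v₁, v₂, -, -, -, -, -, h, -⟩ |
        ⟨h, -⟩ <;> try omega
      exact Or.inl ⟨rfl, noC_append.mpr ⟨hw, noC_singleton.mpr hx⟩⟩
    · -- 0 → 1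
      subst hp hx hq
      rcases hw with ⟨-, hw⟩ | ⟨u, v, -, -, -, h, -⟩ | ⟨u, v₁, v₂, -, -, -, -, -, h, -⟩ |
        ⟨h, -⟩ <;> try omega
      exact Or.inr (Or.inl ⟨w, [], rfl, hw, by simp [NoC], by simp, by omega⟩)
    · -- first block advance
      subst hq
      rcases hw with ⟨h, -⟩ | ⟨u, v, rfl, hu, hv, rfl, -⟩ |
        ⟨u, v₁, v₂, -, -, -, -, -, h, -⟩ | ⟨h, -⟩ <;> try omega
      refine Or.inr (Or.inl ⟨u, v ++ [x], by simp, hu,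
        noC_append.mpr ⟨hv, noC_singleton.mpr hx⟩, by simp, by simp; omega⟩)
    · -- read c
      subst hp hx hq
      rcases hw with ⟨h, -⟩ | ⟨u, v, rfl, hu, hv, hl, -⟩ |
        ⟨u, v₁, v₂, -, -, -, -, -, h, h'⟩ | ⟨h, -⟩ <;> try omega
      refine Or.inr (Or.inr (Or.inl ⟨u, v, [], by simp, hu, hv, by omega,
        by simp [NoC], by simp, by omega⟩))
    · -- second block advance
      subst hq
      rcases hw with ⟨h, -⟩ | ⟨u, v, -, -, -, h, h'⟩ |
        ⟨u, v₁, v₂, rfl, hu, hv₁, hl₁, hv₂, rfl, -⟩ | ⟨h, -⟩ <;> try omega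
      refine Or.inr (Or.inr (Or.inl ⟨u, v₁, v₂ ++ [x], by simp, hu, hv₁, hl₁,
        noC_append.mpr ⟨hv₂, noC_singleton.mpr hx⟩, by simp; omega, by simp; omega⟩))
    · -- final a
      subst hp hx hq
      rcases hw with ⟨h, -⟩ | ⟨u, v, -, -, -, h, h'⟩ |
        ⟨u, v₁, v₂, rfl, hu, hv₁, hl₁, hv₂, hl₂, -⟩ | ⟨h, -⟩ <;> try omega
      refine Or.inr (Or.inr (Or.inr ⟨rfl, u, v₁, v₂, [], by simp, hu, hv₁, hl₁, hv₂,
        by omega, by simp [NoC]⟩))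
    · -- stay accepting
      subst hp hq
      rcases hw with ⟨h, -⟩ | ⟨u, v, -, -, -, h, h'⟩ |
        ⟨u, v₁, v₂, -, -, -, -, -, h, h'⟩ |
        ⟨-, u, v₁, v₂, u', rfl, hu, hv₁, hl₁, hv₂, hl₂, hu'⟩ <;> try omega
      exact Or.inr (Or.inr (Or.inr ⟨rfl, u, v₁, v₂, u' ++ [x], by simp, hu, hv₁, hl₁, hv₂,
        hl₂, noC_append.mpr ⟨hu', noC_singleton.mpr hx⟩⟩))

end GateAux



namespace GateAux

lemma phi_nil {n q : ℕ} : Phi n [] q ↔ q = 0 := by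
  constructor
  · rintro (⟨h, -⟩ | ⟨u, v, h, -⟩ | ⟨u, v₁, v₂, h, -⟩ | ⟨-, u, v₁, v₂, u', h, -⟩) <;>
      first | exact h | exact absurd h (by simp)
  · rintro rfl
    exact Or.inl ⟨rfl, by simp [NoC]⟩

def M (n : ℕ) : NFA (Fin 3) (Fin (2 * n + 4)) where
  step q x := {p | P n q.val x p.val}
  start := {q | q.val = 0}
  accept := {q | q.val = 2 * n + 3}

lemma eval_spec (n : ℕ) (w : List (Fin 3)) :
    ∀ q : Fin (2 * n + 4), q ∈ (M n).evalFrom (M n).start w ↔ Phi n w q.val := by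
  induction w using List.reverseRecOn with
  | nil =>
    intro q
    show q ∈ (M n).start ↔ _
    rw [phi_nil]
    exact Iff.rfl
  | append_singleton w x ih =>
    intro q
    rw [NFA.evalFrom_append, NFA.evalFrom_singleton, NFA.mem_stepSet, phi_step]
    constructor
    · rintro ⟨t, ht, hq⟩
      exact ⟨t.val, (ih t).mp ht, hq⟩
    · rintro ⟨p, hp, hP⟩
      have hle : p ≤ 2 * n + 3 := phi_le hp
      exact ⟨⟨p, by omega⟩, (ih _).mpr hp, hP⟩

lemma accepts_spec (n : ℕ) (w : List (Fin 3)) :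
    w ∈ (M n).accepts ↔ Phi n w (2 * n + 3) := by
  rw [NFA.mem_accepts]
  constructor
  · rintro ⟨q, hq, hev⟩
    have := (eval_spec n w q).mp hev
    rwa [hq] at this
  · intro h
    exact ⟨⟨2 * n + 3, by omega⟩, rfl, (eval_spec n w _).mpr h⟩

lemma phi_final (n : ℕ) (w : List (Fin 3)) :
    Phi n w (2 * n + 3) ↔
      ∃ u v₁ v₂ u', w = u ++ 0 :: (v₁ ++ 2 :: (v₂ ++ 0 :: u')) ∧
        NoC u ∧ NoC v₁ ∧ v₁.length = n ∧ NoC v₂ ∧ v₂.length = n ∧ NoC u' := by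
  constructor
  · rintro (⟨h, -⟩ | ⟨u, v, -, -, -, h, h'⟩ | ⟨u, v₁, v₂, -, -, -, -, -, h, h'⟩ | ⟨-, h⟩) <;>
      first | omega | exact h
  · intro h
    exact Or.inr (Or.inr (Or.inr ⟨rfl, h⟩))

lemma lang_iff (n : ℕ) (w : List (Fin 3)) :
    w ∈ abStar * {[0]} * abLen n * {[2]} * abLen n * {[0]} * abStar ↔
      ∃ u v₁ v₂ u', w = u ++ 0 :: (v₁ ++ 2 :: (v₂ ++ 0 :: u')) ∧
        NoC u ∧ NoC v₁ ∧ v₁.length = n ∧ NoC v₂ ∧ v₂.length = n ∧ NoC u' := by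
  simp only [Language.mem_mul, Set.mem_singleton_iff, Set.mem_setOf_eq]
  constructor
  · rintro ⟨a6, ⟨a5, ⟨a4, ⟨a3, ⟨a2, ⟨u, hu, _, rfl, rfl⟩, v₁, ⟨hl₁, hv₁⟩, rfl⟩,
      _, rfl, rfl⟩, v₂, ⟨hl₂, hv₂⟩, rfl⟩, _, rfl, rfl⟩, u', hu', rfl⟩
    exact ⟨u, v₁, v₂, u', by simp, hu, hv₁, hl₁, hv₂, hl₂, hu'⟩
  · rintro ⟨u, v₁, v₂, u', rfl, hu, hv₁, hl₁, hv₂, hl₂, hu'⟩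
    exact ⟨((((u ++ [0]) ++ v₁) ++ [2]) ++ v₂) ++ [0],
      ⟨(((u ++ [0]) ++ v₁) ++ [2]) ++ v₂, ⟨((u ++ [0]) ++ v₁) ++ [2],
        ⟨(u ++ [0]) ++ v₁, ⟨u ++ [0], ⟨u, hu, [0], rfl, rfl⟩, v₁, ⟨hl₁, hv₁⟩, rfl⟩,
          [2], rfl, rfl⟩, v₂, ⟨hl₂, hv₂⟩, rfl⟩, [0], rfl, rfl⟩, u', hu', by simp⟩

end GateAux


/-- The gate family of Section 4.2: for every `n` there is an NFA over the
three-letter alphabet `{a, b, c}` (modeled by `Fin 3` with `a = 0`, `b = 1`,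
`c = 2`) with exactly `2n + 4` states accepting
`{a, b}* · {a} · {a, b}ⁿ · {c} · {a, b}ⁿ · {a} · {a, b}*`. -/
theorem exists_nfa_gate_family (n : ℕ) :
    ∃ M : NFA (Fin 3) (Fin (2 * n + 4)),
      M.accepts = abStar * {[0]} * abLen n * {[2]} * abLen n * {[0]} * abStar := by
  refine ⟨GateAux.M n, ?_⟩
  ext w
  rw [GateAux.accepts_spec, GateAux.phi_final, GateAux.lang_iff]
end

section
/- For every n ∈ ℕ there exists an NFA over the three-letter alphabet {a, b, c} with at most 2n + 7 states whose language is the complement {a, b, c}* ∖ ({a, b}* · {a} · {a, b}ⁿ · {c} · {a, b}ⁿ · {a} · {a, b}*). -/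
namespace GateNFA

def GateL (n : ℕ) : Language (Fin 3) :=
  abStar * {[0]} * abLen n * {[2]} * abLen n * {[0]} * abStar

lemma mem_gateL {n : ℕ} {w : List (Fin 3)} :
    w ∈ GateL n ↔ ∃ u x y v : List (Fin 3),
      (2:Fin 3) ∉ u ∧ (2:Fin 3) ∉ x ∧ x.length = n ∧ (2:Fin 3) ∉ y ∧ y.length = n ∧
      (2:Fin 3) ∉ v ∧ w = u ++ 0 :: (x ++ 2 :: (y ++ 0 :: v)) := by
  constructor
  · rintro h
    obtain ⟨a6, h6, v, hv, rfl⟩ := Language.mem_mul.1 h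
    obtain ⟨a5, h5, z1, hz1, rfl⟩ := Language.mem_mul.1 h6
    obtain ⟨a4, h4, y, hy, rfl⟩ := Language.mem_mul.1 h5
    obtain ⟨a3, h3, z2, hz2, rfl⟩ := Language.mem_mul.1 h4
    obtain ⟨a2, h2, x, hx, rfl⟩ := Language.mem_mul.1 h3
    obtain ⟨u, hu, z3, hz3, rfl⟩ := Language.mem_mul.1 h2
    change z1 = [0] at hz1; change z2 = [2] at hz2; change z3 = [0] at hz3
    subst hz1; subst hz2; subst hz3
    obtain ⟨hxl, hx2⟩ := hx
    obtain ⟨hyl, hy2⟩ := hy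
    refine ⟨u, x, y, v, fun h => hu 2 h rfl, fun h => hx2 2 h rfl, hxl,
      fun h => hy2 2 h rfl, hyl, fun h => hv 2 h rfl, by simp⟩
  · rintro ⟨u, x, y, v, hu, hx, hxl, hy, hyl, hv, rfl⟩
    have e : u ++ 0 :: (x ++ 2 :: (y ++ 0 :: v))
        = (((((u ++ [0]) ++ x) ++ [2]) ++ y) ++ [0]) ++ v := by simp
    rw [e]
    refine Language.append_mem_mul (Language.append_mem_mul (Language.append_mem_mul
      (Language.append_mem_mul (Language.append_mem_mul (Language.append_mem_mul
      ?_ rfl) ?_) rfl) ?_) rfl) ?_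
    · exact fun z hz hz2 => hu (hz2 ▸ hz)
    · exact ⟨hxl, fun z hz hz2 => hx (hz2 ▸ hz)⟩
    · exact ⟨hyl, fun z hz hz2 => hy (hz2 ▸ hz)⟩
    · exact fun z hz hz2 => hv (hz2 ▸ hz)

lemma count_eq_one {n : ℕ} {w : List (Fin 3)} (h : w ∈ GateL n) : w.count 2 = 1 := by
  obtain ⟨u, x, y, v, hu, hx, _, hy, _, hv, rfl⟩ := mem_gateL.1 h
  simp [List.count_append, List.count_cons, List.count_eq_zero.2 hu,
    List.count_eq_zero.2 hx, List.count_eq_zero.2 hy, List.count_eq_zero.2 hv]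

lemma factor_eq : ∀ (u A t B : List (Fin 3)), u ++ 2 :: t = A ++ 2 :: B →
    (2:Fin 3) ∉ u → (2:Fin 3) ∉ A → u = A ∧ t = B := by
  intro u
  induction u with
  | nil =>
    intro A t B h hu hA
    cases A with
    | nil => simpa using h
    | cons a A' =>
      simp only [List.nil_append, List.cons_append, List.cons.injEq] at h
      exact absurd (h.1 ▸ (List.mem_cons_self (a := a) (l := A'))) hA
  | cons a u' ih =>
    intro A t B h hu hA
    cases A with
    | nil =>
      simp only [List.nil_append, List.cons_append, List.cons.injEq] at h
      exact absurd (h.1 ▸ (List.mem_cons_self (a := a) (l := u'))) hu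
    | cons b A' =>
      simp only [List.cons_append, List.cons.injEq] at h
      obtain ⟨rfl, h2⟩ := h
      obtain ⟨h3, h4⟩ := ih A' t B h2 (fun hm => hu (List.mem_cons_of_mem _ hm))
        (fun hm => hA (List.mem_cons_of_mem _ hm))
      exact ⟨by rw [h3], h4⟩


lemma not_gate_of_mem_two {n : ℕ} {w rest : List (Fin 3)} (h2 : (2:Fin 3) ∈ w) :
    w ++ 2 :: rest ∉ GateL n := by
  intro h
  have hc := count_eq_one h
  have hw : 0 < w.count 2 := List.count_pos_iff.2 h2
  simp [List.count_append, List.count_cons] at hc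
  omega

lemma not_gate_early {n : ℕ} {w rest : List (Fin 3)} (hlen : w.length ≤ n) :
    w ++ 2 :: rest ∉ GateL n := by
  intro h
  by_cases h2 : (2:Fin 3) ∈ w
  · exact not_gate_of_mem_two h2 h
  obtain ⟨u, x, y, v, hu, hx, hxl, hy, hyl, hv, he⟩ := mem_gateL.1 h
  have he' : w ++ 2 :: rest = (u ++ 0 :: x) ++ 2 :: (y ++ 0 :: v) := by rw [he]; simp
  have hA2 : (2:Fin 3) ∉ u ++ 0 :: x := by
    simp only [List.mem_append, List.mem_cons]
    rintro (h' | h' | h') <;> first | exact hu h' | exact hx h' | simp at h'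
  obtain ⟨hwA, -⟩ := factor_eq _ _ _ _ he' h2 hA2
  have := congrArg List.length hwA
  simp [hxl] at this
  omega

lemma not_gate_markOne {n : ℕ} {u t rest : List (Fin 3)} (ht : t.length = n) :
    (u ++ 1 :: t) ++ 2 :: rest ∉ GateL n := by
  intro h
  by_cases h2 : (2:Fin 3) ∈ u ++ 1 :: t
  · exact not_gate_of_mem_two h2 h
  obtain ⟨u', x, y, v, hu', hx, hxl, hy, hyl, hv, he⟩ := mem_gateL.1 h
  have he' : (u ++ 1 :: t) ++ 2 :: rest = (u' ++ 0 :: x) ++ 2 :: (y ++ 0 :: v) := by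
    rw [he]; simp
  have hA2 : (2:Fin 3) ∉ u' ++ 0 :: x := by
    simp only [List.mem_append, List.mem_cons]
    rintro (h' | h' | h') <;> first | exact hu' h' | exact hx h' | simp at h'
  obtain ⟨hwA, -⟩ := factor_eq _ _ _ _ he' h2 hA2
  have hlu : u.length = u'.length := by
    have := congrArg List.length hwA
    simp [hxl, ht] at this
    omega
  obtain ⟨-, h1⟩ := List.append_inj hwA hlu
  simp at h1

lemma not_gate_after {n : ℕ} {u t rest : List (Fin 3)} (ht : t.length = n) :
    (u ++ 2 :: t) ++ 1 :: rest ∉ GateL n := by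
  intro h
  by_cases h2 : (2:Fin 3) ∈ u
  · have : (u ++ 2 :: t) ++ 1 :: rest = u ++ 2 :: (t ++ 1 :: rest) := by simp
    rw [this] at h
    exact not_gate_of_mem_two h2 h
  obtain ⟨u', x, y, v, hu', hx, hxl, hy, hyl, hv, he⟩ := mem_gateL.1 h
  have he' : u ++ 2 :: (t ++ 1 :: rest) = (u' ++ 0 :: x) ++ 2 :: (y ++ 0 :: v) := by
    rw [show u ++ 2 :: (t ++ 1 :: rest) = (u ++ 2 :: t) ++ 1 :: rest by simp, he]; simp
  have hA2 : (2:Fin 3) ∉ u' ++ 0 :: x := by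
    simp only [List.mem_append, List.mem_cons]
    rintro (h' | h' | h') <;> first | exact hu' h' | exact hx h' | simp at h'
  obtain ⟨-, hB⟩ := factor_eq _ _ _ _ he' h2 hA2
  have hly : t.length = y.length := by rw [ht, hyl]
  obtain ⟨-, h1⟩ := List.append_inj hB hly
  simp at h1

lemma not_gate_short {n : ℕ} {u t : List (Fin 3)} (ht : t.length ≤ n) :
    u ++ 2 :: t ∉ GateL n := by
  intro h
  by_cases h2 : (2:Fin 3) ∈ u
  · exact not_gate_of_mem_two h2 h
  obtain ⟨u', x, y, v, hu', hx, hxl, hy, hyl, hv, he⟩ := mem_gateL.1 h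
  have he' : u ++ 2 :: t = (u' ++ 0 :: x) ++ 2 :: (y ++ 0 :: v) := by rw [he]; simp
  have hA2 : (2:Fin 3) ∉ u' ++ 0 :: x := by
    simp only [List.mem_append, List.mem_cons]
    rintro (h' | h' | h') <;> first | exact hu' h' | exact hx h' | simp at h'
  obtain ⟨-, hB⟩ := factor_eq _ _ _ _ he' h2 hA2
  have := congrArg List.length hB
  simp [hyl] at this
  omega


section helpers
variable {α σ : Type*} (M : NFA α σ)

lemma stepSet_singleton (s : σ) (a : α) : M.stepSet {s} a = M.step s a := by
  simp [NFA.stepSet]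

lemma evalFrom_cons (S : Set σ) (a : α) (w : List α) :
    M.evalFrom S (a :: w) = M.evalFrom (M.stepSet S a) w := rfl

lemma evalFrom_mono {S T : Set σ} (h : S ⊆ T) :
    ∀ w, M.evalFrom S w ⊆ M.evalFrom T w := by
  intro w
  induction w generalizing S T with
  | nil => simpa
  | cons a w ih =>
    rw [evalFrom_cons, evalFrom_cons]
    refine ih ?_
    intro s hs
    rw [NFA.mem_stepSet] at hs ⊢
    obtain ⟨t, ht, hst⟩ := hs
    exact ⟨t, h ht, hst⟩

lemma evalFrom_append (S : Set σ) (x y : List α) :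
    M.evalFrom S (x ++ y) = M.evalFrom (M.evalFrom S x) y := by
  simp [NFA.evalFrom, List.foldl_append]

lemma eval_trans {S : Set σ} {s t : σ} {x y : List α}
    (h1 : s ∈ M.evalFrom S x) (h2 : t ∈ M.evalFrom {s} y) :
    t ∈ M.evalFrom S (x ++ y) := by
  rw [evalFrom_append]
  exact evalFrom_mono M (Set.singleton_subset_iff.2 h1) y h2

lemma loop {q : σ} {w : List α} (h : ∀ a ∈ w, q ∈ M.step q a) :
    q ∈ M.evalFrom {q} w := by
  induction w with
  | nil => exact rfl
  | cons a w ih =>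
    rw [evalFrom_cons]
    refine evalFrom_mono M (Set.singleton_subset_iff.2 ?_) w
      (ih fun b hb => h b (List.mem_cons_of_mem _ hb))
    rw [stepSet_singleton]
    exact h a (List.mem_cons_self)

lemma single_step {s t : σ} {a : α} (h : t ∈ M.step s a) :
    t ∈ M.evalFrom {s} [a] := by
  show t ∈ M.stepSet {s} a
  rw [stepSet_singleton]
  exact h

end helpers

abbrev St (n : ℕ) := Fin 4 ⊕ (Fin (n+1) ⊕ Fin (n+1))

variable {n : ℕ}

def q0 (n : ℕ) : St n := Sum.inl ⟨0, by omega⟩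
def q1 (n : ℕ) : St n := Sum.inl ⟨1, by omega⟩
def qS (n : ℕ) : St n := Sum.inl ⟨2, by omega⟩
def qA (n : ℕ) : St n := Sum.inl ⟨3, by omega⟩
def qg (n : ℕ) (j : Fin (n+1)) : St n := Sum.inr (Sum.inl j)
def qh (n : ℕ) (j : Fin (n+1)) : St n := Sum.inr (Sum.inr j)

def stepF (n : ℕ) : St n → Fin 3 → Set (St n)
  | Sum.inl ⟨0, _⟩, a => if a = 2 then {q1 n} else {q0 n}
  | Sum.inl ⟨1, _⟩, a => if a = 2 then {qA n} else {q1 n}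
  | Sum.inl ⟨2, _⟩, a =>
      if a = 1 then {qS n, qg n (Fin.last n)}
      else if a = 2 then {qS n, qh n (Fin.last n)}
      else {qS n}
  | Sum.inl ⟨_+3, _⟩, _ => {qA n}
  | Sum.inr (Sum.inl ⟨0, _⟩), a => if a = 2 then {qA n} else ∅
  | Sum.inr (Sum.inl ⟨j+1, h⟩), _ => {qg n ⟨j, by omega⟩}
  | Sum.inr (Sum.inr ⟨0, _⟩), a => if a = 1 then {qA n} else ∅
  | Sum.inr (Sum.inr ⟨j+1, h⟩), _ => {qh n ⟨j, by omega⟩}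

def M (n : ℕ) : NFA (Fin 3) (St n) where
  step := stepF n
  start := {q0 n, qS n} ∪ Set.range (qg n)
  accept := {q0 n, qA n} ∪ Set.range (qh n)

lemma step_q0 (a : Fin 3) {h} :
    (M n).step (Sum.inl ⟨0, h⟩) a = if a = 2 then {q1 n} else {q0 n} := rfl
lemma step_q1 (a : Fin 3) {h} :
    (M n).step (Sum.inl ⟨1, h⟩) a = if a = 2 then {qA n} else {q1 n} := rfl
lemma step_qS (a : Fin 3) {h} :
    (M n).step (Sum.inl ⟨2, h⟩) a =
      if a = 1 then {qS n, qg n (Fin.last n)}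
      else if a = 2 then {qS n, qh n (Fin.last n)}
      else {qS n} := rfl
lemma step_qA (a : Fin 3) {k h} :
    (M n).step (Sum.inl ⟨k+3, h⟩) a = {qA n} := rfl
lemma step_qg0 (a : Fin 3) {h} :
    (M n).step (Sum.inr (Sum.inl ⟨0, h⟩)) a = if a = 2 then {qA n} else ∅ := rfl
lemma step_qgS (a : Fin 3) {j : ℕ} {h} :
    (M n).step (Sum.inr (Sum.inl ⟨j+1, h⟩)) a = {qg n ⟨j, by omega⟩} := rfl
lemma step_qh0 (a : Fin 3) {h} :
    (M n).step (Sum.inr (Sum.inr ⟨0, h⟩)) a = if a = 1 then {qA n} else ∅ := rfl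
lemma step_qhS (a : Fin 3) {j : ℕ} {h} :
    (M n).step (Sum.inr (Sum.inr ⟨j+1, h⟩)) a = {qh n ⟨j, by omega⟩} := rfl

lemma step_qg_succ (a : Fin 3) {j : ℕ} {h} :
    (M n).step (qg n ⟨j+1, h⟩) a = {qg n ⟨j, by omega⟩} := rfl
lemma step_qh_succ (a : Fin 3) {j : ℕ} {h} :
    (M n).step (qh n ⟨j+1, h⟩) a = {qh n ⟨j, by omega⟩} := rfl

lemma g_run (n : ℕ) (k : ℕ) : ∀ (w : List (Fin 3)), w.length + k ≤ n →
    ∀ (h1 : k < n + 1) (h2 : w.length + k < n + 1),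
    qg n ⟨k, h1⟩ ∈ (M n).evalFrom {qg n ⟨w.length + k, h2⟩} w := by
  intro w
  induction w with
  | nil => intro _ h1 h2; simp
  | cons a w ih =>
    intro hk h1 h2
    rw [evalFrom_cons, stepSet_singleton]
    have h2' : (w.length + k) + 1 < n + 1 := by have := h2; simp at this; omega
    have e : (⟨(a :: w).length + k, h2⟩ : Fin (n+1)) = ⟨(w.length + k) + 1, h2'⟩ := by
      simp; omega
    rw [e, step_qg_succ]
    refine ih ?_ h1 (by omega)
    have := hk; simp at this; omega

lemma h_run (n : ℕ) (k : ℕ) : ∀ (w : List (Fin 3)), w.length + k ≤ n →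
    ∀ (h1 : k < n + 1) (h2 : w.length + k < n + 1),
    qh n ⟨k, h1⟩ ∈ (M n).evalFrom {qh n ⟨w.length + k, h2⟩} w := by
  intro w
  induction w with
  | nil => intro _ h1 h2; simp
  | cons a w ih =>
    intro hk h1 h2
    rw [evalFrom_cons, stepSet_singleton]
    have h2' : (w.length + k) + 1 < n + 1 := by have := h2; simp at this; omega
    have e : (⟨(a :: w).length + k, h2⟩ : Fin (n+1)) = ⟨(w.length + k) + 1, h2'⟩ := by
      simp; omega
    rw [e, step_qh_succ]
    refine ih ?_ h1 (by omega)
    have := hk; simp at this; omega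


lemma step_q3 (a : Fin 3) {h} : (M n).step (Sum.inl ⟨3, h⟩) a = {qA n} := rfl
lemma stepn_q0 (a : Fin 3) : (M n).step (q0 n) a = if a = 2 then {q1 n} else {q0 n} := rfl
lemma stepn_q1 (a : Fin 3) : (M n).step (q1 n) a = if a = 2 then {qA n} else {q1 n} := rfl
lemma stepn_qS (a : Fin 3) :
    (M n).step (qS n) a =
      if a = 1 then {qS n, qg n (Fin.last n)}
      else if a = 2 then {qS n, qh n (Fin.last n)}
      else {qS n} := rfl
lemma stepn_qA (a : Fin 3) : (M n).step (qA n) a = {qA n} := rfl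
lemma stepn_qg0 (a : Fin 3) {h} :
    (M n).step (qg n ⟨0, h⟩) a = if a = 2 then {qA n} else ∅ := rfl
lemma stepn_qh0 (a : Fin 3) {h} :
    (M n).step (qh n ⟨0, h⟩) a = if a = 1 then {qA n} else ∅ := rfl

lemma g_run' (n k : ℕ) (w : List (Fin 3)) (j : Fin (n+1)) (hj : (j:ℕ) = w.length + k)
    (h1 : k < n+1) : qg n ⟨k, h1⟩ ∈ (M n).evalFrom {qg n j} w := by
  have hb : w.length + k < n + 1 := hj ▸ j.isLt
  have hje : j = ⟨w.length + k, hb⟩ := Fin.ext hj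
  rw [hje]
  exact g_run n k w (by omega) h1 hb

lemma h_run' (n k : ℕ) (w : List (Fin 3)) (j : Fin (n+1)) (hj : (j:ℕ) = w.length + k)
    (h1 : k < n+1) : qh n ⟨k, h1⟩ ∈ (M n).evalFrom {qh n j} w := by
  have hb : w.length + k < n + 1 := hj ▸ j.isLt
  have hje : j = ⟨w.length + k, hb⟩ := Fin.ext hj
  rw [hje]
  exact h_run n k w (by omega) h1 hb

def Inv (n : ℕ) : St n → List (Fin 3) → Prop
  | Sum.inl ⟨0, _⟩, w => (2:Fin 3) ∉ w
  | Sum.inl ⟨1, _⟩, w => (2:Fin 3) ∈ w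
  | Sum.inl ⟨2, _⟩, _ => True
  | Sum.inl ⟨_+3, _⟩, w => ∀ rest, w ++ rest ∉ GateL n
  | Sum.inr (Sum.inl j), w =>
      w.length + j.val ≤ n ∨ ∃ u t, w = u ++ 1 :: t ∧ t.length + j.val = n
  | Sum.inr (Sum.inr j), w => ∃ u t, w = u ++ 2 :: t ∧ t.length + j.val = n

lemma inv_of_eval (n : ℕ) : ∀ (w : List (Fin 3)), ∀ q ∈ (M n).eval w, Inv n q w := by
  intro w
  induction w using List.reverseRecOn with
  | nil =>
    intro q hq
    have hq' : q ∈ (M n).start := hq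
    simp only [M, Set.mem_union, Set.mem_insert_iff, Set.mem_singleton_iff,
      Set.mem_range] at hq'
    rcases hq' with (rfl | rfl) | ⟨j, rfl⟩
    · simp [Inv, q0]
    · simp [Inv, qS]
    · simp only [Inv, qg]
      left
      have := j.isLt
      simp
      omega
  | append_singleton w a ih =>
    intro q hq
    rw [NFA.eval_append_singleton, NFA.mem_stepSet] at hq
    obtain ⟨p, hp, hstep⟩ := hq
    have hinv := ih p hp
    rcases p with ⟨k, hk⟩ | ⟨jv, hj⟩ | ⟨jv, hj⟩
    · interval_cases k
      · -- q0
        simp only [Inv] at hinv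
        rw [step_q0] at hstep
        split_ifs at hstep with ha
        · rw [Set.mem_singleton_iff] at hstep; subst hstep
          simp only [Inv, q1]
          simp [ha]
        · rw [Set.mem_singleton_iff] at hstep; subst hstep
          simp only [Inv, q0, List.mem_append, List.mem_singleton]
          rintro (h | h)
          · exact hinv h
          · exact ha h.symm
      · -- q1
        simp only [Inv] at hinv
        rw [step_q1] at hstep
        split_ifs at hstep with ha
        · rw [Set.mem_singleton_iff] at hstep; subst hstep
          simp only [Inv, qA]
          intro rest hmem
          subst ha
          rw [show (w ++ [(2:Fin 3)]) ++ rest = w ++ 2 :: rest by simp] at hmem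
          exact not_gate_of_mem_two hinv hmem
        · rw [Set.mem_singleton_iff] at hstep; subst hstep
          simp only [Inv, q1, List.mem_append]
          exact Or.inl hinv
      · -- qS
        rw [step_qS] at hstep
        split_ifs at hstep with ha hb
        · simp only [Set.mem_insert_iff, Set.mem_singleton_iff] at hstep
          rcases hstep with rfl | rfl
          · simp [Inv, qS]
          · simp only [Inv, qg, Fin.val_last]
            right
            exact ⟨w, [], by simp [ha], by simp⟩
        · simp only [Set.mem_insert_iff, Set.mem_singleton_iff] at hstep
          rcases hstep with rfl | rfl
          · simp [Inv, qS]
          · simp only [Inv, qh, Fin.val_last]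
            exact ⟨w, [], by simp [hb], by simp⟩
        · rw [Set.mem_singleton_iff] at hstep; subst hstep
          simp [Inv, qS]
      · -- qA
        simp only [Inv] at hinv
        rw [step_q3] at hstep
        rw [Set.mem_singleton_iff] at hstep; subst hstep
        simp only [Inv, qA]
        intro rest
        rw [List.append_assoc]
        exact hinv _
    · -- g states
      match jv, hj with
      | 0, hj =>
        simp only [Inv] at hinv
        rw [step_qg0] at hstep
        split_ifs at hstep with ha
        · rw [Set.mem_singleton_iff] at hstep; subst hstep
          simp only [Inv, qA]
          intro rest hmem
          subst ha
          rcases hinv with hl | ⟨u, t, rfl, htl⟩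
          · rw [show (w ++ [(2:Fin 3)]) ++ rest = w ++ 2 :: rest by simp] at hmem
            exact not_gate_early (by omega) hmem
          · rw [show ((u ++ 1 :: t) ++ [(2:Fin 3)]) ++ rest = (u ++ 1 :: t) ++ 2 :: rest
              by simp] at hmem
            exact not_gate_markOne (by omega) hmem
        · exact absurd hstep (Set.notMem_empty q)
      | jv + 1, hj =>
        simp only [Inv] at hinv
        rw [step_qgS] at hstep
        rw [Set.mem_singleton_iff] at hstep; subst hstep
        simp only [Inv, qg]
        rcases hinv with hl | ⟨u, t, rfl, htl⟩
        · left; simp; omega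
        · right
          exact ⟨u, t ++ [a], by simp, by simp; omega⟩
    · -- h states
      match jv, hj with
      | 0, hj =>
        simp only [Inv] at hinv
        rw [step_qh0] at hstep
        split_ifs at hstep with ha
        · rw [Set.mem_singleton_iff] at hstep; subst hstep
          simp only [Inv, qA]
          intro rest hmem
          subst ha
          obtain ⟨u, t, rfl, htl⟩ := hinv
          rw [show ((u ++ 2 :: t) ++ [(1:Fin 3)]) ++ rest = (u ++ 2 :: t) ++ 1 :: rest
            by simp] at hmem
          exact not_gate_after (by omega) hmem
        · exact absurd hstep (Set.notMem_empty q)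
      | jv + 1, hj =>
        simp only [Inv] at hinv
        rw [step_qhS] at hstep
        rw [Set.mem_singleton_iff] at hstep; subst hstep
        simp only [Inv, qh]
        obtain ⟨u, t, rfl, htl⟩ := hinv
        exact ⟨u, t ++ [a], by simp, by simp; omega⟩


lemma accepts_subset (n : ℕ) : ∀ w ∈ (M n).accepts, w ∉ GateL n := by
  rintro w ⟨q, hacc, heval⟩ hw
  have hinv := inv_of_eval n w q heval
  simp only [M, Set.mem_union, Set.mem_insert_iff, Set.mem_singleton_iff,
    Set.mem_range] at hacc
  rcases hacc with (rfl | rfl) | ⟨j, rfl⟩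
  · simp only [Inv, q0] at hinv
    obtain ⟨u, x, y, v, hu, hx, hxl, hy, hyl, hv, rfl⟩ := mem_gateL.1 hw
    exact hinv (by simp)
  · simp only [Inv, qA] at hinv
    exact hinv [] (by simpa using hw)
  · simp only [Inv, qh] at hinv
    obtain ⟨u, t, rfl, htl⟩ := hinv
    exact not_gate_short (by omega) hw

lemma first_occ {a : Fin 3} : ∀ {w : List (Fin 3)}, a ∈ w →
    ∃ u t, w = u ++ a :: t ∧ a ∉ u := by
  intro w
  induction w with
  | nil => intro h; cases h
  | cons b w ih =>
    intro h
    by_cases hb : b = a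
    · exact ⟨[], w, by rw [hb]; simp, by simp⟩
    · have ha : a ∈ w := by
        rcases List.mem_cons.1 h with h' | h'
        · exact absurd h'.symm hb
        · exact h'
      obtain ⟨u, t, rfl, hu⟩ := ih ha
      refine ⟨b :: u, t, by simp, ?_⟩
      simp only [List.mem_cons, not_or]
      exact ⟨fun h' => hb h'.symm, hu⟩

lemma split_at_len {β : Type*} (l : List β) (k : ℕ) (h : k < l.length) :
    ∃ l1 b l2, l = l1 ++ b :: l2 ∧ l1.length = k := by
  refine ⟨l.take k, l[k], l.drop (k+1), ?_, by simp; omega⟩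
  conv_lhs => rw [← List.take_append_drop k l]
  rw [List.drop_eq_getElem_cons h]

lemma mem_accepts_of_not_gate (n : ℕ) (w : List (Fin 3)) (hw : w ∉ GateL n) :
    w ∈ (M n).accepts := by
  have hq0s : q0 n ∈ (M n).start := by simp [M]
  have hqSs : qS n ∈ (M n).start := by simp [M]
  have hq0a : q0 n ∈ (M n).accept := by simp [M]
  have hqAa : qA n ∈ (M n).accept := by simp [M]
  have hqha : ∀ j, qh n j ∈ (M n).accept := fun j => by
    right; exact ⟨j, rfl⟩
  have loopA : ∀ (x : List (Fin 3)), qA n ∈ (M n).evalFrom {qA n} x :=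
    fun x => loop _ (fun a _ => by rw [stepn_qA]; exact rfl)
  have loopS : ∀ (x : List (Fin 3)), qS n ∈ (M n).evalFrom {qS n} x :=
    fun x => loop _ (fun a _ => by rw [stepn_qS]; split_ifs <;> simp)
  rcases Nat.eq_zero_or_pos (w.count 2) with hc | hc
  · have h2 : (2:Fin 3) ∉ w := by rwa [← List.count_eq_zero]
    refine ⟨q0 n, hq0a, ?_⟩
    refine evalFrom_mono (M n) (Set.singleton_subset_iff.2 hq0s) w (loop _ ?_)
    intro a ha
    rw [stepn_q0, if_neg (fun e : a = 2 => h2 (e ▸ ha))]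
    exact rfl
  · have h2 : (2:Fin 3) ∈ w := by
      rw [← List.count_pos_iff]; omega
    obtain ⟨u, t, rfl, hu⟩ := first_occ h2
    by_cases hct : (2:Fin 3) ∈ t
    · obtain ⟨y, t', rfl, hy⟩ := first_occ hct
      refine ⟨qA n, hqAa, ?_⟩
      have m1 : q0 n ∈ (M n).evalFrom (M n).start u :=
        evalFrom_mono _ (Set.singleton_subset_iff.2 hq0s) u (loop _ (fun a ha => by
          rw [stepn_q0, if_neg (fun e : a = 2 => hu (e ▸ ha))]; exact rfl))
      have m2 := eval_trans _ m1 (single_step (M n) (s := q0 n) (a := 2)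
        (by rw [stepn_q0, if_pos rfl]; exact rfl))
      have m3 := eval_trans _ m2 (loop (M n) (q := q1 n) (w := y) (fun a ha => by
        rw [stepn_q1, if_neg (fun e : a = 2 => hy (e ▸ ha))]; exact rfl))
      have m4 := eval_trans _ m3 (single_step (M n) (s := q1 n) (a := 2)
        (by rw [stepn_q1, if_pos rfl]; exact rfl))
      have m5 := eval_trans _ m4 (loopA t')
      rwa [show (((u ++ [2]) ++ y) ++ [2]) ++ t' = u ++ 2 :: (y ++ 2 :: t') by simp] at m5
    · by_cases hul : u.length ≤ n
      · refine ⟨qA n, hqAa, ?_⟩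
        have hstart : qg n ⟨u.length, by omega⟩ ∈ (M n).start := by
          right; exact ⟨_, rfl⟩
        have m1 : qg n ⟨0, by omega⟩ ∈ (M n).evalFrom (M n).start u :=
          evalFrom_mono _ (Set.singleton_subset_iff.2 hstart) u
            (g_run' n 0 u _ (by simp) _)
        have m2 := eval_trans _ m1 (single_step (M n) (s := qg n ⟨0, by omega⟩) (a := 2)
          (by rw [stepn_qg0, if_pos rfl]; exact rfl))
        have m3 := eval_trans _ m2 (loopA t)
        rwa [show (u ++ [2]) ++ t = u ++ 2 :: t by simp] at m3
      · by_cases htl : t.length ≤ n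
        · refine ⟨qh n ⟨n - t.length, by omega⟩, hqha _, ?_⟩
          have m1 : qS n ∈ (M n).evalFrom (M n).start u :=
            evalFrom_mono _ (Set.singleton_subset_iff.2 hqSs) u (loopS u)
          have m2 := eval_trans _ m1 (single_step (M n) (s := qS n) (a := 2)
            (t := qh n (Fin.last n))
            (by rw [stepn_qS, if_neg (by decide), if_pos rfl]; simp))
          have m3 := eval_trans _ m2 (h_run' n (n - t.length) t (Fin.last n)
            (by simp [Fin.val_last]; omega) (by omega))
          rwa [show (u ++ [2]) ++ t = u ++ 2 :: t by simp] at m3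
        · push_neg at hul htl
          obtain ⟨u1, α, u2, hu12, hu1l⟩ := split_at_len u (u.length - n - 1) (by omega)
          have hu2l : u2.length = n := by
            have := congrArg List.length hu12
            simp [hu1l] at this
            omega
          obtain ⟨t1, β, t2, ht12, ht1l⟩ := split_at_len t n (by omega)
          have hα : α ≠ 2 := fun e => hu (by rw [hu12, e]; simp)
          have hβ : β ≠ 2 := fun e => hct (by rw [ht12, e]; simp)
          by_cases hα1 : α = 1
          · refine ⟨qA n, hqAa, ?_⟩
            have m1 : qS n ∈ (M n).evalFrom (M n).start u1 :=
              evalFrom_mono _ (Set.singleton_subset_iff.2 hqSs) u1 (loopS u1)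
            have m2 := eval_trans _ m1 (single_step (M n) (s := qS n) (a := 1)
              (t := qg n (Fin.last n)) (by rw [stepn_qS, if_pos rfl]; simp))
            have m3 := eval_trans _ m2 (g_run' n 0 u2 (Fin.last n)
              (by simp [Fin.val_last]; omega) (by omega))
            have m4 := eval_trans _ m3 (single_step (M n) (s := qg n ⟨0, by omega⟩) (a := 2)
              (by rw [stepn_qg0, if_pos rfl]; exact rfl))
            have m5 := eval_trans _ m4 (loopA t)
            rwa [show (((u1 ++ [1]) ++ u2) ++ [2]) ++ t = (u1 ++ α :: u2) ++ 2 :: t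
              by rw [hα1]; simp, ← hu12] at m5
          · by_cases hβ1 : β = 1
            · refine ⟨qA n, hqAa, ?_⟩
              have m1 : qS n ∈ (M n).evalFrom (M n).start u :=
                evalFrom_mono _ (Set.singleton_subset_iff.2 hqSs) u (loopS u)
              have m2 := eval_trans _ m1 (single_step (M n) (s := qS n) (a := 2)
                (t := qh n (Fin.last n))
                (by rw [stepn_qS, if_neg (by decide), if_pos rfl]; simp))
              have m3 := eval_trans _ m2 (h_run' n 0 t1 (Fin.last n)
                (by simp [Fin.val_last]; omega) (by omega))
              have m4 := eval_trans _ m3 (single_step (M n) (s := qh n ⟨0, by omega⟩) (a := 1)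
                (by rw [stepn_qh0, if_pos rfl]; exact rfl))
              have m5 := eval_trans _ m4 (loopA t2)
              rwa [show (((u ++ [2]) ++ t1) ++ [1]) ++ t2 = u ++ 2 :: (t1 ++ β :: t2)
                by rw [hβ1]; simp, ← ht12] at m5
            · exfalso
              have htri : ∀ z : Fin 3, z = 0 ∨ z = 1 ∨ z = 2 := by decide
              have hα0 : α = 0 := by
                rcases htri α with h | h | h
                · exact h
                · exact absurd h hα1
                · exact absurd h hα
              have hβ0 : β = 0 := by
                rcases htri β with h | h | h
                · exact h
                · exact absurd h hβ1
                · exact absurd h hβ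
              have h2u1 : (2:Fin 3) ∉ u1 := fun hm => hu (by rw [hu12]; simp [hm])
              have h2u2 : (2:Fin 3) ∉ u2 := fun hm => hu (by rw [hu12]; simp [hm])
              have h2t1 : (2:Fin 3) ∉ t1 := fun hm => hct (by rw [ht12]; simp [hm])
              have h2t2 : (2:Fin 3) ∉ t2 := fun hm => hct (by rw [ht12]; simp [hm])
              exact hw (mem_gateL.2 ⟨u1, u2, t1, t2, h2u1, h2u2, hu2l, h2t1, ht1l, h2t2,
                by rw [hu12, ht12, hα0, hβ0]; simp⟩)

end GateNFA
/-- Section 4.2 of the paper: for every `n` there is an NFA over the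
three-letter alphabet `{a, b, c}` (modeled by `Fin 3` with `a = 0`, `b = 1`,
`c = 2`) with at most `2n + 7` states accepting the complement
`{a, b, c}* ∖ ({a, b}* · {a} · {a, b}ⁿ · {c} · {a, b}ⁿ · {a} · {a, b}*)`. -/
theorem exists_small_nfa_complement_gate_family (n : ℕ) :
    ∃ (σ : Type) (inst : Fintype σ) (M : NFA (Fin 3) σ),
      @Fintype.card σ inst ≤ 2 * n + 7 ∧
      M.accepts = (abStar * {[0]} * abLen n * {[2]} * abLen n * {[0]} * abStar)ᶜ := by
  refine ⟨GateNFA.St n, inferInstance, GateNFA.M n, ?_, ?_⟩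
  · have : Fintype.card (GateNFA.St n) = 4 + ((n + 1) + (n + 1)) := by simp
    omega
  · ext w
    constructor
    · intro h
      exact GateNFA.accepts_subset n w h
    · intro h
      exact GateNFA.mem_accepts_of_not_gate n w h
end

section
/- Fix n ∈ ℕ and let L = {a, b}* · {a} · {a, b}ⁿ · {c} · {a, b}ⁿ · {a} · {a, b}* over the three-letter alphabet {a, b, c}. Then every DFA whose language is {a, b, c}* ∖ L has at least 2^{n+1} states. -/
namespace GateFamilyAux

def word (n : ℕ) (g : Fin (n + 1) → Bool) : List (Fin 3) :=
  List.ofFn fun j => if g j then 0 else 1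

lemma word_length (n : ℕ) (g : Fin (n + 1) → Bool) : (word n g).length = n + 1 := by
  simp [word]

lemma word_no_two (n : ℕ) (g : Fin (n + 1) → Bool) : ∀ x ∈ word n g, x ≠ (2 : Fin 3) := by
  intro x hx
  simp only [word, List.mem_ofFn] at hx
  obtain ⟨j, hj⟩ := hx
  rcases hg : g j <;> simp [hg] at hj <;> simp [← hj]

lemma mem_L_of {n : ℕ} {p x y s : List (Fin 3)} (hp : p ∈ abStar) (hx : x ∈ abLen n)
    (hy : y ∈ abLen n) (hs : s ∈ abStar) :
    p ++ [0] ++ x ++ [2] ++ y ++ [0] ++ s ∈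
      abStar * {[0]} * abLen n * {[2]} * abLen n * {[0]} * abStar :=
  ⟨p ++ [0] ++ x ++ [2] ++ y ++ [0],
    ⟨p ++ [0] ++ x ++ [2] ++ y,
      ⟨p ++ [0] ++ x ++ [2],
        ⟨p ++ [0] ++ x, ⟨p ++ [0], ⟨p, hp, [0], rfl, rfl⟩, x, hx, rfl⟩, [2], rfl, rfl⟩,
        y, hy, rfl⟩,
      [0], rfl, rfl⟩,
    s, hs, rfl⟩

lemma mem_L_two {n : ℕ} {w : List (Fin 3)}
    (h : w ∈ abStar * {[0]} * abLen n * {[2]} * abLen n * {[0]} * abStar) :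
    (2 : Fin 3) ∈ w := by
  simp only [Language.mem_mul, Set.mem_singleton_iff] at h
  obtain ⟨_, ⟨_, ⟨_, ⟨_, ⟨_, ⟨p, hp, _, rfl, rfl⟩, x, hx, rfl⟩, _, rfl, rfl⟩, y, hy, rfl⟩,
    _, rfl, rfl⟩, s, hs, rfl⟩ := h
  simp

lemma indexOf_two {A B : List (Fin 3)} (h : ∀ x ∈ A, x ≠ (2:Fin 3)) :
    (A ++ 2 :: B).idxOf 2 = A.length := by
  induction A with
  | nil => simp
  | cons a A ih =>
    rw [List.cons_append, List.idxOf_cons_ne _ (fun hc : a = 2 => h a (by simp) hc),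
      ih (fun x hx => h x (by simp [hx]))]
    rfl

lemma evalFrom_subsingleton {σ : Type*} (M : NFA (Fin 3) σ)
    (hstep : ∀ q a, (M.step q a).Subsingleton) (S : Set σ) (hS : S.Subsingleton) :
    ∀ w, (M.evalFrom S w).Subsingleton := by
  intro w
  induction w generalizing S with
  | nil => exact hS
  | cons a w ih =>
    have : M.evalFrom S (a :: w) = M.evalFrom (M.stepSet S a) w := rfl
    rw [this]
    refine ih _ ?_
    intro x hx y hy
    rw [NFA.mem_stepSet] at hx hy
    obtain ⟨t, ht, hxt⟩ := hx
    obtain ⟨t', ht', hyt⟩ := hy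
    exact hstep t a hxt ((hS ht' ht) ▸ hyt)

lemma evalFrom_append {σ : Type*} (M : NFA (Fin 3) σ) (S : Set σ) (x y : List (Fin 3)) :
    M.evalFrom S (x ++ y) = M.evalFrom (M.evalFrom S x) y := by
  simp [NFA.evalFrom, List.foldl_append]

lemma key {n : ℕ} {σ : Type*} (M : NFA (Fin 3) σ)
    (hacc : M.accepts = (abStar * {[0]} * abLen n * {[2]} * abLen n * {[0]} * abStar)ᶜ)
    {g h : Fin (n + 1) → Bool} (i : Fin (n + 1)) (hg : g i = true) (hh : h i = false)
    (he : M.eval (word n g) = M.eval (word n h)) : False := by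
  have hin : (i : ℕ) ≤ n := Nat.lt_succ_iff.mp i.2
  set z : List (Fin 3) :=
    List.replicate (i : ℕ) 1 ++ 2 :: (List.replicate n 1 ++ [0]) with hz
  -- `word n g ++ z ∈ L`
  have hu : word n g ++ z ∈ abStar * {[0]} * abLen n * {[2]} * abLen n * {[0]} * abStar := by
    have hdrop : (word n g).drop (i : ℕ) = 0 :: (word n g).drop ((i : ℕ) + 1) := by
      rw [List.drop_eq_getElem_cons (by rw [word_length]; exact i.2)]
      congr 1
      simp only [word, List.getElem_ofFn, Fin.eta, hg, if_true]
    have hsplit : word n g = (word n g).take (i:ℕ) ++ 0 :: (word n g).drop ((i:ℕ)+1) := by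
      conv_lhs => rw [← List.take_append_drop (i:ℕ) (word n g), hdrop]
    have heq : word n g ++ z =
        (word n g).take (i:ℕ) ++ [0] ++ ((word n g).drop ((i:ℕ)+1) ++ List.replicate (i:ℕ) 1)
          ++ [2] ++ List.replicate n 1 ++ [0] ++ [] := by
      conv_lhs => rw [hsplit]
      simp [hz, List.append_assoc]
    rw [heq]
    refine mem_L_of ?_ ⟨?_, ?_⟩ ⟨by simp, ?_⟩ (by intro x hx; simp at hx)
    · intro x hx
      exact word_no_two n g x (List.mem_of_mem_take hx)
    · rw [List.length_append, List.length_drop, List.length_replicate, word_length]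
      omega
    · intro x hx
      rcases List.mem_append.mp hx with hx | hx
      · exact word_no_two n g x (List.mem_of_mem_drop hx)
      · rw [List.eq_of_mem_replicate hx]; decide
    · intro x hx
      rw [List.eq_of_mem_replicate hx]; decide
  -- `word n h ++ z ∉ L`
  have hv : word n h ++ z ∉ abStar * {[0]} * abLen n * {[2]} * abLen n * {[0]} * abStar := by
    intro hmem
    simp only [Language.mem_mul, Set.mem_singleton_iff] at hmem
    obtain ⟨_, ⟨_, ⟨_, ⟨_, ⟨_, ⟨p, hp, _, rfl, rfl⟩, x, hx, rfl⟩, _, rfl, rfl⟩, y, hy, rfl⟩,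
      _, rfl, rfl⟩, s, hs, heq⟩ := hmem
    -- locate the unique occurrence of 2
    have hA : ∀ t ∈ p ++ [0] ++ x, t ≠ (2:Fin 3) := by
      intro t ht
      rcases List.mem_append.mp ht with ht | ht
      · rcases List.mem_append.mp ht with ht | ht
        · exact hp t ht
        · simp at ht; rw [ht]; decide
      · exact hx.2 t ht
    have hA' : ∀ t ∈ word n h ++ List.replicate (i:ℕ) 1, t ≠ (2:Fin 3) := by
      intro t ht
      rcases List.mem_append.mp ht with ht | ht
      · exact word_no_two n h t ht
      · rw [List.eq_of_mem_replicate ht]; decide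
    have heq2 : (p ++ [0] ++ x) ++ 2 :: (y ++ [0] ++ s)
        = (word n h ++ List.replicate (i:ℕ) 1) ++ 2 :: (List.replicate n 1 ++ [0]) := by
      rw [hz] at heq
      simpa [List.append_assoc] using heq
    have hlen : (p ++ [0] ++ x).length = (word n h ++ List.replicate (i:ℕ) 1).length := by
      rw [← indexOf_two hA, ← indexOf_two hA', heq2]
    simp only [List.length_append, word_length, List.length_replicate, hx.1,
      List.length_singleton] at hlen
    have hplen : p.length = (i:ℕ) := by omega
    -- read letter at position i on both sides
    have hget : ((p ++ [0] ++ x) ++ 2 :: (y ++ [0] ++ s))[(i:ℕ)]? = some 0 := by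
      rw [List.append_assoc, List.append_assoc,
        List.getElem?_append_right hplen.le, hplen]
      simp
    have hget' : ((word n h ++ List.replicate (i:ℕ) 1) ++ 2 :: (List.replicate n 1 ++ [0]))[(i:ℕ)]?
        = some 1 := by
      rw [List.getElem?_append_left (by rw [List.length_append, word_length]; omega),
        List.getElem?_append_left (by rw [word_length]; omega)]
      rw [word, List.getElem?_eq_getElem (by simpa using i.2), List.getElem_ofFn]
      simp [hh]
    rw [heq2, hget'] at hget
    exact absurd (Option.some_injective _ hget) (by decide)
  -- transfer acceptance
  have hvacc : word n h ++ z ∈ M.accepts := by rw [hacc]; exact hv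
  obtain ⟨q, hq, hqe⟩ := hvacc
  have : q ∈ M.eval (word n g ++ z) := by
    unfold NFA.eval at *
    rw [evalFrom_append] at hqe ⊢
    rw [show M.evalFrom M.start (word n g) = M.evalFrom M.start (word n h) from he]
    exact hqe
  have huacc : word n g ++ z ∈ M.accepts := ⟨q, hq, this⟩
  rw [hacc] at huacc
  exact huacc hu

end GateFamilyAux

open GateFamilyAux in
/-- The exponential blow-up claim of Section 4.2: every DFA for the complement
of `L = {a, b}* · {a} · {a, b}ⁿ · {c} · {a, b}ⁿ · {a} · {a, b}*` (over the
three-letter alphabet `{a, b, c}`, modeled by `Fin 3` with `a = 0`, `b = 1`,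
`c = 2`) has at least `2^(n+1)` states. -/
theorem dfa_complement_gate_family_lower_bound (n : ℕ) :
    ∀ (σ : Type) [Fintype σ] (M : NFA (Fin 3) σ), IsPartialDFA M →
      M.accepts = (abStar * {[0]} * abLen n * {[2]} * abLen n * {[0]} * abStar)ᶜ →
      2 ^ (n + 1) ≤ Fintype.card σ := by
  intro σ _ M hdfa hacc
  obtain ⟨⟨q0, hq0⟩, hstep⟩ := hdfa
  have hsub : ∀ w, (M.eval w).Subsingleton := fun w =>
    evalFrom_subsingleton M hstep M.start (by rw [hq0]; exact Set.subsingleton_singleton) w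
  have hne : ∀ g : Fin (n + 1) → Bool, (M.eval (word n g)).Nonempty := by
    intro g
    have : word n g ∈ M.accepts := by
      rw [hacc]
      intro hmem
      exact word_no_two n g 2 (mem_L_two hmem) rfl
    obtain ⟨q, _, hq⟩ := this
    exact ⟨q, hq⟩
  let f : (Fin (n + 1) → Bool) → σ := fun g => (hne g).choose
  have heval : ∀ g, M.eval (word n g) = {f g} := fun g =>
    (hsub _).eq_singleton_of_mem (hne g).choose_spec
  have hinj : Function.Injective f := by
    intro g h hf
    by_contra hgh
    obtain ⟨i, hi⟩ := Function.ne_iff.mp hgh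
    have he : M.eval (word n g) = M.eval (word n h) := by
      rw [heval g, heval h, hf]
    rcases hgb : g i <;> rcases hhb : h i
    · exact hi (hgb.trans hhb.symm)
    · exact key M hacc i hhb hgb he.symm
    · exact key M hacc i hgb hhb he
    · exact hi (hgb.trans hhb.symm)
  calc 2 ^ (n + 1) = Fintype.card (Fin (n + 1) → Bool) := by simp
    _ ≤ Fintype.card σ := Fintype.card_le_of_injective f hinj
end

section
/- Let Σ be a finite alphabet and Γ ⊆ Σ a set of gate symbols. For every c ∈ Γ let U_c ⊆ (Σ ∖ Γ)* and V_c ⊆ Σ* be languages, and set L = ⋃_{c∈Γ} U_c · {c} · V_c. Then Σ* ∖ L = (Σ ∖ Γ)* ∪ ⋃_{c∈Γ} ( ((Σ ∖ Γ)* ∖ U_c) · {c} · Σ* ∪ (Σ ∖ Γ)* · {c} · (Σ* ∖ V_c) ). -/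
/-- The language of words over `α` containing no occurrence of any symbol of
`Γ`, i.e. `(Σ ∖ Γ)*`. -/
def noGateSym {α : Type*} (Γ : Set α) : Language α := {w | ∀ x ∈ w, x ∉ Γ}

private lemma gate_uniq {α : Type*} {Γ : Set α} :
    ∀ (u u' : List α) {c c' : α} {v v' : List α},
      (∀ x ∈ u, x ∉ Γ) → (∀ x ∈ u', x ∉ Γ) → c ∈ Γ → c' ∈ Γ →
      u ++ c :: v = u' ++ c' :: v' → u = u' ∧ c = c' ∧ v = v' := by
  intro u
  induction u with
  | nil =>
    intro u' c c' v v' hu hu' hc hc' heq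
    cases u' with
    | nil => simp_all
    | cons a t =>
      simp only [List.nil_append, List.cons_append, List.cons.injEq] at heq
      exact absurd hc (heq.1 ▸ hu' a (by simp))
  | cons a t ih =>
    intro u' c c' v v' hu hu' hc hc' heq
    cases u' with
    | nil =>
      simp only [List.nil_append, List.cons_append, List.cons.injEq] at heq
      exact absurd hc' (heq.1 ▸ hu a (by simp))
    | cons b t' =>
      simp only [List.cons_append, List.cons.injEq] at heq
      obtain ⟨rfl, heq⟩ := heq
      obtain ⟨h1, h2, h3⟩ := ih t' (fun x hx => hu x (by simp [hx]))
        (fun x hx => hu' x (by simp [hx])) hc hc' heq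
      exact ⟨by rw [h1], h2, h3⟩

private lemma gate_exists {α : Type*} {Γ : Set α} :
    ∀ (w : List α), (¬ ∀ x ∈ w, x ∉ Γ) →
      ∃ u c v, c ∈ Γ ∧ (∀ x ∈ u, x ∉ Γ) ∧ w = u ++ c :: v := by
  intro w
  induction w with
  | nil => simp
  | cons a t ih =>
    intro h
    by_cases ha : a ∈ Γ
    · exact ⟨[], a, t, ha, by simp, by simp⟩
    · have ht : ¬ ∀ x ∈ t, x ∉ Γ := by
        intro h'; exact h (by
          intro x hx
          rcases List.mem_cons.mp hx with rfl | hx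
          · exact ha
          · exact h' x hx)
      obtain ⟨u, c, v, hc, hu, rfl⟩ := ih ht
      exact ⟨a :: u, c, v, hc, by
        intro x hx
        rcases List.mem_cons.mp hx with rfl | hx
        · exact ha
        · exact hu x hx, by simp⟩

/-- Language-level correctness of generalized gate complementation for equal
gate NFAs (Theorem `gate-equal`): if for every gate symbol `c ∈ Γ` the front
language `U c` contains no gate symbols, then the complement of
`⋃_{c∈Γ} U_c · {c} · V_c` has the stated three-part shape. -/
theorem gate_equal_language_identity {α : Type*} [Fintype α] (Γ : Set α)
    (U V : α → Language α) (hU : ∀ c ∈ Γ, U c ≤ noGateSym Γ) :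
    (⨆ c ∈ Γ, U c * {[c]} * V c)ᶜ =
      noGateSym Γ ⊔
        ⨆ c ∈ Γ, ((noGateSym Γ \ U c) * {[c]} * ⊤ ⊔ noGateSym Γ * {[c]} * (V c)ᶜ) := by
  have hsup : ∀ (W : α → Language α) (w : List α),
      w ∈ (⨆ c ∈ Γ, W c) ↔ ∃ c ∈ Γ, w ∈ W c := by
    intro W w; simp [Language.mem_iSup]
  have hmul : ∀ (A B : Language α) (c : α) (w : List α),
      w ∈ A * {[c]} * B ↔ ∃ u ∈ A, ∃ v ∈ B, w = u ++ c :: v := by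
    intro A B c w
    constructor
    · rintro ⟨_, ⟨u, hu, e, rfl, rfl⟩, v, hv, rfl⟩
      exact ⟨u, hu, v, hv, by simp⟩
    · rintro ⟨u, hu, v, hv, rfl⟩
      exact ⟨u ++ [c], ⟨u, hu, [c], rfl, rfl⟩, v, hv, by simp⟩
  ext w
  constructor
  · intro hw
    by_cases hng : ∀ x ∈ w, x ∉ Γ
    · exact Or.inl hng
    · obtain ⟨u, c, v, hc, hu, rfl⟩ := gate_exists _ hng
      refine Or.inr ((hsup _ _).mpr ⟨c, hc, ?_⟩)
      by_cases huU : u ∈ U c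
      · refine Or.inr ((hmul _ _ _ _).mpr ⟨u, hu, v, ?_, rfl⟩)
        intro hv
        exact hw ((hsup _ _).mpr ⟨c, hc, (hmul _ _ _ _).mpr ⟨u, huU, v, hv, rfl⟩⟩)
      · exact Or.inl ((hmul _ _ _ _).mpr ⟨u, ⟨hu, huU⟩, v, trivial, rfl⟩)
  · intro h hw
    obtain ⟨c', hc', h'⟩ := (hsup _ _).mp hw
    obtain ⟨u', hu', v', hv', rfl⟩ := (hmul _ _ _ _).mp h'
    have hu'g : ∀ x ∈ u', x ∉ Γ := hU c' hc' hu'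
    rcases h with hng | h
    · exact hng c' (by simp) hc'
    · obtain ⟨c, hc, h⟩ := (hsup _ _).mp h
      rcases h with h | h
      · obtain ⟨u, ⟨hug, huU⟩, v, -, heq⟩ := (hmul _ _ _ _).mp h
        obtain ⟨rfl, rfl, rfl⟩ := gate_uniq u u' hug hu'g hc hc' heq.symm
        exact huU hu'
      · obtain ⟨u, hug, v, hvV, heq⟩ := (hmul _ _ _ _).mp h
        obtain ⟨rfl, rfl, rfl⟩ := gate_uniq u u' hug hu'g hc hc' heq.symm
        exact hvV hv'
end

section
/- Let Σ be a finite alphabet and Γ ⊆ Σ a set of gate symbols. For every c ∈ Γ let K_c be an index set and for every k ∈ K_c let U_{c,k} ⊆ (Σ ∖ Γ)* and V_{c,k} ⊆ Σ* be languages satisfying the disjointness condition: for all c ∈ Γ and k, k' ∈ K_c, if U_{c,k} ∩ U_{c,k'} ≠ ∅ then V_{c,k} = V_{c,k'}. Set L = ⋃_{c∈Γ} ⋃_{k∈K_c} U_{c,k} · {c} · V_{c,k}. Then Σ* ∖ L = (Σ ∖ Γ)* ∪ ⋃_{c∈Γ} ( ((Σ ∖ Γ)* ∖ ⋃_{k∈K_c}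 U_{c,k}) · {c} · Σ* ∪ ⋃_{k∈K_c} U_{c,k} · {c} · (Σ* ∖ V_{c,k}) ). -/
lemma decomp_unique {α : Type*} {Γ : Set α} {u u' v v' : List α} {c c' : α}
    (hu : ∀ x ∈ u, x ∉ Γ) (hu' : ∀ x ∈ u', x ∉ Γ) (hc : c ∈ Γ) (hc' : c' ∈ Γ)
    (h : u ++ c :: v = u' ++ c' :: v') : u = u' ∧ c = c' ∧ v = v' := by
  induction u generalizing u' with
  | nil =>
    cases u' with
    | nil => simpa using h
    | cons b t' =>
      simp only [List.nil_append, List.cons_append, List.cons.injEq] at h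
      exact absurd (h.1 ▸ hc) (hu' b (by simp))
  | cons a t ih =>
    cases u' with
    | nil =>
      simp only [List.nil_append, List.cons_append, List.cons.injEq] at h
      exact absurd (h.1 ▸ hc') (hu a (by simp))
    | cons b t' =>
      simp only [List.cons_append, List.cons.injEq] at h
      obtain ⟨rfl, h2⟩ := h
      obtain ⟨h1, h2, h3⟩ := ih (fun x hx => hu x (List.mem_cons_of_mem _ hx))
        (fun x hx => hu' x (List.mem_cons_of_mem _ hx)) h2
      exact ⟨by rw [h1], h2, h3⟩

lemma decomp_exists {α : Type*} {Γ : Set α} {w : List α} (h : ¬ ∀ x ∈ w, x ∉ Γ) :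
    ∃ u c v, (∀ x ∈ u, x ∉ Γ) ∧ c ∈ Γ ∧ w = u ++ c :: v := by
  induction w with
  | nil => simp at h
  | cons a t ih =>
    by_cases ha : a ∈ Γ
    · exact ⟨[], a, t, by simp, ha, rfl⟩
    · have ht : ¬ ∀ x ∈ t, x ∉ Γ := by
        intro ht
        apply h
        intro x hx
        rcases List.mem_cons.mp hx with rfl | hx
        · exact ha
        · exact ht x hx
      obtain ⟨u, c, v, h1, h2, h3⟩ := ih ht
      refine ⟨a :: u, c, v, ?_, h2, by simp [h3]⟩
      intro x hx
      rcases List.mem_cons.mp hx with rfl | hx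
      · exact ha
      · exact h1 x hx

lemma lang_mem_sup {α : Type*} (L M : Language α) (w : List α) :
    w ∈ L ⊔ M ↔ w ∈ L ∨ w ∈ M := Iff.rfl
lemma lang_mem_compl {α : Type*} (L : Language α) (w : List α) :
    w ∈ Lᶜ ↔ w ∉ L := Iff.rfl
lemma lang_mem_sdiff {α : Type*} (L M : Language α) (w : List α) :
    w ∈ L \ M ↔ w ∈ L ∧ w ∉ M := Iff.rfl
@[simp] lemma lang_mem_top {α : Type*} (w : List α) : w ∈ (⊤ : Language α) := trivial
lemma mem_noGateSym {α : Type*} {Γ : Set α} {w : List α} :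
    w ∈ noGateSym Γ ↔ ∀ x ∈ w, x ∉ Γ := Iff.rfl
lemma lang_mem_single {α : Type*} (c : α) (w : List α) :
    w ∈ ({[c]} : Language α) ↔ w = [c] := Iff.rfl


/-- Language-level correctness of generalized gate complementation for
disjoint gate NFAs (Theorem `gate-disjoint`): `K c` indexes the `c`-gates,
`U c k` is the front language of the `k`-th `c`-gate and `V c k` the rear
language from its target; under the disjointness condition the complement of
`⋃_{c∈Γ} ⋃_{k∈K_c} U_{c,k} · {c} · V_{c,k}` has the stated shape. -/
theorem gate_disjoint_language_identity {α : Type*} [Fintype α] (Γ : Set α)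
    (K : α → Type*) (U V : ∀ c : α, K c → Language α)
    (hU : ∀ c ∈ Γ, ∀ k, U c k ≤ noGateSym Γ)
    (hdisj : ∀ c ∈ Γ, ∀ k k' : K c, (U c k ⊓ U c k' ≠ ⊥) → V c k = V c k') :
    (⨆ c ∈ Γ, ⨆ k : K c, U c k * {[c]} * V c k)ᶜ =
      noGateSym Γ ⊔
        ⨆ c ∈ Γ, ((noGateSym Γ \ ⨆ k : K c, U c k) * {[c]} * ⊤ ⊔
          ⨆ k : K c, U c k * {[c]} * (V c k)ᶜ) := by
  ext w
  simp only [lang_mem_compl, lang_mem_sup, lang_mem_sdiff, Language.mem_iSup,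
    Language.mem_mul, lang_mem_single, lang_mem_top, mem_noGateSym, exists_eq_left,
    true_and, and_true]
  constructor
  · intro hL
    by_cases hw : ∀ x ∈ w, x ∉ Γ
    · exact Or.inl hw
    · right
      obtain ⟨u, c, v, hu, hc, rfl⟩ := decomp_exists hw
      refine ⟨c, hc, ?_⟩
      by_cases hk : ∃ k, u ∈ U c k
      · obtain ⟨k, huk⟩ := hk
        refine Or.inr ⟨k, u ++ [c], ⟨u, huk, rfl⟩, v, ?_, by simp⟩
        intro hv
        exact hL ⟨c, hc, k, u ++ [c], ⟨u, huk, rfl⟩, v, hv, by simp⟩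
      · exact Or.inl ⟨u ++ [c], ⟨u, ⟨hu, hk⟩, rfl⟩, v, by simp⟩
  · rintro (hw | ⟨c, hc, hrest⟩) ⟨c', hc', k', a, ⟨u', hu', rfl⟩, v', hv', rfl⟩
    · exact hw c' (by simp) hc'
    · rcases hrest with ⟨a, ⟨u, ⟨huf, hnk⟩, rfl⟩, b, hb⟩ | ⟨k, a, ⟨u, hu, rfl⟩, v, hv, hw⟩
      · obtain ⟨rfl, rfl, rfl⟩ := decomp_unique huf (hU c' hc' k' hu') hc hc'
          (by simpa [List.append_assoc] using hb)
        exact hnk ⟨k', hu'⟩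
      · obtain ⟨heq, rfl, rfl⟩ := decomp_unique (hU c hc k hu) (hU c' hc' k' hu') hc hc'
          (by simpa [List.append_assoc] using hw)
        subst heq
        have hne : U c k ⊓ U c k' ≠ ⊥ := by
          intro h
          have hmem : u ∈ U c k ⊓ U c k' := ⟨hu, hu'⟩
          rw [h] at hmem
          exact hmem
        exact hv ((hdisj c hc k k' hne) ▸ hv')
end

section
/- Let Σ be a finite alphabet, c ∈ Σ, A₁' = (Q₁', Σ, δ₁', {q₀'}, F₁') a complete DFA and C₂ = (Q̂₂, Σ, δ̂₂, Î₂, F̂₂) an NFA, and let C be the NFA of the basic sequential complementation construction built from A₁' and C₂ (states Q₁' × 2^{Q̂₂}, initial state (q₀', ∅), accepting states Q₁' × 2^{F̂₂}, transitions (p, R) →a (q, S) with q = δ₁'(p, a) and S the image of a choice of δ̂₂-a-successors of R, augmented by one state of Î₂ whenever p ∈ F₁' and a = c). If for every p ∈ F₁' no state of F₁' is reachable in A₁' from the state δ₁'(p, c) (including δ₁'(p, c) itself), then every state (q, R) of C reachable from the initial state satisfies |R| ≤ 1. -/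
theorem seqCompl_inv {α σ₁ σ₂ : Type*}
    (c : α) (A₁ : DFA α σ₁) (C₂ : NFA α σ₂)
    (hcond : ∀ p ∈ A₁.accept, ∀ w : List α, A₁.evalFrom (A₁.step p c) w ∉ A₁.accept) :
    ∀ w : List α, ∀ pr : σ₁ × Set σ₂, pr ∈ (seqCompl c A₁ C₂).eval w →
      pr.2.Subsingleton ∧ (pr.2.Nonempty → ∀ v, A₁.evalFrom pr.1 v ∉ A₁.accept) := by
  intro w
  induction w using List.reverseRecOn with
  | nil =>
    intro pr hpr
    simp only [NFA.eval_nil] at hpr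
    have : pr = (A₁.start, ∅) := hpr
    subst this
    exact ⟨Set.subsingleton_empty, fun h => absurd h Set.not_nonempty_empty⟩
  | append_singleton w a ih =>
    intro pr hpr
    rw [NFA.eval_append_singleton, NFA.mem_stepSet] at hpr
    obtain ⟨q, hq, hstep⟩ := hpr
    obtain ⟨hsub, hne⟩ := ih q hq
    obtain ⟨h1, h2⟩ := hstep
    rcases h2 with ⟨-, f, -, hR⟩ | ⟨hacc, hac, f, -, s₀, -, hR⟩
    · constructor
      · rw [hR]; exact hsub.image f
      · intro hn v
        rw [hR, Set.image_nonempty] at hn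
        have := hne hn (a :: v)
        rwa [h1]
    · have hRempty : q.2 = ∅ := by
        by_contra h
        exact hne (Set.nonempty_iff_ne_empty.mpr h) [] hacc
      rw [hRempty] at hR
      simp only [Set.image_empty, Set.empty_union] at hR
      constructor
      · rw [hR]; exact Set.subsingleton_singleton
      · intro _ v
        rw [h1, hac]
        exact hcond q.1 hacc v

/-- Sufficient condition of Appendix D (single-transfer-transition setting):
if for every accepting state `p` of the complete DFA `A₁` no accepting state
of `A₁` is reachable from `δ₁'(p, c)` (including `δ₁'(p, c)` itself), then
every reachable state `(q, R)` of the sequential complement satisfies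
`|R| ≤ 1`. -/
theorem seqCompl_reachable_subsingleton {α σ₁ σ₂ : Type*}
    [Fintype α] [Fintype σ₁] [Fintype σ₂]
    (c : α) (A₁ : DFA α σ₁) (C₂ : NFA α σ₂)
    (hcond : ∀ p ∈ A₁.accept, ∀ w : List α, A₁.evalFrom (A₁.step p c) w ∉ A₁.accept) :
    ∀ pr : σ₁ × Set σ₂,
      (∃ w : List α, pr ∈ (seqCompl c A₁ C₂).eval w) → pr.2.Subsingleton := by
  rintro pr ⟨w, hw⟩
  exact (seqCompl_inv c A₁ C₂ hcond w pr hw).1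
end

section
/- Let A = (Q, Σ, δ, I, F) be an NFA whose state set is partitioned as Q = Q₁ ⊎ Q₂ such that δ contains no transition from Q₂ to Q₁. Assume the front component A₁ = (Q₁, Σ, δ ∩ (Q₁ × Σ × Q₁), I ∩ Q₁, F ∩ Q₁) is a complete DFA with initial state q₀ (so I ∩ Q₁ = {q₀} and each state of Q₁ has exactly one a-successor inside Q₁ for each a ∈ Σ). Suppose we are given a finite set Q̂₂, a transition relation δ̂₂ ⊆ Q̂₂ × Σ × Q̂₂, a set F̂₂ ⊆ Q̂₂, a set Î₀ ⊆ Q̂₂, and for each p ∈ Q₂ a set Î_p ⊆ Q̂₂, such that the NFA (Q̂₂, Σ, δ̂₂, Î₀, F̂₂) accepts Σ* ∖ L((Q₂, Σ, δ ∩ (Q₂ × Σ × Q₂), I ∩ Q₂, F ∩ Q₂)) and, for every p ∈ Q₂, the NFA (Q̂₂, Σ, δ̂₂, Î_p, F̂₂) accepts Σ* ∖ L((Q₂, Σ, δ ∩ (Q₂ × Σ × Q₂), {p}, F ∩ Q₂)). Define the NFA C with states Q₁ × 2^{Q̂₂}; initial states {(q₀, ∅)} if I ∩ Q₂ = ∅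 and {(q₀, {r}) : r ∈ Î₀} otherwise; accepting states {(q, R) : q ∉ F and R ⊆ F̂₂}; and transitions (q, R) →a (q', R') exactly when q' is the unique a-successor of q inside Q₁, and R' = f(R) ∪ T where f : R → Q̂₂ is any function with f(r) ∈ δ̂₂(r, a) for every r ∈ R, and T contains exactly one element t_p ∈ Î_p for each p ∈ Q₂ with (q, a, p) ∈ δ (and nothing else). Then L(C) = Σ* ∖ L(A). -/
/-- The rear component of an NFA `A` whose states are partitioned as
`σ₁ ⊕ σ₂`: the restriction of `A` to the rear states `σ₂`, with the given set
`S` of initial states. -/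
def rearComponent {α σ₁ σ₂ : Type*} (A : NFA α (σ₁ ⊕ σ₂)) (S : Set σ₂) :
    NFA α σ₂ where
  step := fun p a => {r | Sum.inr r ∈ A.step (Sum.inr p) a}
  start := S
  accept := {p | Sum.inr p ∈ A.accept}

/-- The set of rear states entered from front state `q` by reading `a`
(targets of transfer transitions). -/
def transferTargets {α σ₁ σ₂ : Type*} (A : NFA α (σ₁ ⊕ σ₂)) (q : σ₁) (a : α) :
    Set σ₂ := {p | Sum.inr p ∈ A.step (Sum.inl q) a}

/-- The generalized sequential complementation construction (Appendix B,
single slice): `d` is the transition function of the front component (a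
complete DFA with initial state `q₀`), `δ̂₂`, `F̂₂` are the transitions and
accepting states of the complement automaton of the rear component, `Î₀` its
initial states for the complement of the rear component started from the rear
initial states of `A`, and `Î p` its initial states for the complement of the
rear component started from the entry port `p`. -/
def genSeqCompl {α σ₁ σ₂ τ : Type*} (A : NFA α (σ₁ ⊕ σ₂))
    (q₀ : σ₁) (d : σ₁ → α → σ₁)
    (δ₂ : τ → α → Set τ) (F₂ : Set τ) (I₀ : Set τ) (I : σ₂ → Set τ) :
    NFA α (σ₁ × Set τ) where
  step := fun pr a =>
    { qs | qs.1 = d pr.1 a ∧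
        ∃ f : τ → τ, (∀ r ∈ pr.2, f r ∈ δ₂ r a) ∧
          ∃ t : σ₂ → τ, (∀ p ∈ transferTargets A pr.1 a, t p ∈ I p) ∧
            qs.2 = f '' pr.2 ∪ t '' transferTargets A pr.1 a }
  start :=
    { pr | ({p : σ₂ | Sum.inr p ∈ A.start} = ∅ ∧ pr = (q₀, ∅)) ∨
        ({p : σ₂ | Sum.inr p ∈ A.start} ≠ ∅ ∧ ∃ r ∈ I₀, pr = (q₀, {r})) }
  accept := {pr | Sum.inl pr.1 ∉ A.accept ∧ pr.2 ⊆ F₂}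

/-! ### Auxiliary lemmas about `NFA.evalFrom` -/

namespace NFA
variable {α σ : Type*} (M : NFA α σ)

@[simp] theorem evalFrom_empty'_s19 (w : List α) : M.evalFrom ∅ w = ∅ := by
  induction w with
  | nil => rfl
  | cons a w ih => rw [evalFrom_cons, stepSet_empty, ih]

theorem mem_evalFrom_iff (S : Set σ) (w : List α) (x : σ) :
    x ∈ M.evalFrom S w ↔ ∃ s ∈ S, x ∈ M.evalFrom {s} w := by
  induction w generalizing S with
  | nil => simp
  | cons a w ih =>
    rw [evalFrom_cons, ih]
    constructor
    · rintro ⟨y, hy, hx⟩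
      rw [mem_stepSet] at hy
      obtain ⟨s, hs, hy⟩ := hy
      refine ⟨s, hs, ?_⟩
      rw [evalFrom_cons, ih]
      exact ⟨y, by simpa [stepSet] using hy, hx⟩
    · rintro ⟨s, hs, hx⟩
      rw [evalFrom_cons, ih] at hx
      obtain ⟨y, hy, hx⟩ := hx
      exact ⟨y, mem_stepSet .. |>.2 ⟨s, hs, by simpa [stepSet] using hy⟩, hx⟩

theorem evalFrom_mono {S T : Set σ} (h : S ⊆ T) (w : List α) :
    M.evalFrom S w ⊆ M.evalFrom T w := by
  intro x hx
  rw [mem_evalFrom_iff] at hx ⊢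
  obtain ⟨s, hs, hx⟩ := hx
  exact ⟨s, h hs, hx⟩

end NFA

section Main
variable {α σ₁ σ₂ : Type*} (A : NFA α (σ₁ ⊕ σ₂)) (d : σ₁ → α → σ₁)

/-- The set of rear states reachable via some split of `w` through a transfer. -/
def splitsSet (q₁ : σ₁) (w : List α) : Set σ₂ :=
  {r | ∃ u a v, w = u ++ a :: v ∧ ∃ p ∈ transferTargets A (List.foldl d q₁ u) a,
      r ∈ (rearComponent A ∅).evalFrom {p} v}

theorem splitsSet_nil (q₁ : σ₁) : splitsSet A d q₁ [] = ∅ := by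
  ext r; simp only [splitsSet, Set.mem_setOf_eq, Set.mem_empty_iff_false, iff_false]
  rintro ⟨u, a, v, h, -⟩
  exact absurd h (by simp)

theorem splitsSet_cons (q₁ : σ₁) (a : α) (v : List α) :
    splitsSet A d q₁ (a :: v) =
      (rearComponent A ∅).evalFrom (transferTargets A q₁ a) v ∪
        splitsSet A d (d q₁ a) v := by
  ext r
  simp only [splitsSet, Set.mem_setOf_eq, Set.mem_union]
  constructor
  · rintro ⟨u, b, v', h, p, hp, hr⟩
    rcases u with _ | ⟨c, u'⟩
    · simp only [List.nil_append, List.cons.injEq] at h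
      obtain ⟨rfl, rfl⟩ := h
      exact Or.inl (((rearComponent A ∅).mem_evalFrom_iff _ _ _).2 ⟨p, hp, hr⟩)
    · simp only [List.cons_append, List.cons.injEq] at h
      obtain ⟨rfl, rfl⟩ := h
      exact Or.inr ⟨u', b, v', rfl, p, hp, hr⟩
  · rintro (hr | ⟨u, b, v', rfl, p, hp, hr⟩)
    · rw [(rearComponent A ∅).mem_evalFrom_iff] at hr
      obtain ⟨p, hp, hr⟩ := hr
      exact ⟨[], a, v, rfl, p, hp, hr⟩
    · exact ⟨a :: u, b, v', rfl, p, hp, hr⟩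

variable (hNoBack : ∀ (p : σ₂) (a : α) (q : σ₁), Sum.inl q ∉ A.step (Sum.inr p) a)
  (hd : ∀ (q : σ₁) (a : α) (r : σ₁), Sum.inl r ∈ A.step (Sum.inl q) a ↔ r = d q a)

include hNoBack hd in
theorem A_stepSet (q₁ : σ₁) (S₂ : Set σ₂) (a : α) :
    A.stepSet ({Sum.inl q₁} ∪ Sum.inr '' S₂) a
      = {Sum.inl (d q₁ a)} ∪
        Sum.inr '' ((rearComponent A ∅).stepSet S₂ a ∪ transferTargets A q₁ a) := by
  ext x
  rw [NFA.mem_stepSet]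
  cases x with
  | inl q =>
    simp only [Set.mem_union, Set.mem_singleton_iff, Set.mem_image, Sum.inl.injEq,
      and_false, exists_false, or_false, reduceCtorEq, false_and, exists_and_right]
    constructor
    · rintro ⟨s, hs, hq⟩
      rcases hs with rfl | ⟨p, hp, rfl⟩
      · exact (hd q₁ a q).1 hq
      · exact absurd hq (hNoBack p a q)
    · rintro hq
      exact ⟨Sum.inl q₁, Or.inl rfl, by rw [hd]; exact hq⟩
  | inr r =>
    simp only [Set.mem_union, Set.mem_singleton_iff, Set.mem_image, reduceCtorEq,
      Sum.inr.injEq, false_or, NFA.mem_stepSet]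
    constructor
    · rintro ⟨s, hs, hr⟩
      rcases hs with rfl | ⟨p, hp, rfl⟩
      · exact ⟨r, Or.inr hr, rfl⟩
      · exact ⟨r, Or.inl ⟨p, hp, hr⟩, rfl⟩
    · rintro ⟨r', hr', rfl⟩
      rcases hr' with ⟨p, hp, hr⟩ | hr
      · exact ⟨Sum.inr p, Or.inr ⟨p, hp, rfl⟩, hr⟩
      · exact ⟨Sum.inl q₁, Or.inl rfl, hr⟩

include hNoBack hd in
theorem A_evalFrom (w : List α) : ∀ (q₁ : σ₁) (S₂ : Set σ₂),
    A.evalFrom ({Sum.inl q₁} ∪ Sum.inr '' S₂) w =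
      {Sum.inl (List.foldl d q₁ w)} ∪
        Sum.inr '' ((rearComponent A ∅).evalFrom S₂ w ∪ splitsSet A d q₁ w) := by
  induction w with
  | nil => intro q₁ S₂; rw [splitsSet_nil]; simp
  | cons a v ih =>
    intro q₁ S₂
    rw [NFA.evalFrom_cons, A_stepSet A d hNoBack hd, ih, splitsSet_cons]
    rw [NFA.evalFrom_cons]
    rw [(rearComponent A ∅).evalFrom_union]
    congr 1
    rw [Set.union_assoc]

include hNoBack hd in
theorem A_accepts_iff (q₀ : σ₁) (hq₀ : ∀ q : σ₁, Sum.inl q ∈ A.start ↔ q = q₀)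
    (w : List α) :
    w ∈ A.accepts ↔
      Sum.inl (List.foldl d q₀ w) ∈ A.accept ∨
        ∃ r, Sum.inr r ∈ A.accept ∧
          (r ∈ (rearComponent A ∅).evalFrom {p | Sum.inr p ∈ A.start} w ∨
           r ∈ splitsSet A d q₀ w) := by
  have hstart : A.start = {Sum.inl q₀} ∪ Sum.inr '' {p | Sum.inr p ∈ A.start} := by
    ext x
    cases x with
    | inl q => simp [hq₀]
    | inr p => simp
  have heval : A.evalFrom A.start w =
      {Sum.inl (List.foldl d q₀ w)} ∪
        Sum.inr '' ((rearComponent A ∅).evalFrom {p | Sum.inr p ∈ A.start} w ∪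
          splitsSet A d q₀ w) := by
    conv_lhs => rw [hstart]
    rw [A_evalFrom A d hNoBack hd]
  rw [NFA.mem_accepts, heval]
  constructor
  · rintro ⟨s, hs, hmem⟩
    rcases hmem with hmem | ⟨r, hr, rfl⟩
    · rw [Set.mem_singleton_iff] at hmem; subst hmem; exact Or.inl hs
    · exact Or.inr ⟨r, hs, hr⟩
  · rintro (h | ⟨r, hacc, hr⟩)
    · exact ⟨_, h, Or.inl rfl⟩
    · exact ⟨Sum.inr r, hacc, Or.inr ⟨r, hr, rfl⟩⟩

theorem rear_accepts_iff (S : Set σ₂) (w : List α) :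
    w ∈ (rearComponent A S).accepts ↔
      ∃ r, Sum.inr r ∈ A.accept ∧ r ∈ (rearComponent A ∅).evalFrom S w :=
  Iff.rfl

section C
variable {τ : Type*} (δ₂ : τ → α → Set τ) (F₂ : Set τ) (I₀ : Set τ)
  (I : σ₂ → Set τ) (q₀ : σ₁)

theorem mkNFA_accepts_iff (J : Set τ) (w : List α) :
    w ∈ (NFA.mk δ₂ J F₂).accepts ↔
      ∃ r, r ∈ F₂ ∧ r ∈ (NFA.mk δ₂ ∅ F₂).evalFrom J w :=
  Iff.rfl

theorem lemA (w : List α) : ∀ (q₁ : σ₁) (R₁ : Set τ) (q : σ₁) (R : Set τ),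
    (q, R) ∈ (genSeqCompl A q₀ d δ₂ F₂ I₀ I).evalFrom {(q₁, R₁)} w →
    q = List.foldl d q₁ w ∧
    (∀ r₁ ∈ R₁, ∃ r ∈ R, r ∈ (NFA.mk δ₂ ∅ F₂).evalFrom {r₁} w) ∧
    (∀ u a v, w = u ++ a :: v → ∀ p ∈ transferTargets A (List.foldl d q₁ u) a,
        ∃ r ∈ R, ∃ t ∈ I p, r ∈ (NFA.mk δ₂ ∅ F₂).evalFrom {t} v) := by
  induction w with
  | nil =>
    intro q₁ R₁ q R h
    simp only [NFA.evalFrom_nil, Set.mem_singleton_iff, Prod.mk.injEq] at h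
    obtain ⟨rfl, rfl⟩ := h
    refine ⟨rfl, fun r₁ h => ⟨r₁, h, by simp⟩, ?_⟩
    rintro u a v h
    exact absurd h (by simp)
  | cons a v ih =>
    intro q₁ R₁ q R h
    rw [NFA.evalFrom_cons, NFA.stepSet_singleton, NFA.mem_evalFrom_iff] at h
    obtain ⟨⟨q₂, R₂⟩, hstep, h⟩ := h
    simp only [genSeqCompl, Set.mem_setOf_eq] at hstep
    obtain ⟨hq₂, f, hf, t, ht, hR₂⟩ := hstep
    subst hq₂; subst hR₂
    obtain ⟨h1, h2, h3⟩ := ih (d q₁ a) _ q R h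
    refine ⟨h1, ?_, ?_⟩
    · intro r₁ hr₁
      obtain ⟨r, hr, hrun⟩ := h2 (f r₁) (Set.mem_union_left _ ⟨r₁, hr₁, rfl⟩)
      refine ⟨r, hr, ?_⟩
      rw [NFA.evalFrom_cons, NFA.stepSet_singleton, NFA.mem_evalFrom_iff]
      exact ⟨f r₁, hf r₁ hr₁, hrun⟩
    · rintro u b v' hsplit p hp
      rcases u with _ | ⟨c, u'⟩
      · simp only [List.nil_append, List.cons.injEq] at hsplit
        obtain ⟨rfl, rfl⟩ := hsplit
        simp only [List.foldl_nil] at hp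
        obtain ⟨r, hr, hrun⟩ := h2 (t p) (Set.mem_union_right _ ⟨p, hp, rfl⟩)
        exact ⟨r, hr, t p, ht p hp, hrun⟩
      · simp only [List.cons_append, List.cons.injEq] at hsplit
        obtain ⟨rfl, rfl⟩ := hsplit
        exact h3 u' b v' rfl p hp

theorem lemB [Nonempty τ] (w : List α) : ∀ (q : σ₁) (R : Set τ),
    (∀ r ∈ R, ∃ rf ∈ F₂, rf ∈ (NFA.mk δ₂ ∅ F₂).evalFrom {r} w) →
    (∀ u a v, w = u ++ a :: v → ∀ p ∈ transferTargets A (List.foldl d q u) a,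
        ∃ i ∈ I p, ∃ rf ∈ F₂, rf ∈ (NFA.mk δ₂ ∅ F₂).evalFrom {i} v) →
    ∃ R', R' ⊆ F₂ ∧
      (List.foldl d q w, R') ∈ (genSeqCompl A q₀ d δ₂ F₂ I₀ I).evalFrom {(q, R)} w := by
  induction w with
  | nil =>
    intro q R hR _
    refine ⟨R, fun r hr => ?_, by simp⟩
    obtain ⟨rf, hrf, hrun⟩ := hR r hr
    simp only [NFA.evalFrom_nil, Set.mem_singleton_iff] at hrun
    rwa [hrun] at hrf
  | cons a v ih =>
    intro q R hR hT
    set N : NFA α τ := NFA.mk δ₂ ∅ F₂ with hN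
    have key : ∀ r ∈ R, ∃ s, s ∈ δ₂ r a ∧ ∃ rf ∈ F₂, rf ∈ N.evalFrom {s} v := by
      intro r hr
      obtain ⟨rf, hrf, hrun⟩ := hR r hr
      rw [NFA.evalFrom_cons, NFA.stepSet_singleton, NFA.mem_evalFrom_iff] at hrun
      obtain ⟨s, hs, hrun⟩ := hrun
      exact ⟨s, hs, rf, hrf, hrun⟩
    classical
    let f : τ → τ := fun r =>
      if h : ∃ s, s ∈ δ₂ r a ∧ ∃ rf ∈ F₂, rf ∈ N.evalFrom {s} v then h.choose
      else Classical.arbitrary τ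
    have hf : ∀ r ∈ R, f r ∈ δ₂ r a ∧ ∃ rf ∈ F₂, rf ∈ N.evalFrom {f r} v := by
      intro r hr
      have h := key r hr
      simp only [f, dif_pos h]
      exact h.choose_spec
    have keyT : ∀ p ∈ transferTargets A q a,
        ∃ i, i ∈ I p ∧ ∃ rf ∈ F₂, rf ∈ N.evalFrom {i} v := by
      intro p hp
      have := hT [] a v rfl p (by simpa using hp)
      simpa using this
    let t : σ₂ → τ := fun p =>
      if h : ∃ i, i ∈ I p ∧ ∃ rf ∈ F₂, rf ∈ N.evalFrom {i} v then h.choose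
      else Classical.arbitrary τ
    have htp : ∀ p ∈ transferTargets A q a,
        t p ∈ I p ∧ ∃ rf ∈ F₂, rf ∈ N.evalFrom {t p} v := by
      intro p hp
      have h := keyT p hp
      simp only [t, dif_pos h]
      exact h.choose_spec
    set R₁ : Set τ := f '' R ∪ t '' transferTargets A q a with hR₁
    have hR₁good : ∀ r ∈ R₁, ∃ rf ∈ F₂, rf ∈ N.evalFrom {r} v := by
      rintro r (⟨r₀, hr₀, rfl⟩ | ⟨p, hp, rfl⟩)
      · exact (hf r₀ hr₀).2
      · exact (htp p hp).2
    have hT₁ : ∀ u b v', v = u ++ b :: v' →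
        ∀ p ∈ transferTargets A (List.foldl d (d q a) u) b,
        ∃ i ∈ I p, ∃ rf ∈ F₂, rf ∈ N.evalFrom {i} v' := by
      intro u b v' hsplit p hp
      exact hT (a :: u) b v' (by rw [hsplit]; rfl) p hp
    obtain ⟨R', hR'F, hR'mem⟩ := ih (d q a) R₁ hR₁good hT₁
    refine ⟨R', hR'F, ?_⟩
    rw [NFA.evalFrom_cons, NFA.stepSet_singleton]
    refine (genSeqCompl A q₀ d δ₂ F₂ I₀ I).evalFrom_mono ?_ v hR'mem
    rw [Set.singleton_subset_iff]
    exact ⟨rfl, f, fun r hr => (hf r hr).1, t, fun p hp => (htp p hp).1, rfl⟩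

end C
end Main

/-- Generalized sequential complementation theorem of Appendix B, for a single
slice.  The NFA `A` over states `Q₁ ⊎ Q₂` has no transitions from `Q₂` to
`Q₁`; its front component is a complete DFA with initial state `q₀` and
transition function `d`; the automaton `(τ, δ₂, I₀, F₂)` accepts the
complement of the rear component started from its own initial states, and
`(τ, δ₂, I p, F₂)` the complement of the rear component started from each
entry port `p`.  Then the constructed NFA `C` accepts `Σ* ∖ L(A)`. -/
theorem genSeqCompl_accepts {α σ₁ σ₂ τ : Type*}
    [Fintype α] [Fintype σ₁] [Fintype σ₂] [Fintype τ]
    (A : NFA α (σ₁ ⊕ σ₂))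
    (hNoBack : ∀ (p : σ₂) (a : α) (q : σ₁), Sum.inl q ∉ A.step (Sum.inr p) a)
    (q₀ : σ₁) (hq₀ : ∀ q : σ₁, Sum.inl q ∈ A.start ↔ q = q₀)
    (d : σ₁ → α → σ₁)
    (hd : ∀ (q : σ₁) (a : α) (r : σ₁), Sum.inl r ∈ A.step (Sum.inl q) a ↔ r = d q a)
    (δ₂ : τ → α → Set τ) (F₂ : Set τ) (I₀ : Set τ) (I : σ₂ → Set τ)
    (hI₀ : (NFA.mk δ₂ I₀ F₂).accepts =
      (rearComponent A {p | Sum.inr p ∈ A.start}).acceptsᶜ)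
    (hI : ∀ p : σ₂, (NFA.mk δ₂ (I p) F₂).accepts = (rearComponent A {p}).acceptsᶜ) :
    (genSeqCompl A q₀ d δ₂ F₂ I₀ I).accepts = A.acceptsᶜ := by
  classical
  ext w
  change _ ↔ w ∉ A.accepts
  constructor
  · intro h
    rw [NFA.mem_accepts] at h
    obtain ⟨⟨q, R⟩, ⟨hnacc, hRF⟩, hev⟩ := h
    rw [NFA.mem_evalFrom_iff] at hev
    obtain ⟨s, hstart, hev⟩ := hev
    rw [A_accepts_iff A d hNoBack hd q₀ hq₀]
    rintro (hacc | ⟨r, hracc, hr | hsplit⟩)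
    · rcases hstart with ⟨hI₂e, rfl⟩ | ⟨hI₂ne, r₀, hr₀, rfl⟩ <;>
      · obtain ⟨hq, h2, h3⟩ := lemA A d δ₂ F₂ I₀ I q₀ w q₀ _ q R hev
        exact hnacc (hq ▸ hacc)
    · rcases hstart with ⟨hI₂e, rfl⟩ | ⟨hI₂ne, r₀, hr₀, rfl⟩
      · rw [hI₂e, NFA.evalFrom_empty'_s19] at hr
        exact hr
      · obtain ⟨hq, h2, h3⟩ := lemA A d δ₂ F₂ I₀ I q₀ w q₀ _ q R hev
        obtain ⟨rr, hrr, hrun⟩ := h2 r₀ rfl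
        have hw : w ∈ (NFA.mk δ₂ I₀ F₂).accepts := by
          rw [mkNFA_accepts_iff]
          exact ⟨rr, hRF hrr, ((NFA.mk δ₂ ∅ F₂).mem_evalFrom_iff I₀ w rr).2
            ⟨r₀, hr₀, hrun⟩⟩
        rw [hI₀] at hw
        change w ∉ (rearComponent A {p | Sum.inr p ∈ A.start}).accepts at hw
        exact hw ((rear_accepts_iff A _ w).2 ⟨r, hracc, hr⟩)
    · obtain ⟨u, a, v, rfl, p, hp, hr⟩ := hsplit
      rcases hstart with ⟨hI₂e, rfl⟩ | ⟨hI₂ne, r₀, hr₀, rfl⟩ <;>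
      · obtain ⟨hq, h2, h3⟩ := lemA A d δ₂ F₂ I₀ I q₀ _ q₀ _ q R hev
        obtain ⟨rr, hrr, t, htI, hrun⟩ := h3 u a v rfl p hp
        have hv : v ∈ (NFA.mk δ₂ (I p) F₂).accepts := by
          rw [mkNFA_accepts_iff]
          exact ⟨rr, hRF hrr, ((NFA.mk δ₂ ∅ F₂).mem_evalFrom_iff (I p) v rr).2
            ⟨t, htI, hrun⟩⟩
        rw [hI p] at hv
        change v ∉ (rearComponent A {p}).accepts at hv
        exact hv ((rear_accepts_iff A _ v).2 ⟨r, hracc, hr⟩)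
  · intro h
    rw [A_accepts_iff A d hNoBack hd q₀ hq₀] at h
    push_neg at h
    obtain ⟨hfront, hrear⟩ := h
    have hnr : w ∉ (rearComponent A {p | Sum.inr p ∈ A.start}).accepts := by
      intro hc
      rw [rear_accepts_iff] at hc
      obtain ⟨r, hracc, hr⟩ := hc
      exact (hrear r hracc).1 hr
    have hw0 : w ∈ (NFA.mk δ₂ I₀ F₂).accepts := by
      rw [hI₀]; exact hnr
    rw [mkNFA_accepts_iff] at hw0
    obtain ⟨rf, hrf, hrfev⟩ := hw0
    haveI : Nonempty τ := ⟨rf⟩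
    have hT : ∀ u a v, w = u ++ a :: v →
        ∀ p ∈ transferTargets A (List.foldl d q₀ u) a,
        ∃ i ∈ I p, ∃ rf' ∈ F₂, rf' ∈ (NFA.mk δ₂ ∅ F₂).evalFrom {i} v := by
      intro u a v hsplit p hp
      have hnv : v ∉ (rearComponent A {p}).accepts := by
        intro hc
        rw [rear_accepts_iff] at hc
        obtain ⟨r, hracc, hr⟩ := hc
        exact (hrear r hracc).2 ⟨u, a, v, hsplit, p, hp, hr⟩
      have hv : v ∈ (NFA.mk δ₂ (I p) F₂).accepts := by
        rw [hI p]; exact hnv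
      rw [mkNFA_accepts_iff] at hv
      obtain ⟨r, hrF, hrev⟩ := hv
      rw [NFA.mem_evalFrom_iff] at hrev
      obtain ⟨i, hi, hrev⟩ := hrev
      exact ⟨i, hi, r, hrF, hrev⟩
    rw [NFA.mem_accepts]
    by_cases hIe : {p : σ₂ | Sum.inr p ∈ A.start} = ∅
    · obtain ⟨R', hR'F, hmem⟩ :=
        lemB A d δ₂ F₂ I₀ I q₀ w q₀ ∅ (by simp) hT
      refine ⟨(List.foldl d q₀ w, R'), ⟨hfront, hR'F⟩, ?_⟩
      rw [NFA.mem_evalFrom_iff]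
      exact ⟨(q₀, ∅), Or.inl ⟨hIe, rfl⟩, hmem⟩
    · rw [NFA.mem_evalFrom_iff] at hrfev
      obtain ⟨r₀, hr₀, hrun⟩ := hrfev
      obtain ⟨R', hR'F, hmem⟩ :=
        lemB A d δ₂ F₂ I₀ I q₀ w q₀ {r₀}
          (by rintro r rfl; exact ⟨rf, hrf, hrun⟩) hT
      refine ⟨(List.foldl d q₀ w, R'), ⟨hfront, hR'F⟩, ?_⟩
      rw [NFA.mem_evalFrom_iff]
      exact ⟨(q₀, {r₀}), Or.inr ⟨hIe, r₀, hr₀, rfl⟩, hmem⟩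
end
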